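/- arXiv:2105.11369 — 6 statements merged into one kernel-verified Lean document; each statement's English description precedes it below -/
import Mathlib

section
/- Let 0 < r ≤ 1/4. Suppose Λ(x₊) and Λ(y) are positive definite, s := −g(y), and ‖x₊ − y‖_{x₊} ≤ r²/(1 − 2r). Then: (i) ‖x₊ − H(x₊)⁻¹·s‖_{x₊} < r/(r + 1); and (ii) for every s₊ ∈ ℝ^U with ‖x₊ − H(x₊)⁻¹·s₊‖_{x₊} ≤ r/(r + 1) and every y₊ ∈ ℝ^U with Λ(y₊) positive definite and −g(y₊) = s₊, one has ‖x₊ − y₊‖_{x₊} ≤ r. -/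
open Matrix

/-- The gradient of the barrier `f(x) = -log det Λ(x)`:
`g(x)_i = -tr(Λ(x)⁻¹ · Λ(e_i))` (with the total matrix inverse, `0` for singular matrices). -/
noncomputable def grad {U L : ℕ} (Lam : (Fin U → ℝ) →ₗ[ℝ] Matrix (Fin L) (Fin L) ℝ)
    (x : Fin U → ℝ) : Fin U → ℝ :=
  fun i => -((Lam x)⁻¹ * Lam (Pi.single i 1)).trace

/-- The Hessian of the barrier: `H(x)_{ij} = tr(Λ(x)⁻¹ Λ(e_i) Λ(x)⁻¹ Λ(e_j))`. -/
noncomputable def hess {U L : ℕ} (Lam : (Fin U → ℝ) →ₗ[ℝ] Matrix (Fin L) (Fin L) ℝ)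
    (x : Fin U → ℝ) : Matrix (Fin U) (Fin U) ℝ :=
  Matrix.of fun i j =>
    ((Lam x)⁻¹ * Lam (Pi.single i 1) * (Lam x)⁻¹ * Lam (Pi.single j 1)).trace

/-- The local norm `‖v‖_x = (vᵀ H(x) v)^{1/2}`. -/
noncomputable def locNorm {U L : ℕ} (Lam : (Fin U → ℝ) →ₗ[ℝ] Matrix (Fin L) (Fin L) ℝ)
    (x v : Fin U → ℝ) : ℝ :=
  Real.sqrt (v ⬝ᵥ (hess Lam x).mulVec v)

/-- The dual local norm `‖t‖*_x = (tᵀ H(x)⁻¹ t)^{1/2}`. -/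
noncomputable def dualNorm {U L : ℕ} (Lam : (Fin U → ℝ) →ₗ[ℝ] Matrix (Fin L) (Fin L) ℝ)
    (x t : Fin U → ℝ) : ℝ :=
  Real.sqrt (t ⬝ᵥ (hess Lam x)⁻¹.mulVec t)

lemma trace_eq_double_sum {L : ℕ} (X Y : Matrix (Fin L) (Fin L) ℝ) :
    (X * Y).trace = ∑ i, ∑ j, X i j * Y j i := by
  simp [Matrix.trace, Matrix.diag, Matrix.mul_apply]

lemma trace_sq {L : ℕ} (X : Matrix (Fin L) (Fin L) ℝ) (hX : Xᵀ = X) :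
    (X * X).trace = ∑ i, ∑ j, (X i j)^2 := by
  rw [trace_eq_double_sum]
  refine Finset.sum_congr rfl fun i _ => Finset.sum_congr rfl fun j _ => ?_
  have : X j i = X i j := by rw [← Matrix.transpose_apply X i j, hX]
  rw [this]; ring

lemma trace_CS {L : ℕ} (X Y : Matrix (Fin L) (Fin L) ℝ) (hX : Xᵀ = X) (hY : Yᵀ = Y) :
    ((X * Y).trace)^2 ≤ (X * X).trace * (Y * Y).trace := by
  rw [trace_eq_double_sum, trace_sq X hX, trace_sq Y hY]
  have h1 : ∑ i, ∑ j, X i j * Y j i = ∑ p : Fin L × Fin L, X p.1 p.2 * Y p.1 p.2 := by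
    rw [Fintype.sum_prod_type]
    refine Finset.sum_congr rfl fun i _ => Finset.sum_congr rfl fun j _ => ?_
    have : Y j i = Y i j := by rw [← Matrix.transpose_apply Y i j, hY]
    rw [this]
  have h2 : ∑ i, ∑ j, (X i j)^2 = ∑ p : Fin L × Fin L, (X p.1 p.2)^2 := by
    rw [Fintype.sum_prod_type]
  have h3 : ∑ i, ∑ j, (Y i j)^2 = ∑ p : Fin L × Fin L, (Y p.1 p.2)^2 := by
    rw [Fintype.sum_prod_type]
  rw [h1, h2, h3]
  exact Finset.sum_mul_sq_le_sq_mul_sq _ _ _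

lemma dot_mulVec_symm {n : Type*} [Fintype n] (S : Matrix n n ℝ) (hS : Sᵀ = S) (x u : n → ℝ) :
    x ⬝ᵥ (S *ᵥ u) = (S *ᵥ x) ⬝ᵥ u := by
  simp only [dotProduct, Matrix.mulVec, dotProduct, Finset.mul_sum, Finset.sum_mul]
  rw [Finset.sum_comm]
  refine Finset.sum_congr rfl fun j _ => Finset.sum_congr rfl fun i _ => ?_
  have : S j i = S i j := by rw [← Matrix.transpose_apply S j i, hS]
  rw [this]; ring


lemma spectral_calc {L : ℕ} {E : Matrix (Fin L) (Fin L) ℝ} (hE : E.IsHermitian) :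
    ∃ (d : Fin L → ℝ) (c : (Fin L → ℝ) → Matrix (Fin L) (Fin L) ℝ),
      c d = E ∧ (∀ f, (c f).trace = ∑ k, f k) ∧
      (∀ f g, c f * c g = c (fun k => f k * g k)) ∧
      (c (fun _ => 1) = 1) ∧
      (∀ f g, c f - c g = c (fun k => f k - g k)) ∧
      (E.PosDef → ∀ k, 0 < d k) := by
  classical
  set U : Matrix (Fin L) (Fin L) ℝ := (hE.eigenvectorUnitary : Matrix (Fin L) (Fin L) ℝ) with hU
  have h1 : star U * U = 1 := Unitary.coe_star_mul_self hE.eigenvectorUnitary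
  have h2 : U * star U = 1 := Unitary.coe_mul_star_self hE.eigenvectorUnitary
  refine ⟨hE.eigenvalues, fun f => U * diagonal f * star U, ?_, ?_, ?_, ?_, ?_, ?_⟩
  · have h3 := hE.spectral_theorem
    simp only [RCLike.ofReal_real_eq_id, Function.id_comp] at h3
    exact h3.symm
  · intro f
    rw [trace_mul_cycle, h1, one_mul, trace_diagonal]
  · intro f g
    calc U * diagonal f * star U * (U * diagonal g * star U)
        = U * (diagonal f * ((star U * U) * diagonal g)) * star U := by noncomm_ring
      _ = U * diagonal (fun k => f k * g k) * star U := by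
          rw [h1, one_mul, diagonal_mul_diagonal]
  · show U * diagonal (fun _ => (1:ℝ)) * star U = 1
    have hd : diagonal (fun _ : Fin L => (1:ℝ)) = 1 := diagonal_one
    rw [hd, mul_one, h2]
  · intro f g
    show U * diagonal f * star U - U * diagonal g * star U = U * diagonal (fun k => f k - g k) * star U
    rw [show diagonal (fun k => f k - g k) = diagonal f - diagonal g from (diagonal_sub f g).symm]
    noncomm_ring
  · intro hpd k
    exact hpd.eigenvalues_pos k

section PerZ
variable {U L : ℕ} (Lam : (Fin U → ℝ) →ₗ[ℝ] Matrix (Fin L) (Fin L) ℝ)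

set_option maxHeartbeats 2000000 in
lemma per_z (hinj : Function.Injective Lam) (hsym : ∀ v, (Lam v).IsSymm)
    (xp z : Fin U → ℝ) (hxp : (Lam xp).PosDef) (hz : (Lam z).PosDef) :
    ∃ dlt tau : ℝ, 0 ≤ dlt ∧ 0 ≤ tau ∧
      locNorm Lam xp (xp - z) = dlt ∧
      locNorm Lam xp (xp - (hess Lam xp)⁻¹.mulVec (-grad Lam z)) = tau ∧
      (dlt < 1 → tau ≤ dlt / (1 - dlt)) ∧
      dlt ≤ tau * (1 + dlt) := by
  classical
  set A := Lam xp with hAdef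
  set Z := Lam z with hZdef
  -- square root of A
  open scoped MatrixOrder in
  set R := CFC.sqrt A with hRdef
  have hRR : R * R = A := by
    open scoped MatrixOrder in
    exact CFC.sqrt_mul_sqrt_self A hxp.posSemidef.nonneg
  have hRsym : Rᵀ = R := by
    open scoped MatrixOrder in
    have : Rᵀ = R := (CFC.sqrt_nonneg A).posSemidef.1
    simpa [Matrix.IsHermitian, Matrix.conjTranspose] using this
  have hAdet : IsUnit A.det := (ne_of_gt hxp.det_pos).isUnit
  have hRdet : IsUnit R.det := by
    have : R.det * R.det = A.det := by rw [← Matrix.det_mul, hRR]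
    have hne : R.det ≠ 0 := by
      intro h0
      rw [h0, mul_zero] at this
      exact (ne_of_gt hxp.det_pos) this.symm
    exact hne.isUnit
  set Q := R⁻¹ with hQdef
  have hQR : Q * R = 1 := Matrix.nonsing_inv_mul R hRdet
  have hRQ : R * Q = 1 := Matrix.mul_nonsing_inv R hRdet
  have hQsym : Qᵀ = Q := by rw [hQdef, Matrix.transpose_nonsing_inv, hRsym]
  have hQA : Q * Q = A⁻¹ := by rw [← hRR, Matrix.mul_inv_rev]
  -- the normalized matrices
  set M : (Fin U → ℝ) → Matrix (Fin L) (Fin L) ℝ := fun v => Q * Lam v * Q with hMdef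
  have hMsym : ∀ v, (M v)ᵀ = M v := by
    intro v
    have hv : (Lam v)ᵀ = Lam v := hsym v
    simp only [hMdef, Matrix.transpose_mul, hQsym, hv]
    noncomm_ring
  have htr : ∀ X Y : Matrix (Fin L) (Fin L) ℝ,
      (A⁻¹ * X * A⁻¹ * Y).trace = ((Q * X * Q) * (Q * Y * Q)).trace := by
    intro X Y
    rw [← hQA]
    have e1 : Q * Q * X * (Q * Q) * Y = Q * (Q * X * Q * Q * Y) := by noncomm_ring
    have e2 : Q * X * Q * Q * Y * Q = Q * X * Q * (Q * Y * Q) := by noncomm_ring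
    rw [e1, Matrix.trace_mul_comm, e2]
  have hMsum : ∀ v : Fin U → ℝ, M v = ∑ i, v i • M (Pi.single i 1) := by
    intro v
    have hv : Lam v = ∑ i, v i • Lam (Pi.single i 1) := by
      have h1 : v = ∑ i, Pi.single i (v i) := (Finset.univ_sum_single v).symm
      have h2 : ∀ i, Pi.single i (v i) = v i • (Pi.single i 1 : Fin U → ℝ) := by
        intro i
        ext j
        by_cases h : j = i <;> simp [Pi.single_apply, h]
      calc Lam v = Lam (∑ i, v i • (Pi.single i 1 : Fin U → ℝ)) := by
            conv_lhs => rw [h1]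
            congr 1
            exact Finset.sum_congr rfl fun i _ => h2 i
        _ = ∑ i, v i • Lam (Pi.single i 1) := by
            rw [map_sum]
            exact Finset.sum_congr rfl fun i _ => Lam.map_smul _ _
    simp only [hMdef, hv, Finset.mul_sum, Finset.sum_mul, Matrix.mul_smul, Matrix.smul_mul]
  have hquad : ∀ v w : Fin U → ℝ,
      v ⬝ᵥ (hess Lam xp).mulVec w = (M v * M w).trace := by
    intro v w
    have hrhs : (M v * M w).trace
        = ∑ i, ∑ j, v i * (w j * (M (Pi.single i 1) * M (Pi.single j 1)).trace) := by
      rw [hMsum v, hMsum w, Finset.sum_mul_sum]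
      rw [Matrix.trace_sum]
      refine Finset.sum_congr rfl fun i _ => ?_
      rw [Matrix.trace_sum]
      refine Finset.sum_congr rfl fun j _ => ?_
      rw [Matrix.smul_mul, Matrix.mul_smul, Matrix.trace_smul, Matrix.trace_smul]
      simp [smul_smul, mul_assoc]
    rw [hrhs]
    simp only [dotProduct, Matrix.mulVec, hess, Matrix.of_apply, Finset.mul_sum]
    refine Finset.sum_congr rfl fun i _ => Finset.sum_congr rfl fun j _ => ?_
    rw [htr]
    ring
  -- Hessian is positive definite
  set H := hess Lam xp with hHdef
  have hHsymm : Hᵀ = H := by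
    ext i j
    show H j i = H i j
    simp only [hHdef, hess, Matrix.of_apply]
    rw [htr, htr, Matrix.trace_mul_comm]
  have hHpd : H.PosDef := by
    rw [Matrix.posDef_iff_dotProduct_mulVec]
    constructor
    · show Hᴴ = H
      rw [show Hᴴ = Hᵀ from rfl, hHsymm]
    · intro x hx
      have hst : star x = x := by simp
      rw [hst]
      show 0 < x ⬝ᵥ H *ᵥ x
      rw [hquad x x, trace_sq (M x) (hMsym x)]
      have hMx : M x ≠ 0 := by
        intro h0
        apply hx
        have hLx : Lam x = R * M x * R := by
          simp only [hMdef]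
          calc Lam x = 1 * Lam x * 1 := by noncomm_ring
            _ = (R * Q) * Lam x * (Q * R) := by rw [hRQ, hQR]
            _ = R * (Q * Lam x * Q) * R := by noncomm_ring
        have hz0 : Lam x = 0 := by rw [hLx, h0]; noncomm_ring
        have h00 : Lam x = Lam 0 := by rw [hz0, map_zero]
        exact hinj h00
      obtain ⟨i, j, hij⟩ : ∃ i j, M x i j ≠ 0 := by
        by_contra hc
        push_neg at hc
        exact hMx (by ext i j; exact hc i j)
      have hterm : 0 < (M x i j)^2 := by positivity
      have hpos : 0 < ∑ j', (M x i j')^2 :=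
        Finset.sum_pos' (fun _ _ => sq_nonneg _) ⟨j, Finset.mem_univ j, hterm⟩
      exact Finset.sum_pos' (fun i' _ => Finset.sum_nonneg fun j' _ => sq_nonneg _)
        ⟨i, Finset.mem_univ i, hpos⟩
  have hHdet : IsUnit H.det := (ne_of_gt hHpd.det_pos).isUnit
  -- the E matrix and its spectral calculus
  set E := Q * Z * Q with hEdef
  have hEsym : Eᵀ = E := by
    have hZsym : Zᵀ = Z := hsym z
    simp only [hEdef, Matrix.transpose_mul, hQsym, hZsym]
    noncomm_ring
  have hEherm : E.IsHermitian := by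
    show Eᴴ = E
    rw [show Eᴴ = Eᵀ from rfl, hEsym]
  have hQinj : ∀ x : Fin L → ℝ, Q *ᵥ x = 0 → x = 0 := by
    intro x h0
    have h1 : x = (R * Q) *ᵥ x := by rw [hRQ, Matrix.one_mulVec]
    rw [h1, ← Matrix.mulVec_mulVec, h0, Matrix.mulVec_zero]
  have hEpd : E.PosDef := by
    refine Matrix.posDef_iff_dotProduct_mulVec.mpr ⟨hEherm, fun x hx => ?_⟩
    have hst : star x = x := by simp
    rw [hst]
    show 0 < x ⬝ᵥ (Q * Z * Q) *ᵥ x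
    have h1 : (Q * Z * Q) *ᵥ x = Q *ᵥ (Z *ᵥ (Q *ᵥ x)) := by
      rw [Matrix.mulVec_mulVec, Matrix.mulVec_mulVec]
    rw [h1, dot_mulVec_symm Q hQsym]
    have hQx : Q *ᵥ x ≠ 0 := fun h0 => hx (hQinj x h0)
    have h2 := hz.dotProduct_mulVec_pos hQx
    simpa using h2
  obtain ⟨d, c, hcd, hct, hcm, hc1, hcs, hdpos'⟩ := spectral_calc hEherm
  have hdpos : ∀ k, 0 < d k := hdpos' hEpd
  have hEinv : E⁻¹ = c (fun k => (d k)⁻¹) := by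
    apply Matrix.inv_eq_right_inv
    rw [← hcd, hcm]
    rw [show (fun k => d k * (d k)⁻¹) = fun _ => (1:ℝ) from
      funext fun k => mul_inv_cancel₀ (hdpos k).ne']
    exact hc1
  have hQinvR : Q⁻¹ = R := Matrix.nonsing_inv_nonsing_inv R hRdet
  have hEinv2 : E⁻¹ = R * Z⁻¹ * R := by
    rw [hEdef, Matrix.mul_inv_rev, Matrix.mul_inv_rev, hQinvR, ← mul_assoc]
  have hZiQ : Q * E⁻¹ * Q = Z⁻¹ := by
    rw [hEinv2]
    calc Q * (R * Z⁻¹ * R) * Q = (Q * R) * Z⁻¹ * (R * Q) := by noncomm_ring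
      _ = Z⁻¹ := by rw [hQR, hRQ, one_mul, mul_one]
  have hMxp : M xp = 1 := by
    show Q * Lam xp * Q = 1
    calc Q * Lam xp * Q = Q * (R * R) * Q := by
          rw [show Lam xp = R * R from hRR.symm]
      _ = (Q * R) * (R * Q) := by noncomm_ring
      _ = 1 := by rw [hQR, hRQ, one_mul]
  have hMz : M z = E := rfl
  have hMsub : M (xp - z) = 1 - E := by
    have e1 : M (xp - z) = M xp - M z := by
      show Q * Lam (xp - z) * Q = Q * Lam xp * Q - Q * Lam z * Q
      rw [map_sub]
      noncomm_ring
    rw [e1, hMxp, hMz]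
  -- alpha and dlt
  set α := ∑ k, (1 - d k) * (1 - d k) with hα
  have hones : (1 : Matrix (Fin L) (Fin L) ℝ) - E = c (fun k => 1 - d k) := by
    rw [← hc1, ← hcd, hcs]
  have htrα : ((1 - E) * (1 - E)).trace = α := by rw [hones, hcm, hct]
  have hdlt : locNorm Lam xp (xp - z) = Real.sqrt α := by
    unfold locNorm
    rw [hquad, hMsub, htrα]
  set dlt := Real.sqrt α with hdltdef
  have hαnn : 0 ≤ α := Finset.sum_nonneg fun k _ => mul_self_nonneg _
  have hdlt2 : dlt * dlt = α := Real.mul_self_sqrt hαnn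
  have hdltnn : 0 ≤ dlt := Real.sqrt_nonneg _
  have hterm : ∀ k, (1 - d k) * (1 - d k) ≤ α := fun k =>
    Finset.single_le_sum (fun k _ => mul_self_nonneg (1 - d k)) (Finset.mem_univ k)
  -- the dual vector t
  set T := (1 : Matrix (Fin L) (Fin L) ℝ) - E⁻¹ with hTdef
  have hTc : T = c (fun k => 1 - (d k)⁻¹) := by rw [hTdef, hEinv, ← hc1, hcs]
  have hTsym : Tᵀ = T := by
    rw [hTdef, Matrix.transpose_sub, Matrix.transpose_one, Matrix.transpose_nonsing_inv, hEsym]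
  have htr1 : ∀ X : Matrix (Fin L) (Fin L) ℝ, (A⁻¹ * X).trace = (Q * X * Q).trace := by
    intro X
    rw [← hQA]
    calc (Q * Q * X).trace = (Q * (Q * X)).trace := by rw [mul_assoc]
      _ = ((Q * X) * Q).trace := Matrix.trace_mul_comm _ _
  set t : Fin U → ℝ := fun i =>
    (A⁻¹ * Lam (Pi.single i 1)).trace - (Z⁻¹ * Lam (Pi.single i 1)).trace with htdef
  have ht : ∀ i, t i = (T * M (Pi.single i 1)).trace := by
    intro i
    have h2 : (Z⁻¹ * Lam (Pi.single i 1)).trace = (E⁻¹ * M (Pi.single i 1)).trace := by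
      rw [show Z⁻¹ = Q * E⁻¹ * Q from hZiQ.symm]
      calc (Q * E⁻¹ * Q * Lam (Pi.single i 1)).trace
          = (Q * (E⁻¹ * Q * Lam (Pi.single i 1))).trace := by rw [mul_assoc, mul_assoc, mul_assoc]
        _ = ((E⁻¹ * Q * Lam (Pi.single i 1)) * Q).trace := Matrix.trace_mul_comm _ _
        _ = (E⁻¹ * M (Pi.single i 1)).trace := by
            rw [show E⁻¹ * Q * Lam (Pi.single i 1) * Q = E⁻¹ * (Q * Lam (Pi.single i 1) * Q) from
              by noncomm_ring]
    show (A⁻¹ * Lam (Pi.single i 1)).trace - (Z⁻¹ * Lam (Pi.single i 1)).trace = _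
    rw [htr1, h2, hTdef, Matrix.sub_mul, Matrix.trace_sub, one_mul]
  have hdot : ∀ v : Fin U → ℝ, t ⬝ᵥ v = (T * M v).trace := by
    intro v
    rw [hMsum v, Finset.mul_sum, Matrix.trace_sum]
    simp only [Matrix.mul_smul, Matrix.trace_smul, smul_eq_mul]
    show ∑ i, t i * v i = _
    refine Finset.sum_congr rfl fun i _ => ?_
    rw [ht i]
    ring
  -- the w vector and tau
  set w := xp - (hess Lam xp)⁻¹.mulVec (-grad Lam z) with hwdef
  have hgz : (-grad Lam z) = fun i => (Z⁻¹ * Lam (Pi.single i 1)).trace := by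
    funext i
    simp [grad]
    rfl
  have hHxp : (hess Lam xp) *ᵥ xp = fun i => (A⁻¹ * Lam (Pi.single i 1)).trace := by
    funext i
    have h1 : ((hess Lam xp) *ᵥ xp) i = Pi.single i 1 ⬝ᵥ ((hess Lam xp) *ᵥ xp) := by
      rw [single_dotProduct, one_mul]
    rw [h1, hquad, hMxp, mul_one]
    have h3 : (M (Pi.single i 1)).trace = (Q * Lam (Pi.single i 1) * Q).trace := rfl
    rw [h3, ← htr1]
  have hteq : t = (hess Lam xp) *ᵥ xp - (-grad Lam z) := by
    funext i
    rw [hHxp, hgz]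
    rfl
  have hwt : w = (hess Lam xp)⁻¹ *ᵥ t := by
    rw [hwdef, hteq, Matrix.mulVec_sub, Matrix.mulVec_mulVec,
      Matrix.nonsing_inv_mul _ hHdet, Matrix.one_mulVec]
  set q := t ⬝ᵥ ((hess Lam xp)⁻¹ *ᵥ t) with hqdef
  have ht2 : (hess Lam xp) *ᵥ w = t := by
    rw [hwt, Matrix.mulVec_mulVec, Matrix.mul_nonsing_inv _ hHdet, Matrix.one_mulVec]
  have hquadw : w ⬝ᵥ (hess Lam xp) *ᵥ w = q := by
    rw [ht2, hqdef, hwt]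
    exact dotProduct_comm _ _
  have htau : locNorm Lam xp w = Real.sqrt q := by
    unfold locNorm
    rw [hquadw]
  set tau := Real.sqrt q with htaudef
  have hqnn : 0 ≤ q := by
    rw [← hquadw, hquad, trace_sq _ (hMsym w)]
    exact Finset.sum_nonneg fun i _ => Finset.sum_nonneg fun j _ => sq_nonneg _
  have htau2 : tau * tau = q := Real.mul_self_sqrt hqnn
  have htaunn : 0 ≤ tau := Real.sqrt_nonneg _
  -- upper bound on q via beta
  set β := ∑ k, (1 - (d k)⁻¹) * (1 - (d k)⁻¹) with hβ
  have hβnn : 0 ≤ β := Finset.sum_nonneg fun k _ => mul_self_nonneg _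
  have hTT : (T * T).trace = β := by rw [hTc, hcm, hct]
  have hq_le : q ≤ β := by
    have h1 : q = (T * M w).trace := by
      rw [hqdef, ← hwt, hdot]
    have h2 : (M w * M w).trace = q := by rw [← hquad, hquadw]
    have hcs2 := trace_CS T (M w) hTsym (hMsym w)
    rw [hTT, h2, ← h1] at hcs2
    nlinarith [hcs2, hqnn, hβnn]
  -- part (i) bound
  have hupper : dlt < 1 → tau ≤ dlt / (1 - dlt) := by
    intro hlt
    have h1d : 0 < 1 - dlt := by linarith
    have hdk : ∀ k, 1 - dlt ≤ d k := by
      intro k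
      nlinarith [hterm k, hdlt2, hdltnn]
    have hsum : β ≤ α / ((1 - dlt) * (1 - dlt)) := by
      rw [hβ, hα, Finset.sum_div]
      refine Finset.sum_le_sum fun k _ => ?_
      have hdk' := hdk k
      have hdkpos : 0 < d k := lt_of_lt_of_le h1d hdk'
      rw [show (1:ℝ) - (d k)⁻¹ = (d k - 1) / d k from by field_simp, div_mul_div_comm]
      refine div_le_div₀ (mul_self_nonneg (1 - d k)) (le_of_eq (by ring))
        (by positivity) ?_
      exact mul_le_mul hdk' hdk' h1d.le hdkpos.le
    have h2 : q ≤ (dlt / (1 - dlt)) * (dlt / (1 - dlt)) := by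
      rw [div_mul_div_comm]
      calc q ≤ β := hq_le
        _ ≤ α / ((1 - dlt) * (1 - dlt)) := hsum
        _ = dlt * dlt / ((1 - dlt) * (1 - dlt)) := by rw [hdlt2]
    have hnn : 0 ≤ dlt / (1 - dlt) := div_nonneg hdltnn h1d.le
    calc tau = Real.sqrt q := htaudef
      _ ≤ Real.sqrt ((dlt / (1 - dlt)) * (dlt / (1 - dlt))) := Real.sqrt_le_sqrt h2
      _ = dlt / (1 - dlt) := Real.sqrt_mul_self hnn
  -- part (ii) bound
  have hγ : t ⬝ᵥ (xp - z) = ∑ k, (1 - (d k)⁻¹) * (1 - d k) := by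
    rw [hdot, hMsub, hTc, hones, hcm, hct]
  have hlow : dlt ≤ tau * (1 + dlt) := by
    set γ := ∑ k, (1 - (d k)⁻¹) * (1 - d k) with hγdef
    have hdk2 : ∀ k, d k ≤ 1 + dlt := by
      intro k
      nlinarith [hterm k, hdlt2, hdltnn]
    have hexp : ∀ k, -((1 - (d k)⁻¹) * (1 - d k)) = (1 - d k) * (1 - d k) / d k := by
      intro k
      have := (hdpos k).ne'
      field_simp
      ring
    have hγnp : γ ≤ 0 := by
      refine Finset.sum_nonpos fun k _ => ?_
      have h1 := hexp k
      have h2 : 0 ≤ (1 - d k) * (1 - d k) / d k :=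
        div_nonneg (mul_self_nonneg _) (hdpos k).le
      linarith
    have hαγ : α ≤ (-γ) * (1 + dlt) := by
      rw [hγdef, ← Finset.sum_neg_distrib, Finset.sum_mul, hα]
      refine Finset.sum_le_sum fun k _ => ?_
      rw [hexp k, div_mul_eq_mul_div, le_div_iff₀ (hdpos k)]
      nlinarith [mul_self_nonneg (1 - d k), hdk2 k, hdpos k]
    have hcs3 : (t ⬝ᵥ (xp - z))^2 ≤ q * α := by
      have h2 : t ⬝ᵥ (xp - z) = (M w * M (xp - z)).trace := by
        rw [← ht2, ← dot_mulVec_symm _ hHsymm, hquad]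
      have h3 : (M w * M w).trace = q := by rw [← hquad, hquadw]
      have h4 : (M (xp - z) * M (xp - z)).trace = α := by rw [hMsub, htrα]
      have h5 := trace_CS (M w) (M (xp - z)) (hMsym w) (hMsym _)
      rw [h3, h4, ← h2] at h5
      exact h5
    rw [hγ] at hcs3
    have hcs4 : γ ^ 2 ≤ (tau * dlt) ^ 2 := by
      calc γ ^ 2 ≤ q * α := hcs3
        _ = (tau * dlt) ^ 2 := by rw [← htau2, ← hdlt2]; ring
    have hmg : -γ ≤ tau * dlt := by
      nlinarith [hcs4, hγnp, mul_nonneg htaunn hdltnn]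
    rcases eq_or_lt_of_le hdltnn with h0 | h0
    · nlinarith [htaunn]
    · have hfin : dlt * dlt ≤ tau * dlt * (1 + dlt) := by
        calc dlt * dlt = α := hdlt2
          _ ≤ (-γ) * (1 + dlt) := hαγ
          _ ≤ tau * dlt * (1 + dlt) := by nlinarith [hmg, hdltnn]
      nlinarith [hfin, h0]
  exact ⟨dlt, tau, hdltnn, htaunn, hdlt, htau, hupper, hlow⟩

end PerZ

/-- the bound update is well defined and preserves the invariant:
(i) `‖x₊ − H(x₊)⁻¹s‖_{x₊} < r/(r+1)`; (ii) whenever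
`‖x₊ − H(x₊)⁻¹s₊‖_{x₊} ≤ r/(r+1)` and `y₊` is the gradient certificate of `s₊`,
one has `‖x₊ − y₊‖_{x₊} ≤ r`. -/
theorem stmt13 {U L : ℕ} (hU : 0 < U) (hL : 0 < L)
    (Lam : (Fin U → ℝ) →ₗ[ℝ] Matrix (Fin L) (Fin L) ℝ)
    (hinj : Function.Injective Lam) (hsym : ∀ v, (Lam v).IsSymm)
    (r : ℝ) (hr0 : 0 < r) (hr : r ≤ 1 / 4)
    (xp y : Fin U → ℝ) (hxp : (Lam xp).PosDef) (hy : (Lam y).PosDef)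
    (s : Fin U → ℝ) (hs : s = -grad Lam y)
    (h : locNorm Lam xp (xp - y) ≤ r ^ 2 / (1 - 2 * r)) :
    locNorm Lam xp (xp - (hess Lam xp)⁻¹.mulVec s) < r / (r + 1) ∧
      ∀ sp yp : Fin U → ℝ,
        locNorm Lam xp (xp - (hess Lam xp)⁻¹.mulVec sp) ≤ r / (r + 1) →
        (Lam yp).PosDef → -grad Lam yp = sp →
        locNorm Lam xp (xp - yp) ≤ r := by
  have h2r : (0:ℝ) < 1 - 2 * r := by linarith
  have hr1 : (0:ℝ) < r + 1 := by linarith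
  constructor
  · obtain ⟨dlt, tau, hdltnn, htaunn, hdlt, htau, hupper, _⟩ :=
      per_z Lam hinj hsym xp y hxp hy
    rw [hs, htau]
    rw [hdlt] at h
    have h3 : dlt * (1 - 2 * r) ≤ r ^ 2 := (le_div_iff₀ h2r).1 h
    have hdlt1 : dlt < 1 := by nlinarith [h3, hr0, hr, hdltnn]
    have h1d : 0 < 1 - dlt := by linarith
    calc tau ≤ dlt / (1 - dlt) := hupper hdlt1
      _ < r / (r + 1) := by
          rw [div_lt_div_iff₀ h1d hr1]
          nlinarith [h3, hr0, hr, hdltnn, h2r]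
  · intro sp yp hsp hyp hgrad
    obtain ⟨dlt', tau', hdltnn', htaunn', hdlt', htau', _, hlow'⟩ :=
      per_z Lam hinj hsym xp yp hxp hyp
    rw [← hgrad, htau'] at hsp
    rw [hdlt']
    have h4 : dlt' ≤ (r / (r + 1)) * (1 + dlt') := by
      calc dlt' ≤ tau' * (1 + dlt') := hlow'
        _ ≤ (r / (r + 1)) * (1 + dlt') := by
            apply mul_le_mul_of_nonneg_right hsp
            linarith
    have h5 : dlt' * (r + 1) ≤ r * (1 + dlt') := by
      have := mul_le_mul_of_nonneg_right h4 hr1.le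
      calc dlt' * (r + 1) ≤ (r / (r + 1)) * (1 + dlt') * (r + 1) := this
        _ = r * (1 + dlt') := by field_simp
    linarith
end

section
/- Let 0 < r ≤ 1/4 and define ρ_r := r·(1 − 3r − 2r²)/(1 − r − 2r²). Suppose Λ(x₊) and Λ(y) are positive definite, s := −g(y), and ‖x₊ − y‖_{x₊} ≤ r²/(1 − 2r). Let e ∈ ℝ^U, let Δc ≥ 0 be a real number, and set s₊ := s − Δc·e; suppose ‖x₊ − H(x₊)⁻¹·s₊‖_{x₊} = r/(r + 1). Then Δc·‖e‖*_y ≥ ρ_r. -/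
set_option maxHeartbeats 1600000


open Matrix

section Helpers
set_option linter.unusedSectionVars false

open Matrix Finset

variable {n : Type*} [Fintype n] [DecidableEq n]

lemma trace_transpose_mul_self_nonneg (A : Matrix n n ℝ) : 0 ≤ (Aᵀ * A).trace := by
  classical
  have : (Aᵀ * A).trace = ∑ j, ∑ i, (A i j)^2 := by
    simp [Matrix.trace, Matrix.mul_apply, Matrix.diag, sq]
  rw [this]
  positivity

lemma trace_transpose_mul_self_eq_zero (A : Matrix n n ℝ) (h : (Aᵀ * A).trace = 0) : A = 0 := by
  classical
  have h' : ∑ j, ∑ i, (A i j)^2 = 0 := by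
    rw [← h]; simp [Matrix.trace, Matrix.mul_apply, Matrix.diag, sq]
  ext i j
  have h1 : ∀ j ∈ Finset.univ, (0:ℝ) ≤ ∑ i, (A i j)^2 := fun j _ => by positivity
  have h2 := (Finset.sum_eq_zero_iff_of_nonneg h1).mp h' j (Finset.mem_univ j)
  have h3 : ∀ i ∈ Finset.univ, (0:ℝ) ≤ (A i j)^2 := fun i _ => by positivity
  have := (Finset.sum_eq_zero_iff_of_nonneg h3).mp h2 i (Finset.mem_univ i)
  simpa using pow_eq_zero_iff (n := 2) (by norm_num) |>.mp this

lemma trace_CS_s14 (A B : Matrix n n ℝ) :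
    ((Aᵀ * B).trace)^2 ≤ (Aᵀ * A).trace * (Bᵀ * B).trace := by
  classical
  have e1 : (Aᵀ * B).trace = ∑ p : n × n, A p.1 p.2 * B p.1 p.2 := by
    rw [Fintype.sum_prod_type]
    simp [Matrix.trace, Matrix.mul_apply, Matrix.diag]
    exact Finset.sum_comm
  have e2 : (Aᵀ * A).trace = ∑ p : n × n, (A p.1 p.2)^2 := by
    rw [Fintype.sum_prod_type]
    simp [Matrix.trace, Matrix.mul_apply, Matrix.diag, sq]
    exact Finset.sum_comm
  have e3 : (Bᵀ * B).trace = ∑ p : n × n, (B p.1 p.2)^2 := by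
    rw [Fintype.sum_prod_type]
    simp [Matrix.trace, Matrix.mul_apply, Matrix.diag, sq]
    exact Finset.sum_comm
  rw [e1, e2, e3]
  exact Finset.sum_mul_sq_le_sq_mul_sq _ _ _

lemma PosSemidef.trace_nonneg' {A : Matrix n n ℝ} (hA : A.PosSemidef) : 0 ≤ A.trace := by
  obtain ⟨B, rfl⟩ : ∃ B : Matrix n n ℝ, A = Bᴴ * B := by
    open scoped MatrixOrder in exact CStarAlgebra.nonneg_iff_eq_star_mul_self.mp hA.nonneg
  have : Bᴴ = Bᵀ := by rw [Matrix.conjTranspose_eq_transpose_of_trivial]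
  rw [this]
  exact trace_transpose_mul_self_nonneg B

lemma trace_mul_psd_nonneg {A B : Matrix n n ℝ} (hA : A.PosSemidef) (hB : B.PosSemidef) :
    0 ≤ (A * B).trace := by
  obtain ⟨C, rfl⟩ : ∃ C : Matrix n n ℝ, B = Cᴴ * C := by
    open scoped MatrixOrder in exact CStarAlgebra.nonneg_iff_eq_star_mul_self.mp hB.nonneg
  have h2 : (A * (Cᴴ * C)).trace = (C * A * Cᴴ).trace := by
    rw [← Matrix.mul_assoc, Matrix.trace_mul_comm, Matrix.mul_assoc]
  rw [h2]
  exact PosSemidef.trace_nonneg' (hA.mul_mul_conjTranspose_same C)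

lemma psd_form_CS {K : Matrix n n ℝ} (hK : K.PosSemidef) (x y : n → ℝ) :
    (x ⬝ᵥ K *ᵥ y)^2 ≤ (x ⬝ᵥ K *ᵥ x) * (y ⬝ᵥ K *ᵥ y) := by
  have hsymm : ∀ u v : n → ℝ, u ⬝ᵥ K *ᵥ v = v ⬝ᵥ K *ᵥ u := by
    intro u v
    have hKt : Kᵀ = K := by
      have := hK.isHermitian
      rwa [Matrix.IsHermitian, Matrix.conjTranspose_eq_transpose_of_trivial] at this
    rw [Matrix.dotProduct_mulVec, show u ᵥ* K = K *ᵥ u by rw [← Matrix.mulVec_transpose, hKt],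
      dotProduct_comm]
  have key : ∀ t : ℝ, 0 ≤ (y ⬝ᵥ K *ᵥ y) * (t*t) + (2 * (x ⬝ᵥ K *ᵥ y)) * t + (x ⬝ᵥ K *ᵥ x) := by
    intro t
    have h0 : 0 ≤ (x + t • y) ⬝ᵥ K *ᵥ (x + t • y) := by
      have := hK.dotProduct_mulVec_nonneg (x + t • y); simpa using this
    have hexp : (x + t • y) ⬝ᵥ K *ᵥ (x + t • y)
        = (y ⬝ᵥ K *ᵥ y) * (t*t) + (2 * (x ⬝ᵥ K *ᵥ y)) * t + (x ⬝ᵥ K *ᵥ x) := by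
      rw [Matrix.mulVec_add, Matrix.mulVec_smul]
      rw [add_dotProduct, smul_dotProduct]
      rw [dotProduct_add, dotProduct_add]
      rw [dotProduct_smul, dotProduct_smul]
      have := hsymm y x
      simp only [smul_eq_mul]
      ring_nf
      rw [this]
      ring
    rw [← hexp]; exact h0
  have hd := discrim_le_zero key
  rw [discrim] at hd
  nlinarith [hd]

/-- Frobenius bound on operator norm: if `M` symmetric and `tr(M*M) ≤ τ²` then `M ⪯ τ·1`. -/
lemma smul_one_sub_posSemidef {M : Matrix n n ℝ} (hM : M.IsHermitian) {τ : ℝ} (hτ : 0 ≤ τ)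
    (htr : (M * M).trace ≤ τ^2) : (τ • (1 : Matrix n n ℝ) - M).PosSemidef := by
  have hMt : Mᵀ = M := by
    have := hM; rwa [Matrix.IsHermitian, Matrix.conjTranspose_eq_transpose_of_trivial] at this
  refine posSemidef_iff_dotProduct_mulVec.mpr ⟨?_, ?_⟩
  · rw [Matrix.IsHermitian, Matrix.conjTranspose_eq_transpose_of_trivial]
    rw [Matrix.transpose_sub, Matrix.transpose_smul, Matrix.transpose_one, hMt]
  · intro v
    simp only [star_trivial, Matrix.sub_mulVec, dotProduct_sub, Matrix.smul_mulVec,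
      Matrix.one_mulVec, dotProduct_smul, smul_eq_mul, sub_nonneg]
    -- goal : v ⬝ᵥ M *ᵥ v ≤ τ * (v ⬝ᵥ v)
    have hvv : (0:ℝ) ≤ v ⬝ᵥ v := Finset.sum_nonneg fun i _ => mul_self_nonneg _
    have hcs : (v ⬝ᵥ M *ᵥ v)^2 ≤ (v ⬝ᵥ v) * ((M *ᵥ v) ⬝ᵥ (M *ᵥ v)) := by
      have h1 : (v ⬝ᵥ M *ᵥ v)^2 ≤ (∑ i, (v i)^2) * (∑ i, ((M *ᵥ v) i)^2) := by
        simpa [dotProduct] using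
          Finset.sum_mul_sq_le_sq_mul_sq Finset.univ v (fun i => (M *ᵥ v) i)
      simpa [dotProduct, sq] using h1
    have hrow : (M *ᵥ v) ⬝ᵥ (M *ᵥ v) ≤ (M * M).trace * (v ⬝ᵥ v) := by
      have hfro : (M * M).trace = ∑ i, ∑ j, (M i j)^2 := by
        nth_rewrite 1 [← hMt]
        simp [Matrix.trace, Matrix.mul_apply, Matrix.diag, sq]
        exact Finset.sum_comm
      have hterm : ∀ i, ((M *ᵥ v) i)^2 ≤ (∑ j, (M i j)^2) * (∑ j, (v j)^2) := by
        intro i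
        simpa [Matrix.mulVec, dotProduct] using
          Finset.sum_mul_sq_le_sq_mul_sq Finset.univ (fun j => M i j) v
      calc (M *ᵥ v) ⬝ᵥ (M *ᵥ v) = ∑ i, ((M *ᵥ v) i)^2 := by simp [dotProduct, sq]
        _ ≤ ∑ i, (∑ j, (M i j)^2) * (∑ j, (v j)^2) := Finset.sum_le_sum (fun i _ => hterm i)
        _ = (∑ i, ∑ j, (M i j)^2) * (∑ j, (v j)^2) := by rw [Finset.sum_mul]
        _ = (M * M).trace * (v ⬝ᵥ v) := by rw [hfro]; simp [dotProduct, sq]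
    have htr' : (0:ℝ) ≤ (M*M).trace := by
      have : M * M = Mᵀ * M := by rw [hMt]
      rw [this]; exact trace_transpose_mul_self_nonneg M
    nlinarith [hcs, hrow, sq_nonneg (v ⬝ᵥ M *ᵥ v), sq_nonneg (v ⬝ᵥ v), mul_nonneg hτ hvv]

/-- if `Z` posdef and `Z ⪰ a·1` with `a > 0` then `Z⁻¹ ⪯ a⁻¹·1`. -/
lemma inv_le_of_le {Z : Matrix n n ℝ} (hZ : Z.PosDef) {a : ℝ} (ha : 0 < a)
    (h : (Z - a • (1 : Matrix n n ℝ)).PosSemidef) :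
    (a⁻¹ • (1 : Matrix n n ℝ) - Z⁻¹).PosSemidef := by
  have hdet : IsUnit Z.det := hZ.det_pos.ne'.isUnit
  have hZZ : Z * Z⁻¹ = 1 := Matrix.mul_nonsing_inv Z hdet
  have hZinv : Z⁻¹.PosDef := hZ.inv
  refine posSemidef_iff_dotProduct_mulVec.mpr ⟨?_, ?_⟩
  · have htZ : Z⁻¹ᵀ = Z⁻¹ := by
      have := hZinv.isHermitian
      rwa [Matrix.IsHermitian, Matrix.conjTranspose_eq_transpose_of_trivial] at this
    rw [Matrix.IsHermitian, Matrix.conjTranspose_eq_transpose_of_trivial,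
      Matrix.transpose_sub, Matrix.transpose_smul, Matrix.transpose_one, htZ]
  · intro v
    simp only [star_trivial, Matrix.sub_mulVec, dotProduct_sub, Matrix.smul_mulVec,
      Matrix.one_mulVec, dotProduct_smul, smul_eq_mul, sub_nonneg]
    set w := Z⁻¹ *ᵥ v with hw
    have hv : Z *ᵥ w = v := by
      rw [hw, Matrix.mulVec_mulVec, hZZ, Matrix.one_mulVec]
    have hq : v ⬝ᵥ w = w ⬝ᵥ Z *ᵥ w := by
      conv_lhs => rw [← hv]
      rw [dotProduct_comm]
    rw [hq]
    set q := w ⬝ᵥ Z *ᵥ w with hqdef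
    have hq0 : 0 ≤ q := by simpa using hZ.posSemidef.dotProduct_mulVec_nonneg w
    have hu0 : 0 ≤ w ⬝ᵥ w := Finset.sum_nonneg fun i _ => mul_self_nonneg _
    have hqa : a * (w ⬝ᵥ w) ≤ q := by
      have := h.dotProduct_mulVec_nonneg w
      simp only [star_trivial, Matrix.sub_mulVec, dotProduct_sub,
        Matrix.smul_mulVec, Matrix.one_mulVec, dotProduct_smul, smul_eq_mul,
        sub_nonneg] at this
      exact this
    have hcs : q^2 ≤ (w ⬝ᵥ w) * ((Z *ᵥ w) ⬝ᵥ (Z *ᵥ w)) := by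
      have := psd_form_CS (Matrix.PosSemidef.one (n := n) (R := ℝ)) w (Z *ᵥ w)
      simpa [Matrix.one_mulVec, hqdef] using this
    have hp : v ⬝ᵥ v = (Z *ᵥ w) ⬝ᵥ (Z *ᵥ w) := by rw [hv]
    rw [hp]
    by_cases hu : w ⬝ᵥ w = 0
    · have hwz : w = 0 := by
        have : ∀ i, w i = 0 := by
          intro i
          have hsum : ∑ j, (w j)^2 = 0 := by
            simpa [dotProduct, sq] using hu
          have := (Finset.sum_eq_zero_iff_of_nonneg (fun j _ => sq_nonneg (w j))).mp hsum i
            (Finset.mem_univ i)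
          exact pow_eq_zero_iff (n := 2) (by norm_num) |>.mp (this)
        funext i; exact this i
      have : q = 0 := by rw [hqdef, hwz]; simp
      rw [this]
      have h0 : (0:ℝ) ≤ (Z *ᵥ w) ⬝ᵥ (Z *ᵥ w) := Finset.sum_nonneg fun i _ => mul_self_nonneg _
      positivity
    · have hu' : 0 < w ⬝ᵥ w := lt_of_le_of_ne hu0 (Ne.symm hu)
      have hkey : a * q ≤ (Z *ᵥ w) ⬝ᵥ (Z *ᵥ w) := by
        have h1 : a * q * (w ⬝ᵥ w) ≤ q^2 := by nlinarith
        have h2 : a * q * (w ⬝ᵥ w) ≤ (w ⬝ᵥ w) * ((Z *ᵥ w) ⬝ᵥ (Z *ᵥ w)) := le_trans h1 hcs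
        nlinarith
      rw [show q = a⁻¹ * (a * q) by field_simp]
      exact mul_le_mul_of_nonneg_left hkey (inv_nonneg.mpr ha.le)

lemma trace_CACA_le {C A : Matrix n n ℝ} (hC : C.PosSemidef) {c : ℝ} (hc : 0 ≤ c)
    (hCc : ((c • (1 : Matrix n n ℝ)) - C).PosSemidef) (hA : A.IsHermitian) :
    (C * A * C * A).trace ≤ c^2 * (A * A).trace := by
  have hAt : Aᴴ = A := hA
  have hACA : (A * C * A).PosSemidef := by
    have := hC.conjTranspose_mul_mul_same A
    rwa [hAt] at this
  have hAA : (A * A).PosSemidef := by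
    have := Matrix.posSemidef_conjTranspose_mul_self A
    rwa [hAt] at this
  have step1 : (C * A * C * A).trace = ((A * C * A) * C).trace := by
    rw [show C * A * C * A = C * (A * C * A) by noncomm_ring]
    exact Matrix.trace_mul_comm _ _
  have step2 : ((A * C * A) * C).trace ≤ c * (A * C * A).trace := by
    have h0 := trace_mul_psd_nonneg hACA hCc
    have hexp : (A * C * A) * ((c • (1 : Matrix n n ℝ)) - C)
        = c • (A * C * A) - (A * C * A) * C := by
      rw [Matrix.mul_sub, Matrix.mul_smul, Matrix.mul_one]
    rw [hexp, Matrix.trace_sub, Matrix.trace_smul] at h0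
    simp only [smul_eq_mul] at h0
    linarith
  have step3 : (A * C * A).trace = (C * (A * A)).trace := by
    rw [show A * C * A = (A * C) * A by noncomm_ring, Matrix.trace_mul_comm,
      show A * (A * C) = (A * A) * C by noncomm_ring, Matrix.trace_mul_comm]
  have step4 : (C * (A * A)).trace ≤ c * (A * A).trace := by
    have h0 := trace_mul_psd_nonneg hCc hAA
    have hexp : ((c • (1 : Matrix n n ℝ)) - C) * (A * A)
        = c • (A * A) - C * (A * A) := by
      rw [Matrix.sub_mul, Matrix.smul_mul, Matrix.one_mul]
    rw [hexp, Matrix.trace_sub, Matrix.trace_smul] at h0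
    simp only [smul_eq_mul] at h0
    linarith
  calc (C * A * C * A).trace ≤ c * (A * C * A).trace := by rw [step1]; exact step2
    _ = c * (C * (A * A)).trace := by rw [step3]
    _ ≤ c * (c * (A * A).trace) := by
        exact mul_le_mul_of_nonneg_left step4 hc
    _ = c^2 * (A * A).trace := by ring


end Helpers

section LamLemmas

variable {U L : ℕ} (Lam : (Fin U → ℝ) →ₗ[ℝ] Matrix (Fin L) (Fin L) ℝ)

lemma lam_sum (v : Fin U → ℝ) : Lam v = ∑ i, v i • Lam (Pi.single i 1) := by
  have h := LinearMap.pi_apply_eq_sum_univ Lam v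
  have hsingle : ∀ i : Fin U, (fun j => if i = j then (1:ℝ) else 0) = Pi.single i 1 := by
    intro i; funext j; simp [Pi.single_apply, eq_comm]
  simp_rw [hsingle] at h
  exact h

lemma dot_trace (B C : Matrix (Fin L) (Fin L) ℝ) (v : Fin U → ℝ) :
    ∑ i, v i * (B * Lam (Pi.single i 1) * C).trace = (B * Lam v * C).trace := by
  rw [lam_sum Lam v, Matrix.mul_sum, Matrix.sum_mul, Matrix.trace_sum]
  congr 1
  funext i
  rw [Matrix.mul_smul, Matrix.smul_mul, Matrix.trace_smul]
  simp

lemma hess_form (x v w : Fin U → ℝ) :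
    v ⬝ᵥ (hess Lam x) *ᵥ w = ((Lam x)⁻¹ * Lam v * (Lam x)⁻¹ * Lam w).trace := by
  have hrow : ∀ i, ((hess Lam x) *ᵥ w) i
      = ((Lam x)⁻¹ * Lam (Pi.single i 1) * (Lam x)⁻¹ * Lam w).trace := by
    intro i
    have : ((hess Lam x) *ᵥ w) i = ∑ j, w j *
        (((Lam x)⁻¹ * Lam (Pi.single i 1) * (Lam x)⁻¹) * Lam (Pi.single j 1) * 1).trace := by
      simp [Matrix.mulVec, dotProduct, hess, mul_comm]
    rw [this, dot_trace Lam _ _ w]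
    rw [Matrix.mul_one]
  have : v ⬝ᵥ (hess Lam x) *ᵥ w = ∑ i, v i *
      ((Lam x)⁻¹ * Lam (Pi.single i 1) * ((Lam x)⁻¹ * Lam w)).trace := by
    simp only [dotProduct]
    congr 1; funext i
    rw [hrow i, Matrix.mul_assoc]
  rw [this, dot_trace Lam _ _ v, ← Matrix.mul_assoc]

lemma grad_dot (x u : Fin U → ℝ) :
    (grad Lam x) ⬝ᵥ u = -(((Lam x)⁻¹ * Lam u).trace) := by
  have : (grad Lam x) ⬝ᵥ u = -∑ i, u i * ((Lam x)⁻¹ * Lam (Pi.single i 1) * 1).trace := by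
    simp [grad, dotProduct, Finset.sum_neg_distrib, mul_comm]
  rw [this, dot_trace Lam _ _ u, Matrix.mul_one]

lemma hess_mulVec_self (x : Fin U → ℝ) (hx : (Lam x)⁻¹ * (Lam x) = 1) :
    (hess Lam x) *ᵥ x = -(grad Lam x) := by
  funext i
  have : ((hess Lam x) *ᵥ x) i = ∑ j, x j *
      (((Lam x)⁻¹ * Lam (Pi.single i 1) * (Lam x)⁻¹) * Lam (Pi.single j 1) * 1).trace := by
    simp [Matrix.mulVec, dotProduct, hess, mul_comm]
  rw [this, dot_trace Lam _ _ x, Matrix.mul_one, Matrix.mul_assoc, hx, Matrix.mul_one]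
  simp [grad]

end LamLemmas

section HessPosDef

variable {U L : ℕ}

lemma htrans {B : Matrix (Fin L) (Fin L) ℝ} (h : B.IsHermitian) : Bᵀ = B := by
  rw [← Matrix.conjTranspose_eq_transpose_of_trivial]; exact h

lemma hess_isHermitian (Lam : (Fin U → ℝ) →ₗ[ℝ] Matrix (Fin L) (Fin L) ℝ) (x : Fin U → ℝ) :
    (hess Lam x).IsHermitian := by
  show _ᴴ = _
  ext i j
  rw [Matrix.conjTranspose_apply]
  show star (hess Lam x j i) = hess Lam x i j
  rw [star_trivial]
  show ((Lam x)⁻¹ * Lam (Pi.single j 1) * (Lam x)⁻¹ * Lam (Pi.single i 1)).trace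
    = ((Lam x)⁻¹ * Lam (Pi.single i 1) * (Lam x)⁻¹ * Lam (Pi.single j 1)).trace
  rw [show (Lam x)⁻¹ * Lam (Pi.single j 1) * (Lam x)⁻¹ * Lam (Pi.single i 1)
      = ((Lam x)⁻¹ * Lam (Pi.single j 1)) * ((Lam x)⁻¹ * Lam (Pi.single i 1)) by noncomm_ring,
    Matrix.trace_mul_comm]
  congr 1
  noncomm_ring

lemma hess_posDef (Lam : (Fin U → ℝ) →ₗ[ℝ] Matrix (Fin L) (Fin L) ℝ)
    (hinj : Function.Injective Lam) (hsym : ∀ v, (Lam v).IsSymm)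
    (x : Fin U → ℝ) (hx : (Lam x).PosDef) :
    (hess Lam x).PosDef := by
  classical
  set P := Lam x with hPdef
  open scoped MatrixOrder in set S := CFC.sqrt P with hSdef
  open scoped MatrixOrder in have hS2 : S * S = P := CFC.sqrt_mul_sqrt_self P hx.posSemidef.nonneg
  open scoped MatrixOrder in have hSh : S.IsHermitian := (CFC.sqrt_nonneg P).posSemidef.isHermitian
  have hSdet : IsUnit S.det := by
    have hm : S.det * S.det = P.det := by rw [← Matrix.det_mul, hS2]
    have : S.det ≠ 0 := by
      intro h0; rw [h0, mul_zero] at hm; exact hx.det_pos.ne' hm.symm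
    exact this.isUnit
  set T := S⁻¹ with hTdef
  have hTS : T * S = 1 := Matrix.nonsing_inv_mul S hSdet
  have hST : S * T = 1 := Matrix.mul_nonsing_inv S hSdet
  have hTh : T.IsHermitian := hSh.inv
  have hPinvTT : P⁻¹ = T * T := by rw [← hS2, Matrix.mul_inv_rev]
  have hframe : ∀ v w : Fin U → ℝ, (P⁻¹ * Lam v * P⁻¹ * Lam w).trace
      = ((T * Lam v * T) * (T * Lam w * T)).trace := by
    intro v w
    rw [hPinvTT,
      show T * T * Lam v * (T * T) * Lam w = T * (T * Lam v * T * (T * Lam w)) by noncomm_ring,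
      Matrix.trace_mul_comm]
    congr 1
    noncomm_ring
  have hAh : ∀ v : Fin U → ℝ, (T * Lam v * T).IsHermitian := by
    intro v
    have hΛ : (Lam v).IsHermitian := by
      show _ᴴ = _
      rw [Matrix.conjTranspose_eq_transpose_of_trivial]; exact hsym v
    show (T * Lam v * T)ᴴ = _
    rw [Matrix.conjTranspose_mul, Matrix.conjTranspose_mul,
      show Tᴴ = T from hTh, show (Lam v)ᴴ = Lam v from hΛ]
    noncomm_ring
  refine posDef_iff_dotProduct_mulVec.mpr ⟨?_, ?_⟩
  · exact hess_isHermitian Lam x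
  · intro v hv
    rw [star_trivial]
    have hform : v ⬝ᵥ (hess Lam x) *ᵥ v = ((T * Lam v * T)ᵀ * (T * Lam v * T)).trace := by
      rw [hess_form, hframe v v, htrans (hAh v)]
    have h0 : 0 ≤ v ⬝ᵥ (hess Lam x) *ᵥ v := by
      rw [hform]; exact trace_transpose_mul_self_nonneg _
    have hne : v ⬝ᵥ (hess Lam x) *ᵥ v ≠ 0 := by
      intro h0'
      rw [hform] at h0'
      have hA0 : T * Lam v * T = 0 := trace_transpose_mul_self_eq_zero _ h0'
      have hΛ0 : Lam v = 0 := by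
        have hrec : S * (T * Lam v * T) * S = Lam v := by
          rw [show S * (T * Lam v * T) * S = (S * T) * Lam v * (T * S) by noncomm_ring,
            hST, hTS]
          simp
        rw [hA0] at hrec
        simpa using hrec.symm
      exact hv (hinj (by rw [hΛ0, map_zero]))
    exact lt_of_le_of_ne h0 (Ne.symm hne)

end HessPosDef

lemma arith_sq_le {x y : ℝ} (h : x^2 ≤ y^2) (hy : 0 ≤ y) : x ≤ y := by
  nlinarith [sq_nonneg (x - y), sq_nonneg (x + y)]

lemma arith_expand {u a b d : ℝ} (hu : u ≤ a*b) (hd : 0 ≤ d) :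
    a^2 + 2*d*u + d^2*b^2 ≤ (a + d*b)^2 := by nlinarith

lemma arith_cancel {x E : ℝ} (hx : 0 < x) (h : x^2 ≤ E*x) : x ≤ E := by nlinarith

/-- per-iteration improvement: with `s = -g(y)`, `s₊ = s − Δc·e` and
`‖x₊ − H(x₊)⁻¹s₊‖_{x₊} = r/(r+1)`, one has `Δc·‖e‖*_y ≥ ρ_r`. -/
theorem stmt14 {U L : ℕ} (hU : 0 < U) (hL : 0 < L)
    (Lam : (Fin U → ℝ) →ₗ[ℝ] Matrix (Fin L) (Fin L) ℝ)
    (hinj : Function.Injective Lam) (hsym : ∀ v, (Lam v).IsSymm)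
    (r : ℝ) (hr0 : 0 < r) (hr : r ≤ 1 / 4)
    (ρ : ℝ) (hρ : ρ = r * (1 - 3 * r - 2 * r ^ 2) / (1 - r - 2 * r ^ 2))
    (xp y : Fin U → ℝ) (hxp : (Lam xp).PosDef) (hy : (Lam y).PosDef)
    (s : Fin U → ℝ) (hs : s = -grad Lam y)
    (h1 : locNorm Lam xp (xp - y) ≤ r ^ 2 / (1 - 2 * r))
    (e : Fin U → ℝ) (Δc : ℝ) (hΔc : 0 ≤ Δc)
    (sp : Fin U → ℝ) (hsp : sp = s - Δc • e)
    (h2 : locNorm Lam xp (xp - (hess Lam xp)⁻¹.mulVec sp) = r / (r + 1)) :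
    ρ ≤ Δc * dualNorm Lam y e := by
  classical
  have hPdetU : IsUnit (Lam xp).det := hxp.det_pos.ne'.isUnit
  have hYdetU : IsUnit (Lam y).det := hy.det_pos.ne'.isUnit
  -- square-root frame at xp
  open scoped MatrixOrder in set S := CFC.sqrt (Lam xp) with hSdef
  open scoped MatrixOrder in have hS2 : S * S = Lam xp := CFC.sqrt_mul_sqrt_self (Lam xp) hxp.posSemidef.nonneg
  open scoped MatrixOrder in have hSh : S.IsHermitian := (CFC.sqrt_nonneg (Lam xp)).posSemidef.isHermitian
  have hSdet : IsUnit S.det := by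
    have hm : S.det * S.det = (Lam xp).det := by rw [← Matrix.det_mul, hS2]
    have h0 : S.det ≠ 0 := by
      intro h0; rw [h0, mul_zero] at hm; exact hxp.det_pos.ne' hm.symm
    exact h0.isUnit
  set T := S⁻¹ with hTdef
  have hTS : T * S = 1 := Matrix.nonsing_inv_mul S hSdet
  have hST : S * T = 1 := Matrix.mul_nonsing_inv S hSdet
  have hTh : T.IsHermitian := hSh.inv
  have hTinv : T⁻¹ = S := Matrix.nonsing_inv_nonsing_inv S hSdet
  have hPinvTT : (Lam xp)⁻¹ = T * T := by rw [← hS2, Matrix.mul_inv_rev]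
  have hAh : ∀ v : Fin U → ℝ, (T * Lam v * T).IsHermitian := by
    intro v
    have hΛ : (Lam v).IsHermitian := by
      show _ᴴ = _
      rw [Matrix.conjTranspose_eq_transpose_of_trivial]; exact hsym v
    show (T * Lam v * T)ᴴ = _
    rw [Matrix.conjTranspose_mul, Matrix.conjTranspose_mul,
      show Tᴴ = T from hTh, show (Lam v)ᴴ = Lam v from hΛ]
    simp only [Matrix.mul_assoc]
  have hframeP : ∀ v w : Fin U → ℝ, ((Lam xp)⁻¹ * Lam v * (Lam xp)⁻¹ * Lam w).trace
      = ((T * Lam v * T) * (T * Lam w * T)).trace := by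
    intro v w
    rw [hPinvTT,
      show T * T * Lam v * (T * T) * Lam w = T * (T * Lam v * T * (T * Lam w)) by simp only [Matrix.mul_assoc],
      Matrix.trace_mul_comm]
    simp only [Matrix.mul_assoc]
  -- Z frame
  set Z := T * Lam y * T with hZdef
  have hZh : Z.IsHermitian := hAh y
  have hsymdot : ∀ {k : ℕ} (B : Matrix (Fin k) (Fin k) ℝ), B.IsHermitian →
      ∀ a b : Fin k → ℝ, a ⬝ᵥ B *ᵥ b = b ⬝ᵥ B *ᵥ a := by
    intro k B hB a b
    rw [Matrix.dotProduct_mulVec,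
      show a ᵥ* B = B *ᵥ a by rw [← Matrix.mulVec_transpose, htrans hB],
      dotProduct_comm]
  have hZpd : Z.PosDef := by
    refine PosDef.of_dotProduct_mulVec_pos hZh fun xv hxv => ?_
    rw [star_trivial]
    have hTx : T *ᵥ xv ≠ 0 := by
      intro h0
      apply hxv
      have hrec : S *ᵥ (T *ᵥ xv) = xv := by
        rw [Matrix.mulVec_mulVec, hST, Matrix.one_mulVec]
      rw [h0, Matrix.mulVec_zero] at hrec; exact hrec.symm
    have hpos := hy.dotProduct_mulVec_pos hTx
    rw [star_trivial] at hpos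
    have hZx : Z *ᵥ xv = T *ᵥ (Lam y *ᵥ (T *ᵥ xv)) := by
      rw [hZdef, Matrix.mulVec_mulVec, Matrix.mulVec_mulVec]
    have hmove : xv ⬝ᵥ T *ᵥ (Lam y *ᵥ (T *ᵥ xv)) = (T *ᵥ xv) ⬝ᵥ Lam y *ᵥ (T *ᵥ xv) := by
      rw [Matrix.dotProduct_mulVec,
        show xv ᵥ* T = T *ᵥ xv by rw [← Matrix.mulVec_transpose, htrans hTh]]
    rw [hZx, hmove]
    exact hpos
  have hZdetU : IsUnit Z.det := hZpd.det_pos.ne'.isUnit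
  have hZinvZ : Z⁻¹ * Z = 1 := Matrix.nonsing_inv_mul Z hZdetU
  have hZinvpd : Z⁻¹.PosDef := hZpd.inv
  have hYinvform : (Lam y)⁻¹ = T * Z⁻¹ * T := by
    have h1' : Z⁻¹ = S * (Lam y)⁻¹ * S := by
      rw [hZdef, Matrix.mul_inv_rev, Matrix.mul_inv_rev, hTinv]; simp only [Matrix.mul_assoc]
    rw [h1', show T * (S * (Lam y)⁻¹ * S) * T = (T * S) * (Lam y)⁻¹ * (S * T) by simp only [Matrix.mul_assoc],
      hTS, hST, Matrix.one_mul, Matrix.mul_one]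
  have hframeY : ∀ v w : Fin U → ℝ, ((Lam y)⁻¹ * Lam v * (Lam y)⁻¹ * Lam w).trace
      = (Z⁻¹ * (T * Lam v * T) * Z⁻¹ * (T * Lam w * T)).trace := by
    intro v w
    rw [hYinvform,
      show T * Z⁻¹ * T * Lam v * (T * Z⁻¹ * T) * Lam w
        = T * (Z⁻¹ * (T * Lam v * T) * Z⁻¹ * (T * Lam w)) by simp only [Matrix.mul_assoc],
      Matrix.trace_mul_comm]
    simp only [Matrix.mul_assoc]
  have hpair : ∀ u : Fin U → ℝ, (((Lam xp)⁻¹ - (Lam y)⁻¹) * Lam u).trace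
      = ((1 - Z⁻¹) * (T * Lam u * T)).trace := by
    intro u
    have e0 : (Lam xp)⁻¹ - (Lam y)⁻¹ = T * (1 - Z⁻¹) * T := by
      rw [hPinvTT, hYinvform, Matrix.mul_sub, Matrix.mul_one, Matrix.sub_mul]
    rw [e0, show T * (1 - Z⁻¹) * T * Lam u = T * ((1 - Z⁻¹) * (T * Lam u)) by simp only [Matrix.mul_assoc],
      Matrix.trace_mul_comm]
    simp only [Matrix.mul_assoc]
  have hMmZ : T * Lam (xp - y) * T = 1 - Z := by
    rw [map_sub, Matrix.mul_sub, Matrix.sub_mul, hZdef]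
    congr 1
    rw [← hS2, show T * (S * S) * T = (T * S) * (S * T) by simp only [Matrix.mul_assoc], hTS, hST,
      Matrix.one_mul]
  have hMh : (1 - Z).IsHermitian := by rw [← hMmZ]; exact hAh _
  -- Hessians
  have hH : (hess Lam xp).PosDef := hess_posDef Lam hinj hsym xp hxp
  have hHy : (hess Lam y).PosDef := hess_posDef Lam hinj hsym y hy
  have hHdetU : IsUnit (hess Lam xp).det := hH.det_pos.ne'.isUnit
  have hKH : (hess Lam xp)⁻¹ * hess Lam xp = 1 := Matrix.nonsing_inv_mul _ hHdetU
  have hHK : hess Lam xp * (hess Lam xp)⁻¹ = 1 := Matrix.mul_nonsing_inv _ hHdetU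
  have hKpd : (hess Lam xp)⁻¹.PosDef := hH.inv
  have hHydetU : IsUnit (hess Lam y).det := hHy.det_pos.ne'.isUnit
  have hHyKy : hess Lam y * (hess Lam y)⁻¹ = 1 := Matrix.mul_nonsing_inv _ hHydetU
  have hKypd : (hess Lam y)⁻¹.PosDef := hHy.inv
  have hsandK : ∀ a : Fin U → ℝ,
      ((hess Lam xp)⁻¹ *ᵥ a) ⬝ᵥ hess Lam xp *ᵥ ((hess Lam xp)⁻¹ *ᵥ a)
        = a ⬝ᵥ (hess Lam xp)⁻¹ *ᵥ a := by
    intro a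
    have h1' : hess Lam xp *ᵥ ((hess Lam xp)⁻¹ *ᵥ a) = a := by
      rw [Matrix.mulVec_mulVec, hHK, Matrix.one_mulVec]
    rw [h1', dotProduct_comm]
  have hsandKy : ∀ a : Fin U → ℝ,
      ((hess Lam y)⁻¹ *ᵥ a) ⬝ᵥ hess Lam y *ᵥ ((hess Lam y)⁻¹ *ᵥ a)
        = a ⬝ᵥ (hess Lam y)⁻¹ *ᵥ a := by
    intro a
    have h1' : hess Lam y *ᵥ ((hess Lam y)⁻¹ *ᵥ a) = a := by
      rw [Matrix.mulVec_mulVec, hHyKy, Matrix.one_mulVec]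
    rw [h1', dotProduct_comm]
  -- τ
  set τ := locNorm Lam xp (xp - y) with hτdef
  have hτ0 : 0 ≤ τ := Real.sqrt_nonneg _
  have hτsq : τ^2 = (xp - y) ⬝ᵥ hess Lam xp *ᵥ (xp - y) := by
    rw [hτdef, locNorm, Real.sq_sqrt]
    simpa using hH.posSemidef.dotProduct_mulVec_nonneg (xp - y)
  have hr2 : 0 < 1 - 2*r := by linarith only [hr]
  have hτle : τ ≤ 1/8 := by
    have hb : r^2/(1-2*r) ≤ 1/8 := by
      rw [div_le_iff₀ hr2]
      nlinarith only [mul_nonneg (by linarith only [hr] : (0:ℝ) ≤ 1/4 - r)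
        (by linarith only [hr0] : (0:ℝ) ≤ 2*r + 1)]
    calc τ ≤ r^2/(1-2*r) := h1
      _ ≤ 1/8 := hb
  have h1τ : 0 < 1 - τ := by linarith only [hτle]
  have htrM : ((1 - Z) * (1 - Z)).trace = τ^2 := by
    rw [hτsq, hess_form, hframeP, hMmZ]
  have hM1 : (τ • (1 : Matrix (Fin L) (Fin L) ℝ) - (1 - Z)).PosSemidef :=
    smul_one_sub_posSemidef hMh hτ0 (le_of_eq htrM)
  have hZge : (Z - (1-τ) • (1 : Matrix (Fin L) (Fin L) ℝ)).PosSemidef := by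
    have heq : Z - (1-τ) • (1 : Matrix (Fin L) (Fin L) ℝ)
        = τ • (1 : Matrix (Fin L) (Fin L) ℝ) - (1 - Z) := by
      rw [sub_smul, one_smul]; abel
    rw [heq]; exact hM1
  have hZinvle : ((1-τ)⁻¹ • (1 : Matrix (Fin L) (Fin L) ℝ) - Z⁻¹).PosSemidef :=
    inv_le_of_le hZpd h1τ hZge
  set c := (1-τ)⁻¹ with hcdef
  have hc0 : 0 ≤ c := inv_nonneg.mpr h1τ.le
  -- quadratic comparison
  have hquadcmp : ∀ v : Fin U → ℝ,
      v ⬝ᵥ hess Lam y *ᵥ v ≤ c^2 * (v ⬝ᵥ hess Lam xp *ᵥ v) := by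
    intro v
    rw [hess_form Lam y v v, hframeY v v, hess_form Lam xp v v, hframeP v v]
    exact trace_CACA_le hZinvpd.posSemidef hc0 hZinvle (hAh v)
  -- gradient difference bound
  have herm1Z : (1 - Z⁻¹)ᵀ = 1 - Z⁻¹ := htrans (Matrix.isHermitian_one.sub hZinvpd.isHermitian)
  have hE : ((1 - Z⁻¹) * (1 - Z⁻¹)).trace ≤ c^2 * τ^2 := by
    have hrep : 1 - Z⁻¹ = -(Z⁻¹ * (1 - Z)) := by
      rw [Matrix.mul_sub, Matrix.mul_one, hZinvZ]; abel
    calc ((1 - Z⁻¹) * (1 - Z⁻¹)).trace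
        = (Z⁻¹ * (1 - Z) * Z⁻¹ * (1 - Z)).trace := by
          rw [hrep, show -(Z⁻¹ * (1 - Z)) * -(Z⁻¹ * (1 - Z))
            = Z⁻¹ * (1 - Z) * Z⁻¹ * (1 - Z) by rw [neg_mul_neg]; simp only [Matrix.mul_assoc]]
      _ ≤ c^2 * ((1 - Z) * (1 - Z)).trace :=
          trace_CACA_le hZinvpd.posSemidef hc0 hZinvle hMh
      _ = c^2 * τ^2 := by rw [htrM]
  set q := grad Lam y - grad Lam xp with hqdef
  have hqdot : ∀ u : Fin U → ℝ,
      q ⬝ᵥ u = (((Lam xp)⁻¹ - (Lam y)⁻¹) * Lam u).trace := by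
    intro u
    rw [hqdef, sub_dotProduct, grad_dot, grad_dot, Matrix.sub_mul, Matrix.trace_sub]
    ring
  have hNq0 : 0 ≤ q ⬝ᵥ (hess Lam xp)⁻¹ *ᵥ q := by simpa using hKpd.posSemidef.dotProduct_mulVec_nonneg q
  have hNqE : q ⬝ᵥ (hess Lam xp)⁻¹ *ᵥ q ≤ c^2 * τ^2 := by
    have hu : q ⬝ᵥ ((hess Lam xp)⁻¹ *ᵥ q)
        = ((1 - Z⁻¹) * (T * Lam ((hess Lam xp)⁻¹ *ᵥ q) * T)).trace := by
      rw [hqdot ((hess Lam xp)⁻¹ *ᵥ q), hpair]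
    have htrAu : ((T * Lam ((hess Lam xp)⁻¹ *ᵥ q) * T)ᵀ
        * (T * Lam ((hess Lam xp)⁻¹ *ᵥ q) * T)).trace = q ⬝ᵥ (hess Lam xp)⁻¹ *ᵥ q := by
      rw [htrans (hAh _), ← hframeP, ← hess_form Lam xp]
      exact hsandK q
    have hCS0 := trace_CS_s14 (1 - Z⁻¹) (T * Lam ((hess Lam xp)⁻¹ *ᵥ q) * T)
    rw [herm1Z, htrAu, ← hu] at hCS0
    -- hCS0 : (Nq)^2 ≤ E * Nq
    have hEnn : 0 ≤ ((1 - Z⁻¹) * (1 - Z⁻¹)).trace := by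
      nth_rewrite 1 [← herm1Z]
      exact trace_transpose_mul_self_nonneg (1 - Z⁻¹)
    rcases eq_or_lt_of_le hNq0 with hz | hz
    · rw [← hz]; positivity
    · have hle : q ⬝ᵥ (hess Lam xp)⁻¹ *ᵥ q ≤ ((1 - Z⁻¹) * (1 - Z⁻¹)).trace :=
        arith_cancel hz hCS0
      linarith only [hE, hle]
  -- process h2
  have hxpid : (Lam xp)⁻¹ * Lam xp = 1 := Matrix.nonsing_inv_mul _ hPdetU
  set w := q + Δc • e with hwdef
  have hw' : hess Lam xp *ᵥ xp - sp = w := by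
    rw [hess_mulVec_self Lam xp hxpid, hsp, hs, hwdef, hqdef]
    abel
  have hxpK : xp - (hess Lam xp)⁻¹ *ᵥ sp = (hess Lam xp)⁻¹ *ᵥ w := by
    rw [← hw', Matrix.mulVec_sub, Matrix.mulVec_mulVec, hKH, Matrix.one_mulVec]
  have hNw0 : 0 ≤ w ⬝ᵥ (hess Lam xp)⁻¹ *ᵥ w := by simpa using hKpd.posSemidef.dotProduct_mulVec_nonneg w
  have hNw : w ⬝ᵥ (hess Lam xp)⁻¹ *ᵥ w = (r/(r+1))^2 := by
    have hloc : locNorm Lam xp (xp - (hess Lam xp)⁻¹.mulVec sp)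
        = Real.sqrt (w ⬝ᵥ (hess Lam xp)⁻¹ *ᵥ w) := by
      rw [locNorm, show xp - (hess Lam xp)⁻¹.mulVec sp = (hess Lam xp)⁻¹ *ᵥ w from hxpK,
        hsandK w]
    rw [hloc] at h2
    have := congrArg (fun t : ℝ => t^2) h2
    simpa [Real.sq_sqrt hNw0] using this
  -- triangle inequality
  set Nq := q ⬝ᵥ (hess Lam xp)⁻¹ *ᵥ q with hNqdef
  set Ne := e ⬝ᵥ (hess Lam xp)⁻¹ *ᵥ e with hNedef
  have hNe0 : 0 ≤ Ne := by simpa using hKpd.posSemidef.dotProduct_mulVec_nonneg e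
  set a := Real.sqrt Nq with hadef
  set b := Real.sqrt Ne with hbdef
  have ha0 : 0 ≤ a := Real.sqrt_nonneg _
  have hb0 : 0 ≤ b := Real.sqrt_nonneg _
  have ha2 : a^2 = Nq := Real.sq_sqrt hNq0
  have hb2 : b^2 = Ne := Real.sq_sqrt hNe0
  have hcross : e ⬝ᵥ (hess Lam xp)⁻¹ *ᵥ q = q ⬝ᵥ (hess Lam xp)⁻¹ *ᵥ e :=
    hsymdot _ hKpd.isHermitian e q
  have hCSqe : (q ⬝ᵥ (hess Lam xp)⁻¹ *ᵥ e)^2 ≤ Nq * Ne := psd_form_CS hKpd.posSemidef q e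
  have hqe_ab : q ⬝ᵥ (hess Lam xp)⁻¹ *ᵥ e ≤ a * b := by
    have hab : (a*b)^2 = Nq * Ne := by rw [mul_pow, ha2, hb2]
    exact arith_sq_le (by rw [hab]; exact hCSqe) (mul_nonneg ha0 hb0)
  have hexp : w ⬝ᵥ (hess Lam xp)⁻¹ *ᵥ w
      = Nq + 2*Δc*(q ⬝ᵥ (hess Lam xp)⁻¹ *ᵥ e) + Δc^2*Ne := by
    rw [hwdef, Matrix.mulVec_add, Matrix.mulVec_smul, dotProduct_add,
      add_dotProduct, add_dotProduct, dotProduct_smul,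
      smul_dotProduct, smul_dotProduct, dotProduct_smul, hcross]
    simp only [smul_eq_mul]
    ring
  have htri : r/(r+1) ≤ a + Δc * b := by
    have hsum0 : 0 ≤ a + Δc * b := by positivity
    have hsq : (r/(r+1))^2 ≤ (a + Δc*b)^2 := by
      rw [← hNw, hexp, ← ha2, ← hb2]
      exact arith_expand hqe_ab hΔc
    exact arith_sq_le hsq hsum0
  have haτ : a ≤ c * τ := by
    have h1' : a ≤ Real.sqrt (c^2 * τ^2) := Real.sqrt_le_sqrt hNqE
    have h2' : Real.sqrt (c^2*τ^2) = c*τ := by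
      rw [show c^2*τ^2 = (c*τ)^2 by ring, Real.sqrt_sq (mul_nonneg hc0 hτ0)]
    rw [h2'] at h1'; exact h1'
  -- dual norm comparison at y
  set Nye := e ⬝ᵥ (hess Lam y)⁻¹ *ᵥ e with hNyedef
  have hNye0 : 0 ≤ Nye := by simpa using hKypd.posSemidef.dotProduct_mulVec_nonneg e
  have hcmp : (1-τ)^2 * Ne ≤ Nye := by
    rcases eq_or_lt_of_le hNe0 with hz | hz
    · rw [← hz, mul_zero]; exact hNye0
    · have hvH : ((hess Lam xp)⁻¹ *ᵥ e) ⬝ᵥ hess Lam y *ᵥ ((hess Lam xp)⁻¹ *ᵥ e)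
          ≤ c^2 * Ne := by
        have h' := hquadcmp ((hess Lam xp)⁻¹ *ᵥ e)
        rw [hsandK e] at h'
        exact h'
      have hvHy0 : 0 ≤ ((hess Lam xp)⁻¹ *ᵥ e) ⬝ᵥ hess Lam y *ᵥ ((hess Lam xp)⁻¹ *ᵥ e) := by
        simpa using hHy.posSemidef.dotProduct_mulVec_nonneg ((hess Lam xp)⁻¹ *ᵥ e)
      have hid : ((hess Lam y)⁻¹ *ᵥ e) ⬝ᵥ hess Lam y *ᵥ ((hess Lam xp)⁻¹ *ᵥ e) = Ne := by
        rw [hsymdot (hess Lam y) hHy.isHermitian ((hess Lam y)⁻¹ *ᵥ e) ((hess Lam xp)⁻¹ *ᵥ e)]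
        have h1' : hess Lam y *ᵥ ((hess Lam y)⁻¹ *ᵥ e) = e := by
          rw [Matrix.mulVec_mulVec, hHyKy, Matrix.one_mulVec]
        rw [h1', dotProduct_comm]
      have hCSy := psd_form_CS hHy.posSemidef ((hess Lam y)⁻¹ *ᵥ e) ((hess Lam xp)⁻¹ *ᵥ e)
      rw [hid, hsandKy e, ← hNyedef] at hCSy
      have hcc : c^2 * (1-τ)^2 = 1 := by
        rw [hcdef]; field_simp
      have k1 : Ne^2 ≤ Nye * (c^2 * Ne) :=
        le_trans hCSy (mul_le_mul_of_nonneg_left hvH hNye0)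
      have k2 : Ne ≤ Nye * c^2 := by
        have k1' : Ne * Ne ≤ (Nye * c^2) * Ne := by
          calc Ne * Ne = Ne^2 := by ring
            _ ≤ Nye * (c^2 * Ne) := k1
            _ = (Nye * c^2) * Ne := by ring
        exact le_of_mul_le_mul_right k1' hz
      have k3 := mul_le_mul_of_nonneg_left k2 (sq_nonneg (1-τ))
      calc (1-τ)^2*Ne ≤ (1-τ)^2*(Nye*c^2) := k3
        _ = Nye * (c^2*(1-τ)^2) := by ring
        _ = Nye := by rw [hcc, mul_one]
  have hby : (1-τ) * b ≤ dualNorm Lam y e := by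
    have h1' : Real.sqrt ((1-τ)^2 * Ne) ≤ Real.sqrt Nye := Real.sqrt_le_sqrt hcmp
    have h2' : Real.sqrt ((1-τ)^2 * Ne) = (1-τ) * b := by
      rw [show (1-τ)^2 * Ne = ((1-τ)*b)^2 by rw [mul_pow, hb2],
        Real.sqrt_sq (mul_nonneg h1τ.le hb0)]
    rw [h2'] at h1'
    exact h1'
  -- final arithmetic
  have hcτ : (1-τ) * (c * τ) = τ := by rw [hcdef]; field_simp
  have hstep : (1-τ) * (r/(r+1)) - τ ≤ Δc * dualNorm Lam y e := by
    have h3 : r/(r+1) - a ≤ Δc * b := by linarith only [htri]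
    have h4 : (1-τ) * (r/(r+1) - a) ≤ (1-τ) * (Δc * b) :=
      mul_le_mul_of_nonneg_left h3 h1τ.le
    have h5 : (1-τ) * a ≤ τ := by
      calc (1-τ) * a ≤ (1-τ) * (c * τ) := mul_le_mul_of_nonneg_left haτ h1τ.le
        _ = τ := hcτ
    have h6 : Δc * ((1-τ) * b) ≤ Δc * dualNorm Lam y e :=
      mul_le_mul_of_nonneg_left hby hΔc
    linarith only [h4, h5, h6]
  have hρle : ρ ≤ (1-τ) * (r/(r+1)) - τ := by
    have hrsq : r^2 ≤ 1/16 := by nlinarith only [hr, hr0]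
    have hden : (0:ℝ) < 1 - r - 2*r^2 := by linarith only [hrsq, hr, hr0]
    have hr1 : (0:ℝ) < r + 1 := by linarith only [hr0]
    rw [hρ, div_le_iff₀ hden]
    have hfr : r/(r+1)*(r+1) = r := div_mul_cancel₀ r (ne_of_gt hr1)
    have e2 : ((1-τ) * (r/(r+1)) - τ) * (1 - r - 2*r^2)
        = (1-τ)*r*(1-2*r) - τ*((1+r)*(1-2*r)) := by
      linear_combination ((1-τ)*(1-2*r))*hfr
    rw [e2]
    have hτr : τ*(1-2*r) ≤ r^2 := by
      calc τ*(1-2*r) ≤ (r^2/(1-2*r))*(1-2*r) := mul_le_mul_of_nonneg_right h1 hr2.le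
        _ = r^2 := div_mul_cancel₀ _ (ne_of_gt hr2)
    have hfinal : (1-τ)*r*(1-2*r) - τ*((1+r)*(1-2*r)) - r*(1-3*r-2*r^2)
        = (1+2*r)*(r^2 - τ*(1-2*r)) := by ring
    have h8 : 0 ≤ (1+2*r)*(r^2 - τ*(1-2*r)) :=
      mul_nonneg (by linarith only [hr0]) (by linarith only [hτr])
    linarith only [hfinal.ge, hfinal.le, h8]
  linarith only [hρle, hstep]
end

section
/- Let Σ* := {v ∈ ℝ^U : Λ(v) is positive semidefinite}. Let e, t ∈ ℝ^U and let c, c* ∈ ℝ with c < c*. Suppose there are constants k₁, k₂, k₃ > 0 such that: (i) eᵀv ≥ k₁·‖v‖_∞ for every v ∈ Σ*; (ii) tr(Λ(w)·Λ(w)) ≥ k₂²·‖w‖² for every w ∈ ℝ^U; (iii) every eigenvalue of Λ(v) is at most k₃·‖v‖_∞ for every v ∈ Σ*. Suppose further that (t − c*·e)ᵀv ≥ 0 for every v ∈ Σ*, and that y ∈ ℝ^U satisfies Λ(y) positive definite and −g(y) = t − c·e. Then (c* − c)·k₁·k₂·‖e‖*_y ≤ k₃·L·‖e‖, where ‖·‖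 and ‖·‖_∞ denote the Euclidean and maximum norms on ℝ^U. -/
open Matrix

section AuxLemmas

variable {n : Type*} [Fintype n] [DecidableEq n]

lemma myTrace_nonneg {M : Matrix n n ℝ} (hM : M.PosSemidef) : 0 ≤ M.trace := by
  rw [Matrix.trace]
  apply Finset.sum_nonneg
  intro i _
  have := hM.dotProduct_mulVec_nonneg (Pi.single i 1)
  simpa [dotProduct, Matrix.mulVec, Pi.single_apply, Finset.sum_ite_eq] using this

open scoped MatrixOrder in
lemma myTrace_mul_nonneg {P Q : Matrix n n ℝ} (hP : P.PosSemidef) (hQ : Q.PosSemidef) :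
    0 ≤ (P * Q).trace := by
  obtain ⟨C, rfl⟩ := CStarAlgebra.nonneg_iff_eq_star_mul_self.mp (nonneg_iff_posSemidef.mpr hP)
  rw [mul_assoc, trace_mul_comm]
  exact myTrace_nonneg (hQ.mul_mul_conjTranspose_same C)

omit [DecidableEq n] in
lemma myConjQuad {P : Matrix n n ℝ} (hP : P.PosSemidef) {R : Matrix n n ℝ} (hR : R.IsHermitian)
    (u : n → ℝ) : 0 ≤ u ⬝ᵥ (R * P * R) *ᵥ u := by
  have := (hP.mul_mul_conjTranspose_same R).dotProduct_mulVec_nonneg u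
  rwa [hR.eq, star_trivial] at this

open scoped MatrixOrder in
/-- If `A` is PD and `m•1 - A ⪰ 0` then `A⁻¹ - m⁻¹•1 ⪰ 0`. -/
lemma myInvLower {A : Matrix n n ℝ} (hA : A.PosDef) {m : ℝ} (hm : 0 < m)
    (h : (m • (1 : Matrix n n ℝ) - A).PosSemidef) : (A⁻¹ - m⁻¹ • 1).PosSemidef := by
  set R := CFC.sqrt A with hRdef
  have hRR : R * R = A := CFC.sqrt_mul_sqrt_self A (nonneg_iff_posSemidef.mpr hA.posSemidef)
  have hRh : R.IsHermitian := (nonneg_iff_posSemidef.mp (CFC.sqrt_nonneg A)).1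
  have hRA : R * A = A * R := by rw [← hRR]; exact (mul_assoc R R R).symm
  have hAT : Aᵀ = A := by rw [← conjTranspose_eq_transpose_of_trivial, hA.1.eq]
  have key : R * (m • (1 : Matrix n n ℝ) - A) * R = m • A - A * A := by
    rw [mul_sub, sub_mul, mul_smul_comm, mul_one, smul_mul_assoc, hRR]
    congr 1
    calc R * A * R = A * (R * R) := by rw [hRA, mul_assoc]
    _ = A * A := by rw [hRR]
  refine PosSemidef.of_dotProduct_mulVec_nonneg ?_ ?_
  · exact (hA.inv.1).sub (by simp [Matrix.IsHermitian, conjTranspose_smul])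
  · intro x
    rw [star_trivial, sub_mulVec, dotProduct_sub, smul_mulVec, one_mulVec,
      dotProduct_smul, sub_nonneg, smul_eq_mul]
    set u := A⁻¹ *ᵥ x with hu
    have hx : A *ᵥ u = x := by
      rw [hu, mulVec_mulVec, Matrix.mul_nonsing_inv _ (isUnit_iff_ne_zero.mpr hA.det_pos.ne'),
        one_mulVec]
    have e1 : x ⬝ᵥ A⁻¹ *ᵥ x = u ⬝ᵥ A *ᵥ u := by
      rw [← hu]
      conv_lhs => rw [← hx]
      rw [dotProduct_comm, hx]
    have e2 : x ⬝ᵥ x = u ⬝ᵥ (A * A) *ᵥ u := by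
      conv_lhs => rw [← hx]
      conv_rhs => rw [← mulVec_mulVec, dotProduct_mulVec, ← mulVec_transpose, hAT]
    rw [e1, e2]
    have hq := myConjQuad h hRh u
    rw [key, sub_mulVec, dotProduct_sub, smul_mulVec, dotProduct_smul, smul_eq_mul] at hq
    rw [inv_mul_le_iff₀ hm]
    linarith

open scoped MatrixOrder in
/-- If `H` is PD and `H - α•1 ⪰ 0` then `α⁻¹•1 - H⁻¹ ⪰ 0`. -/
lemma myInvUpper {H : Matrix n n ℝ} (hH : H.PosDef) {α : ℝ} (hα : 0 < α)
    (h : (H - α • (1 : Matrix n n ℝ)).PosSemidef) :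
    (α⁻¹ • (1 : Matrix n n ℝ) - H⁻¹).PosSemidef := by
  set R := CFC.sqrt H with hRdef
  have hRR : R * R = H := CFC.sqrt_mul_sqrt_self H (nonneg_iff_posSemidef.mpr hH.posSemidef)
  have hRh : R.IsHermitian := (nonneg_iff_posSemidef.mp (CFC.sqrt_nonneg H)).1
  have hRA : R * H = H * R := by rw [← hRR]; exact (mul_assoc R R R).symm
  have hAT : Hᵀ = H := by rw [← conjTranspose_eq_transpose_of_trivial, hH.1.eq]
  have key : R * (H - α • (1 : Matrix n n ℝ)) * R = H * H - α • H := by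
    rw [mul_sub, sub_mul, mul_smul_comm, mul_one, smul_mul_assoc, hRR]
    congr 1
    calc R * H * R = H * (R * R) := by rw [hRA, mul_assoc]
    _ = H * H := by rw [hRR]
  refine PosSemidef.of_dotProduct_mulVec_nonneg ?_ ?_
  · exact (by simp [Matrix.IsHermitian, conjTranspose_smul] :
      ((α⁻¹ : ℝ) • (1 : Matrix n n ℝ)).IsHermitian).sub hH.inv.1
  · intro x
    rw [star_trivial, sub_mulVec, dotProduct_sub, smul_mulVec, one_mulVec,
      dotProduct_smul, sub_nonneg, smul_eq_mul]
    set u := H⁻¹ *ᵥ x with hu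
    have hx : H *ᵥ u = x := by
      rw [hu, mulVec_mulVec, Matrix.mul_nonsing_inv _ (isUnit_iff_ne_zero.mpr hH.det_pos.ne'),
        one_mulVec]
    have e1 : x ⬝ᵥ H⁻¹ *ᵥ x = u ⬝ᵥ H *ᵥ u := by
      rw [← hu]
      conv_lhs => rw [← hx]
      rw [dotProduct_comm, hx]
    have e2 : x ⬝ᵥ x = u ⬝ᵥ (H * H) *ᵥ u := by
      conv_lhs => rw [← hx]
      conv_rhs => rw [← mulVec_mulVec, dotProduct_mulVec, ← mulVec_transpose, hAT]
    rw [e1, e2]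
    have hq := myConjQuad h hRh u
    rw [key, sub_mulVec, dotProduct_sub, smul_mulVec, dotProduct_smul, smul_eq_mul] at hq
    rw [le_inv_mul_iff₀ hα]
    linarith

/-- A symmetric real matrix whose `mulVecLin` eigenvalues are all at most `m`
satisfies `m•1 - A ⪰ 0`. -/
lemma myEigBound {A : Matrix n n ℝ} (hA : A.IsHermitian) {m : ℝ}
    (h : ∀ μ : ℝ, Module.End.HasEigenvalue A.mulVecLin μ → μ ≤ m) :
    (m • (1 : Matrix n n ℝ) - A).PosSemidef := by
  have hB : (m • (1 : Matrix n n ℝ) - A).IsHermitian :=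
    (by simp [Matrix.IsHermitian, conjTranspose_smul] :
      ((m : ℝ) • (1 : Matrix n n ℝ)).IsHermitian).sub hA
  rw [hB.posSemidef_iff_eigenvalues_nonneg]
  intro i
  show 0 ≤ hB.eigenvalues i
  set μ := hB.eigenvalues i with hμ
  have hv := hB.mulVec_eigenvectorBasis i
  set v : n → ℝ := ⇑(hB.eigenvectorBasis i) with hvdef
  have hvne : v ≠ 0 := by
    intro hzero
    have : hB.eigenvectorBasis i = 0 := by
      ext j; exact congrFun hzero j
    exact hB.eigenvectorBasis.toBasis.ne_zero i (by simpa using this)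
  have hAv : A *ᵥ v = (m - μ) • v := by
    have h2 : m • v - A *ᵥ v = μ • v := by
      have := hv
      rwa [sub_mulVec, smul_mulVec, one_mulVec] at this
    have : A *ᵥ v = m • v - μ • v := by rw [← h2]; abel
    rw [this, sub_smul]
  have heig : Module.End.HasEigenvalue A.mulVecLin (m - μ) := by
    apply Module.End.hasEigenvalue_of_hasEigenvector (x := v)
    refine ⟨Module.End.mem_eigenspace_iff.mpr ?_, hvne⟩
    simpa [mulVecLin_apply] using hAv
  linarith [h _ heig]

end AuxLemmas

section Expand

lemma myExpand {U L : ℕ} (Lam : (Fin U → ℝ) →ₗ[ℝ] Matrix (Fin L) (Fin L) ℝ) (v : Fin U → ℝ) :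
    Lam v = ∑ i, v i • Lam (Pi.single i 1) := by
  conv_lhs => rw [← Finset.univ_sum_single v]
  rw [map_sum]
  refine Finset.sum_congr rfl fun i _ => ?_
  rw [← _root_.map_smul]
  congr 1
  ext j
  by_cases h : j = i <;> simp [Pi.single_apply, h]

lemma myTraceLin {U L : ℕ} (Lam : (Fin U → ℝ) →ₗ[ℝ] Matrix (Fin L) (Fin L) ℝ)
    (S : Matrix (Fin L) (Fin L) ℝ) (v : Fin U → ℝ) :
    (S * Lam v).trace = ∑ i, v i * (S * Lam (Pi.single i 1)).trace := by
  conv_lhs => rw [myExpand Lam v]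
  rw [Finset.mul_sum, trace_sum]
  refine Finset.sum_congr rfl fun i _ => ?_
  rw [mul_smul_comm, trace_smul, smul_eq_mul]

lemma myHessQuad {U L : ℕ} (Lam : (Fin U → ℝ) →ₗ[ℝ] Matrix (Fin L) (Fin L) ℝ)
    (y v : Fin U → ℝ) :
    v ⬝ᵥ (hess Lam y) *ᵥ v
      = ((Lam y)⁻¹ * Lam v * (Lam y)⁻¹ * Lam v).trace := by
  set S := (Lam y)⁻¹ with hS
  have inner : ∀ j : Fin U, ((S * Lam v * S) * Lam (Pi.single j 1)).trace
      = ∑ i, v i * ((S * Lam (Pi.single j 1) * S) * Lam (Pi.single i 1)).trace := by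
    intro j
    rw [mul_assoc (S * Lam v) S _, trace_mul_comm, ← mul_assoc]
    exact myTraceLin _ _ v
  have hrhs : ((Lam y)⁻¹ * Lam v * (Lam y)⁻¹ * Lam v).trace
      = ∑ j, v j * ∑ i, v i * ((S * Lam (Pi.single j 1) * S) * Lam (Pi.single i 1)).trace := by
    rw [← hS]
    rw [myTraceLin Lam (S * Lam v * S) v]
    exact Finset.sum_congr rfl fun j _ => by rw [inner j]
  rw [hrhs]
  simp only [hess, dotProduct, mulVec, of_apply, Finset.mul_sum, ← hS]
  refine Finset.sum_congr rfl fun i _ => Finset.sum_congr rfl fun j _ => ?_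
  ring

lemma myHessHerm {U L : ℕ} (Lam : (Fin U → ℝ) →ₗ[ℝ] Matrix (Fin L) (Fin L) ℝ)
    (hsym : ∀ v, (Lam v).IsSymm) (y : Fin U → ℝ) (hy : (Lam y).PosDef) :
    (hess Lam y).IsHermitian := by
  have hST : ((Lam y)⁻¹)ᵀ = (Lam y)⁻¹ := by
    rw [← conjTranspose_eq_transpose_of_trivial, hy.inv.1.eq]
  apply Matrix.IsHermitian.ext
  intro i j
  rw [star_trivial]
  show ((Lam y)⁻¹ * Lam (Pi.single j 1) * (Lam y)⁻¹ * Lam (Pi.single i 1)).trace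
    = ((Lam y)⁻¹ * Lam (Pi.single i 1) * (Lam y)⁻¹ * Lam (Pi.single j 1)).trace
  conv_lhs => rw [← trace_transpose]
  simp only [transpose_mul, (hsym _).eq, hST, ← mul_assoc]
  rw [trace_mul_comm]
  simp only [← mul_assoc]

end Expand

/-- distance to optimality. Here `‖v‖` (the pi norm on `Fin U → ℝ`)
is the maximum norm, and `Real.sqrt (v ⬝ᵥ v)` is the Euclidean norm. -/
theorem stmt15 {U L : ℕ} (hU : 0 < U) (hL : 0 < L)
    (Lam : (Fin U → ℝ) →ₗ[ℝ] Matrix (Fin L) (Fin L) ℝ)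
    (hinj : Function.Injective Lam) (hsym : ∀ v, (Lam v).IsSymm)
    (e t : Fin U → ℝ) (c cstar : ℝ) (hcc : c < cstar)
    (k₁ k₂ k₃ : ℝ) (hk₁ : 0 < k₁) (hk₂ : 0 < k₂) (hk₃ : 0 < k₃)
    (h1 : ∀ v : Fin U → ℝ, (Lam v).PosSemidef → k₁ * ‖v‖ ≤ e ⬝ᵥ v)
    (h2 : ∀ w : Fin U → ℝ, k₂ ^ 2 * (w ⬝ᵥ w) ≤ (Lam w * Lam w).trace)
    (h3 : ∀ v : Fin U → ℝ, (Lam v).PosSemidef →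
      ∀ μ : ℝ, Module.End.HasEigenvalue (Matrix.mulVecLin (Lam v)) μ → μ ≤ k₃ * ‖v‖)
    (hb : ∀ v : Fin U → ℝ, (Lam v).PosSemidef → 0 ≤ (t - cstar • e) ⬝ᵥ v)
    (y : Fin U → ℝ) (hy : (Lam y).PosDef) (hgy : -grad Lam y = t - c • e) :
    (cstar - c) * k₁ * k₂ * dualNorm Lam y e ≤ k₃ * L * Real.sqrt (e ⬝ᵥ e) := by
  classical
  have hy0 : y ≠ 0 := by
    intro h0
    obtain ⟨i0⟩ : Nonempty (Fin L) := ⟨⟨0, hL⟩⟩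
    have hx : (Pi.single i0 1 : Fin L → ℝ) ≠ 0 := by
      intro hz
      have := congrFun hz i0
      simp at this
    have := hy.dotProduct_mulVec_pos hx
    rw [h0, map_zero] at this
    simp at this
  have hynorm : 0 < ‖y‖ := norm_pos_iff.mpr hy0
  set m := k₃ * ‖y‖ with hmdef
  have hm0 : 0 < m := mul_pos hk₃ hynorm
  have hmA : (m • (1 : Matrix (Fin L) (Fin L) ℝ) - Lam y).PosSemidef :=
    myEigBound hy.1 (fun μ hμ => h3 y hy.posSemidef μ hμ)
  have hSm : ((Lam y)⁻¹ - m⁻¹ • 1).PosSemidef := myInvLower hy hm0 hmA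
  have hΛh : ∀ w, (Lam w).IsHermitian := fun w => by
    rw [Matrix.IsHermitian, conjTranspose_eq_transpose_of_trivial]; exact hsym w
  set α := k₂ ^ 2 / m ^ 2 with hαdef
  have hα0 : 0 < α := by positivity
  -- lower bound on Hessian quadratic form
  have hHlow : ∀ w : Fin U → ℝ, α * (w ⬝ᵥ w) ≤ w ⬝ᵥ (hess Lam y) *ᵥ w := by
    intro w
    rw [myHessQuad]
    set S := (Lam y)⁻¹ with hS
    set B := Lam w with hB
    have hBSB : (B * S * B).PosSemidef := by
      have := hy.inv.posSemidef.conjTranspose_mul_mul_same B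
      rwa [(hΛh w).eq] at this
    have hBB : (B * B).PosSemidef := by
      have := Matrix.posSemidef_conjTranspose_mul_self B
      rwa [(hΛh w).eq] at this
    have t1 : 0 ≤ ((S - m⁻¹ • 1) * (B * S * B)).trace := myTrace_mul_nonneg hSm hBSB
    have t2 : 0 ≤ ((S - m⁻¹ • 1) * (B * B)).trace := myTrace_mul_nonneg hSm hBB
    rw [sub_mul, trace_sub, smul_mul_assoc, trace_smul, smul_eq_mul, one_mul] at t1 t2
    have a1 : (S * (B * S * B)).trace = (S * B * S * B).trace := by
      rw [← mul_assoc, ← mul_assoc]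
    have a2 : (B * S * B).trace = (S * (B * B)).trace := by
      rw [trace_mul_comm, ← mul_assoc, trace_mul_comm]
    rw [a1, a2] at t1
    have h2w := h2 w
    have hww : 0 ≤ w ⬝ᵥ w := Finset.sum_nonneg fun i _ => mul_self_nonneg _
    have hmi : 0 < m⁻¹ := inv_pos.mpr hm0
    have hαeq : α = m⁻¹ * m⁻¹ * k₂ ^ 2 := by
      rw [hαdef]
      ring
    calc α * (w ⬝ᵥ w) = m⁻¹ * (m⁻¹ * (k₂ ^ 2 * (w ⬝ᵥ w))) := by rw [hαeq]; ring
    _ ≤ m⁻¹ * (m⁻¹ * (B * B).trace) := by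
        apply mul_le_mul_of_nonneg_left _ hmi.le
        exact mul_le_mul_of_nonneg_left h2w hmi.le
    _ ≤ m⁻¹ * (S * (B * B)).trace := by
        apply mul_le_mul_of_nonneg_left _ hmi.le
        linarith
    _ ≤ (S * B * S * B).trace := by linarith
  -- Hessian is positive definite
  have hHh : (hess Lam y).IsHermitian := myHessHerm Lam hsym y hy
  have hHpd : (hess Lam y).PosDef := by
    refine PosDef.of_dotProduct_mulVec_pos hHh fun x hx => ?_
    rw [star_trivial]
    have hxx : 0 < x ⬝ᵥ x := by
      rcases lt_or_eq_of_le (Finset.sum_nonneg fun i _ => mul_self_nonneg (x i) :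
        (0:ℝ) ≤ x ⬝ᵥ x) with h | h
      · exact h
      · exact absurd (dotProduct_self_eq_zero.mp h.symm) hx
    calc (0:ℝ) < α * (x ⬝ᵥ x) := mul_pos hα0 hxx
    _ ≤ x ⬝ᵥ (hess Lam y) *ᵥ x := hHlow x
  have hHsub : ((hess Lam y) - α • 1).PosSemidef := by
    refine PosSemidef.of_dotProduct_mulVec_nonneg (hHh.sub (by simp [Matrix.IsHermitian, conjTranspose_smul])) fun x => ?_
    rw [star_trivial, sub_mulVec, dotProduct_sub, smul_mulVec, one_mulVec,
      dotProduct_smul, smul_eq_mul, sub_nonneg]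
    exact hHlow x
  have hHinv := myInvUpper hHpd hα0 hHsub
  have hdual : e ⬝ᵥ (hess Lam y)⁻¹ *ᵥ e ≤ α⁻¹ * (e ⬝ᵥ e) := by
    have := hHinv.dotProduct_mulVec_nonneg e
    rwa [star_trivial, sub_mulVec, dotProduct_sub, smul_mulVec, one_mulVec,
      dotProduct_smul, smul_eq_mul, sub_nonneg] at this
  have hee : 0 ≤ e ⬝ᵥ e := Finset.sum_nonneg fun i _ => mul_self_nonneg _
  have hαinv : α⁻¹ = (m / k₂) ^ 2 := by
    rw [hαdef]
    field_simp
  have hdn : dualNorm Lam y e ≤ (m / k₂) * Real.sqrt (e ⬝ᵥ e) := by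
    rw [dualNorm]
    calc Real.sqrt (e ⬝ᵥ (hess Lam y)⁻¹.mulVec e) ≤ Real.sqrt (α⁻¹ * (e ⬝ᵥ e)) :=
      Real.sqrt_le_sqrt hdual
    _ = (m / k₂) * Real.sqrt (e ⬝ᵥ e) := by
        rw [hαinv, Real.sqrt_mul (sq_nonneg _), Real.sqrt_sq (by positivity)]
  -- the gradient equation
  have hSA : (Lam y)⁻¹ * Lam y = 1 :=
    Matrix.nonsing_inv_mul (Lam y) (isUnit_iff_ne_zero.mpr hy.det_pos.ne')
  have htr : ∀ i, ((Lam y)⁻¹ * Lam (Pi.single i 1)).trace = (t - c • e) i := by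
    intro i
    have := congrFun hgy i
    simpa [grad] using this
  have hLy : (t - c • e) ⬝ᵥ y = (L : ℝ) := by
    have hh := myTraceLin Lam (Lam y)⁻¹ y
    rw [hSA, trace_one] at hh
    simp only [htr] at hh
    rw [dotProduct_comm, dotProduct]
    simp only [Fintype.card_fin] at hh
    rw [← hh]
  have hby : 0 ≤ (t - cstar • e) ⬝ᵥ y := hb y hy.posSemidef
  have hcy : (cstar - c) * (e ⬝ᵥ y) ≤ (L : ℝ) := by
    rw [sub_dotProduct, smul_dotProduct, smul_eq_mul] at hLy hby
    nlinarith
  have hey : k₁ * ‖y‖ ≤ e ⬝ᵥ y := h1 y hy.posSemidef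
  have hse : 0 ≤ Real.sqrt (e ⬝ᵥ e) := Real.sqrt_nonneg _
  have hcc' : (0:ℝ) ≤ cstar - c := by linarith
  calc (cstar - c) * k₁ * k₂ * dualNorm Lam y e
      ≤ (cstar - c) * k₁ * k₂ * ((m / k₂) * Real.sqrt (e ⬝ᵥ e)) := by
        apply mul_le_mul_of_nonneg_left hdn
        positivity
    _ = (cstar - c) * (k₁ * ‖y‖) * k₃ * Real.sqrt (e ⬝ᵥ e) := by
        rw [hmdef]
        field_simp
    _ ≤ (cstar - c) * (e ⬝ᵥ y) * k₃ * Real.sqrt (e ⬝ᵥ e) := by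
        apply mul_le_mul_of_nonneg_right _ hse
        apply mul_le_mul_of_nonneg_right _ hk₃.le
        exact mul_le_mul_of_nonneg_left hey hcc'
    _ ≤ (L : ℝ) * k₃ * Real.sqrt (e ⬝ᵥ e) := by
        apply mul_le_mul_of_nonneg_right _ hse
        apply mul_le_mul_of_nonneg_right _ hk₃.le
        exact hcy
    _ = k₃ * L * Real.sqrt (e ⬝ᵥ e) := by ring
end

section
/- Let 0 < r ≤ 1/4, define ρ_r := r·(1 − 3r − 2r²)/(1 − r − 2r²), and let Σ* := {v ∈ ℝ^U : Λ(v) is positive semidefinite}. Let e, t ∈ ℝ^U and let c, c₊, c* ∈ ℝ with c < c₊ and c < c*. Suppose: Λ(x₊) and Λ(y) are positive definite; −g(y) = t − c·e; ‖x₊ − y‖_{x₊} ≤ r²/(1 − 2r); ‖x₊ − H(x₊)⁻¹·(t − c₊·e)‖_{x₊} = r/(r + 1); there are constants k₁, k₂, k₃ > 0 such that eᵀv ≥ k₁·‖v‖_∞ for every v ∈ Σ*, tr(Λ(w)·Λ(w)) ≥ k₂²·‖w‖² for every w ∈ ℝ^U, and every eigenvalue of Λ(v) is at most k₃·‖v‖_∞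 for every v ∈ Σ*; and (t − c*·e)ᵀv ≥ 0 for every v ∈ Σ*. Then (c₊ − c)·k₃·L·‖e‖ ≥ ρ_r·k₁·k₂·(c* − c); that is, the per-iteration improvement satisfies (c₊ − c)/(c* − c) ≥ ρ_r·C with C = k₁k₂/(k₃·L·‖e‖). -/
open Matrix

namespace Stmt16Aux

variable {n : Type*} [Fintype n] [DecidableEq n]

/-- squared Frobenius norm -/
noncomputable def fro2 (M : Matrix n n ℝ) : ℝ := ∑ i, ∑ j, M i j ^ 2

noncomputable def fro (M : Matrix n n ℝ) : ℝ := Real.sqrt (fro2 M)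

lemma fro2_nonneg (M : Matrix n n ℝ) : 0 ≤ fro2 M := by
  apply Finset.sum_nonneg; intro i _; apply Finset.sum_nonneg; intro j _; positivity

lemma fro_nonneg (M : Matrix n n ℝ) : 0 ≤ fro M := Real.sqrt_nonneg _

lemma fro_sq (M : Matrix n n ℝ) : fro M ^ 2 = fro2 M := Real.sq_sqrt (fro2_nonneg M)

lemma sum_flip (f : n → n → ℝ) : ∑ i, ∑ j, f i j = ∑ i, ∑ j, f j i := Finset.sum_comm

lemma trace_transpose_mul (M N : Matrix n n ℝ) :
    (Mᵀ * N).trace = ∑ i, ∑ j, M j i * N j i := by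
  simp [Matrix.trace, Matrix.mul_apply, Matrix.diag, Matrix.transpose_apply]

lemma trace_mul_self_eq_fro2 (M : Matrix n n ℝ) (hM : Mᵀ = M) :
    (M * M).trace = fro2 M := by
  have : (M * M).trace = (Mᵀ * M).trace := by rw [hM]
  rw [this, trace_transpose_mul, fro2, sum_flip (fun i j => M i j ^ 2)]
  simp [sq]

lemma trace_mul_le_fro_mul_fro (M N : Matrix n n ℝ) (hM : Mᵀ = M) :
    (M * N).trace ≤ fro M * fro N := by
  have h0 : (M * N).trace = (Mᵀ * N).trace := by rw [hM]
  rw [h0, trace_transpose_mul]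
  calc ∑ i, ∑ j, M j i * N j i
      ≤ Real.sqrt (∑ i, ∑ j, M j i ^ 2) * Real.sqrt (∑ i, ∑ j, N j i ^ 2) := by
        rw [← Finset.sum_product', ← Finset.sum_product', ← Finset.sum_product']
        exact Real.sum_mul_le_sqrt_mul_sqrt _ _ _
    _ = fro M * fro N := by
        rw [fro, fro, fro2, fro2, sum_flip (fun i j => M i j ^ 2), sum_flip (fun i j => N i j ^ 2)]

lemma dot_self_nonneg (v : n → ℝ) : 0 ≤ v ⬝ᵥ v := by
  apply Finset.sum_nonneg; intro i _; exact mul_self_nonneg _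

lemma dot_le_sqrt_mul_sqrt (v w : n → ℝ) :
    v ⬝ᵥ w ≤ Real.sqrt (v ⬝ᵥ v) * Real.sqrt (w ⬝ᵥ w) := by
  have h := Real.sum_mul_le_sqrt_mul_sqrt Finset.univ v w
  simpa [dotProduct, sq] using h

lemma mulVec_dot_le (M : Matrix n n ℝ) (v : n → ℝ) :
    (M *ᵥ v) ⬝ᵥ (M *ᵥ v) ≤ fro2 M * (v ⬝ᵥ v) := by
  rw [fro2, Finset.sum_mul]
  apply Finset.sum_le_sum
  intro i _
  have := Finset.sum_mul_sq_le_sq_mul_sq Finset.univ (fun j => M i j) v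
  calc (M *ᵥ v) i * (M *ᵥ v) i = (∑ j, M i j * v j) ^ 2 := by
        simp [Matrix.mulVec, dotProduct, sq]
    _ ≤ (∑ j, M i j ^ 2) * ∑ j, v j ^ 2 := this
    _ = (∑ j, M i j ^ 2) * (v ⬝ᵥ v) := by simp [dotProduct, sq]

lemma fro2_mul_left_le (P M : Matrix n n ℝ) (c : ℝ)
    (h : ∀ v : n → ℝ, (P *ᵥ v) ⬝ᵥ (P *ᵥ v) ≤ c * (v ⬝ᵥ v)) :
    fro2 (P * M) ≤ c * fro2 M := by
  have key : ∀ j, ∑ i, (P * M) i j ^ 2 ≤ c * ∑ i, M i j ^ 2 := by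
    intro j
    have := h (fun k => M k j)
    simpa [dotProduct, Matrix.mulVec, Matrix.mul_apply, sq] using this
  calc fro2 (P * M) = ∑ j, ∑ i, (P * M) i j ^ 2 := sum_flip _
    _ ≤ ∑ j, c * ∑ i, M i j ^ 2 := Finset.sum_le_sum fun j _ => key j
    _ = c * fro2 M := by rw [← Finset.mul_sum, fro2, sum_flip (fun i j => M i j ^ 2)]

lemma fro2_transpose (M : Matrix n n ℝ) : fro2 Mᵀ = fro2 M := by
  rw [fro2, sum_flip (fun i j => Mᵀ i j ^ 2)]; rfl

lemma fro2_mul_right_le (M P : Matrix n n ℝ) (c : ℝ) (hP : Pᵀ = P)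
    (h : ∀ v : n → ℝ, (P *ᵥ v) ⬝ᵥ (P *ᵥ v) ≤ c * (v ⬝ᵥ v)) :
    fro2 (M * P) ≤ c * fro2 M := by
  have : fro2 (M * P) = fro2 (P * Mᵀ) := by
    rw [← fro2_transpose (M * P), Matrix.transpose_mul, hP]
  rw [this, ← fro2_transpose M]
  exact fro2_mul_left_le P Mᵀ c h

noncomputable def finner (M N : Matrix n n ℝ) : ℝ := ∑ i, ∑ j, M i j * N i j

lemma finner_le (M N : Matrix n n ℝ) : finner M N ≤ fro M * fro N := by
  rw [finner, ← Finset.sum_product']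
  calc ∑ p : n × n, M p.1 p.2 * N p.1 p.2
      ≤ Real.sqrt (∑ p : n × n, M p.1 p.2 ^ 2) * Real.sqrt (∑ p : n × n, N p.1 p.2 ^ 2) :=
        Real.sum_mul_le_sqrt_mul_sqrt _ _ _
    _ = fro M * fro N := by
        rw [fro, fro, fro2, fro2, ← Finset.sum_product', ← Finset.sum_product']
        rfl

lemma fro_add_le (M N : Matrix n n ℝ) : fro (M + N) ≤ fro M + fro N := by
  have h2 : fro2 (M + N) ≤ (fro M + fro N) ^ 2 := by
    have : fro2 (M + N) = fro2 M + 2 * finner M N + fro2 N := by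
      simp only [fro2, finner, Matrix.add_apply, Finset.mul_sum, ← Finset.sum_add_distrib]
      apply Finset.sum_congr rfl; intro i _
      apply Finset.sum_congr rfl; intro j _; ring
    rw [this]
    have := finner_le M N
    have h1 := fro_sq M; have h2 := fro_sq N
    nlinarith [fro_nonneg M, fro_nonneg N]
  calc fro (M + N) = Real.sqrt (fro2 (M + N)) := rfl
    _ ≤ Real.sqrt ((fro M + fro N) ^ 2) := Real.sqrt_le_sqrt h2
    _ = fro M + fro N := Real.sqrt_sq (by have := fro_nonneg M; have := fro_nonneg N; linarith)

lemma fro_neg (M : Matrix n n ℝ) : fro (-M) = fro M := by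
  simp [fro, fro2]

lemma fro_smul (c : ℝ) (M : Matrix n n ℝ) : fro (c • M) = |c| * fro M := by
  have : fro2 (c • M) = c ^ 2 * fro2 M := by
    simp [fro2, Finset.mul_sum]
    apply Finset.sum_congr rfl; intro i _
    apply Finset.sum_congr rfl; intro j _; ring
  rw [fro, this, Real.sqrt_mul (sq_nonneg c), Real.sqrt_sq_eq_abs]; rfl

lemma dot_sym_mulVec (M : Matrix n n ℝ) (hM : Mᵀ = M) (v z : n → ℝ) :
    v ⬝ᵥ (M *ᵥ z) = (M *ᵥ v) ⬝ᵥ z := by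
  rw [Matrix.dotProduct_mulVec, ← Matrix.mulVec_transpose, hM]

lemma inv_quadratic_bound (S : Matrix n n ℝ) (hdet : IsUnit S.det) (a : ℝ) (ha : 0 < a)
    (hlow : ∀ v : n → ℝ, a * (v ⬝ᵥ v) ≤ v ⬝ᵥ (S *ᵥ v)) (u : n → ℝ) :
    (S⁻¹ *ᵥ u) ⬝ᵥ (S⁻¹ *ᵥ u) ≤ (1 / a) ^ 2 * (u ⬝ᵥ u) := by
  set w := S⁻¹ *ᵥ u with hw
  have hSw : S *ᵥ w = u := by
    rw [hw, Matrix.mulVec_mulVec, Matrix.mul_nonsing_inv _ hdet, Matrix.one_mulVec]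
  have h1 : a * (w ⬝ᵥ w) ≤ w ⬝ᵥ u := by rw [← hSw]; exact hlow w
  have h2 : w ⬝ᵥ u ≤ Real.sqrt (w ⬝ᵥ w) * Real.sqrt (u ⬝ᵥ u) := dot_le_sqrt_mul_sqrt w u
  set x := Real.sqrt (w ⬝ᵥ w) with hx
  set y := Real.sqrt (u ⬝ᵥ u) with hy
  have hx2 : w ⬝ᵥ w = x ^ 2 := (Real.sq_sqrt (dot_self_nonneg w)).symm
  have hy2 : u ⬝ᵥ u = y ^ 2 := (Real.sq_sqrt (dot_self_nonneg u)).symm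
  have hxn : 0 ≤ x := Real.sqrt_nonneg _
  have hyn : 0 ≤ y := Real.sqrt_nonneg _
  rw [hx2, hy2]
  have key : a * x ^ 2 ≤ x * y := by rw [← hx2]; exact le_trans h1 h2
  rcases eq_or_lt_of_le hxn with h | h
  · rw [← h]; simp; positivity
  · have : a * x ≤ y := by
      have := mul_le_mul_of_nonneg_left key (le_of_lt (inv_pos.mpr h))
      calc a * x = x⁻¹ * (a * x ^ 2) := by field_simp
        _ ≤ x⁻¹ * (x * y) := by apply mul_le_mul_of_nonneg_left key (by positivity)
        _ = y := by field_simp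
    calc x ^ 2 = (1/a)^2 * (a*x)^2 := by field_simp
      _ ≤ (1/a)^2 * y^2 := by
          apply mul_le_mul_of_nonneg_left _ (by positivity)
          apply pow_le_pow_left₀ (by positivity) this

lemma rayleigh_bound {L : ℕ} (A : Matrix (Fin L) (Fin L) ℝ) (hA : A.IsHermitian) (c : ℝ)
    (h : ∀ μ : ℝ, Module.End.HasEigenvalue A.mulVecLin μ → μ ≤ c) (v : Fin L → ℝ) :
    v ⬝ᵥ (A *ᵥ v) ≤ c * (v ⬝ᵥ v) := by
  classical
  have heig : ∀ j, hA.eigenvalues j ≤ c := by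
    intro j
    apply h
    apply Module.End.hasEigenvalue_of_hasEigenvector (x := ⇑(hA.eigenvectorBasis j))
    constructor
    · rw [Module.End.mem_eigenspace_iff]
      simpa [Matrix.mulVecLin] using hA.mulVec_eigenvectorBasis j
    · intro hzero
      apply hA.eigenvectorBasis.orthonormal.ne_zero j
      ext i
      exact congrFun hzero i
  have hspec := hA.spectral_theorem
  set Uu := hA.eigenvectorUnitary with hUu
  set Um : Matrix (Fin L) (Fin L) ℝ := (Uu : Matrix (Fin L) (Fin L) ℝ) with hUm
  have hU1 : Um * star Um = 1 := (Matrix.mem_unitaryGroup_iff).mp Uu.2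
  have hst : star Um = Umᵀ := by
    rw [Matrix.star_eq_conjTranspose, Matrix.conjTranspose_eq_transpose_of_trivial]
  set w := Umᵀ *ᵥ v with hw
  have hform : ∀ D : Matrix (Fin L) (Fin L) ℝ,
      v ⬝ᵥ ((Um * D * star Um) *ᵥ v) = w ⬝ᵥ (D *ᵥ w) := by
    intro D
    have hw' : w = v ᵥ* Um := by rw [hw, Matrix.mulVec_transpose]
    rw [← Matrix.mulVec_mulVec, ← Matrix.mulVec_mulVec, Matrix.dotProduct_mulVec, hst,
      Matrix.mulVec_transpose, ← hw']
  have hAv : v ⬝ᵥ (A *ᵥ v) = w ⬝ᵥ ((diagonal (RCLike.ofReal ∘ hA.eigenvalues)) *ᵥ w) := by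
    conv_lhs => rw [hspec]
    exact hform _
  have hvv : v ⬝ᵥ v = w ⬝ᵥ w := by
    have := hform 1
    rw [mul_one, hU1] at this
    simpa using this
  rw [hAv, hvv]
  have : ∀ j, (RCLike.ofReal ∘ hA.eigenvalues) j = hA.eigenvalues j := fun j => rfl
  calc w ⬝ᵥ ((diagonal (RCLike.ofReal ∘ hA.eigenvalues)) *ᵥ w)
      = ∑ j, hA.eigenvalues j * (w j * w j) := by
        simp [dotProduct, Matrix.mulVec_diagonal, this]
        apply Finset.sum_congr rfl; intro j _; ring
    _ ≤ ∑ j, c * (w j * w j) :=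
        Finset.sum_le_sum fun j _ => mul_le_mul_of_nonneg_right (heig j) (mul_self_nonneg _)
    _ = c * (w ⬝ᵥ w) := by rw [← Finset.mul_sum]; rfl

lemma exists_sqrt_symm {L : ℕ} (A : Matrix (Fin L) (Fin L) ℝ) (hA : A.PosSemidef) :
    ∃ Q : Matrix (Fin L) (Fin L) ℝ, Q * Q = A ∧ Qᵀ = Q := by
  open scoped MatrixOrder in
  exact ⟨CFC.sqrt A, CFC.sqrt_mul_sqrt_self A hA.nonneg, by
    have := (CFC.sqrt_nonneg A).posSemidef.1
    rwa [Matrix.IsHermitian, Matrix.conjTranspose_eq_transpose_of_trivial] at this⟩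

end Stmt16Aux
open Stmt16Aux in
set_option maxHeartbeats 1000000 in
/-- linear convergence: the per-iteration improvement satisfies
`(c₊ − c)/(c* − c) ≥ ρ_r·C` with `C = k₁k₂/(k₃·L·‖e‖)`. Here `‖v‖` (the pi norm
on `Fin U → ℝ`) is the maximum norm and `Real.sqrt (e ⬝ᵥ e)` the Euclidean norm. -/
theorem stmt16 {U L : ℕ} (hU : 0 < U) (hL : 0 < L)
    (Lam : (Fin U → ℝ) →ₗ[ℝ] Matrix (Fin L) (Fin L) ℝ)
    (hinj : Function.Injective Lam) (hsym : ∀ v, (Lam v).IsSymm)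
    (r : ℝ) (hr0 : 0 < r) (hr : r ≤ 1 / 4)
    (ρ : ℝ) (hρ : ρ = r * (1 - 3 * r - 2 * r ^ 2) / (1 - r - 2 * r ^ 2))
    (e t : Fin U → ℝ) (c cp cstar : ℝ) (hccp : c < cp) (hcc : c < cstar)
    (xp y : Fin U → ℝ) (hxp : (Lam xp).PosDef) (hy : (Lam y).PosDef)
    (hgy : -grad Lam y = t - c • e)
    (h1 : locNorm Lam xp (xp - y) ≤ r ^ 2 / (1 - 2 * r))
    (h2 : locNorm Lam xp (xp - (hess Lam xp)⁻¹.mulVec (t - cp • e)) = r / (r + 1))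
    (k₁ k₂ k₃ : ℝ) (hk₁ : 0 < k₁) (hk₂ : 0 < k₂) (hk₃ : 0 < k₃)
    (hc1 : ∀ v : Fin U → ℝ, (Lam v).PosSemidef → k₁ * ‖v‖ ≤ e ⬝ᵥ v)
    (hc2 : ∀ w : Fin U → ℝ, k₂ ^ 2 * (w ⬝ᵥ w) ≤ (Lam w * Lam w).trace)
    (hc3 : ∀ v : Fin U → ℝ, (Lam v).PosSemidef →
      ∀ μ : ℝ, Module.End.HasEigenvalue (Matrix.mulVecLin (Lam v)) μ → μ ≤ k₃ * ‖v‖)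
    (hb : ∀ v : Fin U → ℝ, (Lam v).PosSemidef → 0 ≤ (t - cstar • e) ⬝ᵥ v) :
    ρ * k₁ * k₂ * (cstar - c) ≤ (cp - c) * k₃ * L * Real.sqrt (e ⬝ᵥ e) := by
  classical
  have hFinL : Nonempty (Fin L) := ⟨⟨0, hL⟩⟩
  -- ## basic matrix setup
  have hAdet : IsUnit (Lam xp).det := hxp.det_pos.ne'.isUnit
  have hBdet : IsUnit (Lam y).det := hy.det_pos.ne'.isUnit
  have hAt : (Lam xp)ᵀ = Lam xp := hsym xp
  have hAipd : ((Lam xp)⁻¹).PosDef := hxp.inv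
  have hQpsd := hAipd.posSemidef
  obtain ⟨Q, hQ2, hQt⟩ := exists_sqrt_symm _ hQpsd
  have hQdet : IsUnit Q.det := by
    have hd : Q.det * Q.det = ((Lam xp)⁻¹).det := by rw [← Matrix.det_mul, hQ2]
    have h2 : ((Lam xp)⁻¹).det ≠ 0 := (hAipd.det_pos).ne'
    have : Q.det ≠ 0 := by intro h; rw [h, mul_zero] at hd; exact h2 hd.symm
    exact this.isUnit
  have hQQi : Q * Q⁻¹ = 1 := Matrix.mul_nonsing_inv _ hQdet
  have hQiQ : Q⁻¹ * Q = 1 := Matrix.nonsing_inv_mul _ hQdet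
  have hQit : (Q⁻¹)ᵀ = Q⁻¹ := by rw [Matrix.transpose_nonsing_inv, hQt]
  have hAQi : Lam xp = Q⁻¹ * Q⁻¹ := by
    rw [← Matrix.nonsing_inv_nonsing_inv (Lam xp) hAdet, ← hQ2, Matrix.mul_inv_rev]
  have hAiA : (Lam xp)⁻¹ * Lam xp = 1 := Matrix.nonsing_inv_mul _ hAdet
  have hBiB : (Lam y)⁻¹ * Lam y = 1 := Matrix.nonsing_inv_mul _ hBdet
  -- the congruence map `T`
  set T : (Fin U → ℝ) → Matrix (Fin L) (Fin L) ℝ := fun v => Q * Lam v * Q with hTdef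
  have hTt : ∀ v, (T v)ᵀ = T v := by
    intro v
    show (Q * Lam v * Q)ᵀ = Q * Lam v * Q
    rw [Matrix.transpose_mul, Matrix.transpose_mul, hQt, hsym v, Matrix.mul_assoc]
  have hTback : ∀ v, Q⁻¹ * T v * Q⁻¹ = Lam v := by
    intro v
    show Q⁻¹ * (Q * Lam v * Q) * Q⁻¹ = Lam v
    rw [← Matrix.mul_assoc, ← Matrix.mul_assoc, hQiQ, Matrix.one_mul, Matrix.mul_assoc, hQQi,
      Matrix.mul_one]
  -- decomposition of `Lam v` in the basis
  have hsingle : ∀ i : Fin U, (fun j => if i = j then (1:ℝ) else 0) = Pi.single i 1 := by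
    intro i; funext j
    by_cases h : i = j <;> simp [Pi.single_apply, h, eq_comm]
  have hvec : ∀ v : Fin U → ℝ, Lam v = ∑ i, v i • Lam (Pi.single i 1) := by
    intro v
    conv_lhs => rw [LinearMap.pi_apply_eq_sum_univ Lam v]
    apply Finset.sum_congr rfl; intro i _
    rw [hsingle i]
  -- the quadratic form of the hessian
  have htr : ∀ v w : Fin U → ℝ,
      v ⬝ᵥ (hess Lam xp *ᵥ w) = ((Lam xp)⁻¹ * Lam v * (Lam xp)⁻¹ * Lam w).trace := by
    intro v w
    calc v ⬝ᵥ (hess Lam xp *ᵥ w)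
        = ∑ i, ∑ j, v i * (w j *
            ((Lam xp)⁻¹ * Lam (Pi.single i 1) * (Lam xp)⁻¹ * Lam (Pi.single j 1)).trace) := by
          conv_lhs => simp only [dotProduct, Matrix.mulVec, Finset.mul_sum]
          apply Finset.sum_congr rfl; intro i _
          apply Finset.sum_congr rfl; intro j _
          show v i * (hess Lam xp i j * w j) = _
          rw [show hess Lam xp i j
              = ((Lam xp)⁻¹ * Lam (Pi.single i 1) * (Lam xp)⁻¹ * Lam (Pi.single j 1)).trace
            from rfl]
          ring
      _ = ((Lam xp)⁻¹ * Lam v * (Lam xp)⁻¹ * Lam w).trace := by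
          conv_rhs => rw [hvec v, hvec w]
          simp only [Matrix.mul_sum, Matrix.sum_mul, Matrix.mul_smul, Matrix.smul_mul,
            Matrix.trace_sum, Matrix.trace_smul, smul_eq_mul]
          rw [sum_flip (fun i j => v i * (w j *
            ((Lam xp)⁻¹ * Lam (Pi.single i 1) * (Lam xp)⁻¹ * Lam (Pi.single j 1)).trace))]
          apply Finset.sum_congr rfl; intro i _
          rw [Finset.mul_sum]
          apply Finset.sum_congr rfl; intro j _
          ring
  have htrT : ∀ v w : Fin U → ℝ,
      ((Lam xp)⁻¹ * Lam v * (Lam xp)⁻¹ * Lam w).trace = ((T v) * (T w)).trace := by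
    intro v w
    rw [← hQ2]
    rw [show Q * Q * Lam v * (Q * Q) * Lam w = Q * ((Q * Lam v * Q) * (Q * Lam w)) by
      simp only [Matrix.mul_assoc]]
    rw [Matrix.trace_mul_comm]
    show ((Q * Lam v * Q) * (Q * Lam w) * Q).trace = ((Q * Lam v * Q) * (Q * Lam w * Q)).trace
    simp only [Matrix.mul_assoc]
  have hquadT : ∀ v w : Fin U → ℝ,
      v ⬝ᵥ (hess Lam xp *ᵥ w) = ((T v) * (T w)).trace :=
    fun v w => (htr v w).trans (htrT v w)
  have hloc : ∀ v, locNorm Lam xp v = fro (T v) := by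
    intro v
    rw [locNorm, hquadT, trace_mul_self_eq_fro2 _ (hTt v)]; rfl
  -- `hess` is positive definite
  have hHherm : (hess Lam xp).IsHermitian := by
    rw [Matrix.IsHermitian, Matrix.conjTranspose_eq_transpose_of_trivial]
    ext i j
    show hess Lam xp j i = hess Lam xp i j
    show ((Lam xp)⁻¹ * Lam (Pi.single j 1) * (Lam xp)⁻¹ * Lam (Pi.single i 1)).trace
      = ((Lam xp)⁻¹ * Lam (Pi.single i 1) * (Lam xp)⁻¹ * Lam (Pi.single j 1)).trace
    rw [show (Lam xp)⁻¹ * Lam (Pi.single j 1) * (Lam xp)⁻¹ * Lam (Pi.single i 1)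
        = ((Lam xp)⁻¹ * Lam (Pi.single j 1)) * ((Lam xp)⁻¹ * Lam (Pi.single i 1)) from by
      simp only [Matrix.mul_assoc], Matrix.trace_mul_comm]
    simp only [Matrix.mul_assoc]
  have hT_eq_zero : ∀ v, T v = 0 → v = 0 := by
    intro v hv
    have : Lam v = 0 := by rw [← hTback v, hv, Matrix.mul_zero, Matrix.zero_mul]
    have h0 : Lam v = Lam 0 := by rw [this, map_zero]
    exact hinj h0
  have hHpd : (hess Lam xp).PosDef := by
    refine Matrix.PosDef.of_dotProduct_mulVec_pos hHherm ?_
    intro x hx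
    have hstar : star x = x := by simp
    rw [hstar]
    show 0 < x ⬝ᵥ (hess Lam xp *ᵥ x)
    rw [hquadT, trace_mul_self_eq_fro2 _ (hTt x)]
    rcases lt_or_eq_of_le (fro2_nonneg (T x)) with h | h
    · exact h
    · exfalso
      apply hx
      apply hT_eq_zero
      ext i j
      have hsum := h.symm
      rw [fro2] at hsum
      have h1 : ∀ a ∈ Finset.univ, (0:ℝ) ≤ ∑ j, T x a j ^ 2 := by
        intro a _; apply Finset.sum_nonneg; intro j _; positivity
      have h2 := (Finset.sum_eq_zero_iff_of_nonneg h1).mp hsum i (Finset.mem_univ i)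
      have h3 : ∀ b ∈ Finset.univ, (0:ℝ) ≤ T x i b ^ 2 := by intro b _; positivity
      have h4 := (Finset.sum_eq_zero_iff_of_nonneg h3).mp h2 j (Finset.mem_univ j)
      have := sq_eq_zero_iff.mp h4
      simpa using this
  have hHdet : IsUnit (hess Lam xp).det := hHpd.det_pos.ne'.isUnit
  have hHHi : ∀ z, hess Lam xp *ᵥ ((hess Lam xp)⁻¹ *ᵥ z) = z := by
    intro z
    rw [Matrix.mulVec_mulVec, Matrix.mul_nonsing_inv _ hHdet, Matrix.one_mulVec]
  have hHiH : ∀ z, (hess Lam xp)⁻¹ *ᵥ (hess Lam xp *ᵥ z) = z := by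
    intro z
    rw [Matrix.mulVec_mulVec, Matrix.nonsing_inv_mul _ hHdet, Matrix.one_mulVec]
  -- `H x = -grad x`
  have hgradx : hess Lam xp *ᵥ xp = - grad Lam xp := by
    funext i
    have hpick : (hess Lam xp *ᵥ xp) i = Pi.single i 1 ⬝ᵥ (hess Lam xp *ᵥ xp) := by
      simp [dotProduct, Pi.single_apply]
    rw [hpick, htr]
    rw [show (Lam xp)⁻¹ * Lam (Pi.single i 1) * (Lam xp)⁻¹ * Lam xp
        = (Lam xp)⁻¹ * Lam (Pi.single i 1) * ((Lam xp)⁻¹ * Lam xp) from by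
      simp only [Matrix.mul_assoc], hAiA, Matrix.mul_one]
    simp [grad]
  -- dot products against trace functionals
  have hdotlam : ∀ (M : Matrix (Fin L) (Fin L) ℝ) (s : Fin U → ℝ),
      ∑ i, (M * Lam (Pi.single i 1)).trace * s i = (M * Lam s).trace := by
    intro M s
    conv_rhs => rw [hvec s]
    simp only [Matrix.mul_sum, Matrix.mul_smul, Matrix.trace_sum, Matrix.trace_smul, smul_eq_mul]
    apply Finset.sum_congr rfl; intro i _; ring
  -- ## Step VIII : (cstar - c) * (e ⬝ᵥ y) ≤ L
  have hty : (t - c • e) ⬝ᵥ y = (L:ℝ) := by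
    rw [← hgy]
    have h1 : (-grad Lam y) ⬝ᵥ y = ∑ i, ((Lam y)⁻¹ * Lam (Pi.single i 1)).trace * y i := by
      simp [dotProduct, grad]
    rw [h1, hdotlam, hBiB, Matrix.trace_one]
    simp
  have hVIII : (cstar - c) * (e ⬝ᵥ y) ≤ (L:ℝ) := by
    have hbe := hb y hy.posSemidef
    have hexp : (t - c • e) ⬝ᵥ y - (t - cstar • e) ⬝ᵥ y = (cstar - c) * (e ⬝ᵥ y) := by
      simp only [sub_dotProduct, smul_dotProduct, smul_eq_mul]
      ring
    linarith [hty, hbe, hexp]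
  -- ## numeric facts about r and δ
  have h2r : (0:ℝ) < 1 - 2*r := by linarith
  set δ : ℝ := r ^ 2 / (1 - 2 * r) with hδdef
  have hδpos : 0 < δ := div_pos (by positivity) h2r
  have hδ8 : δ ≤ 1/8 := by
    rw [hδdef, div_le_iff₀ h2r]; nlinarith
  have hδ1 : δ < 1 := by linarith
  have h1δ : (0:ℝ) < 1 - δ := by linarith
  -- ## the matrix `S = T y` and its bounds
  have hQAQ : Q * Lam xp * Q = 1 := by
    rw [hAQi, ← Matrix.mul_assoc, Matrix.mul_assoc Q Q⁻¹ Q⁻¹]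
    rw [← Matrix.mul_assoc Q Q⁻¹ Q⁻¹, hQQi, Matrix.one_mul, hQiQ]
  have hTxpy : T (xp - y) = 1 - T y := by
    show Q * Lam (xp - y) * Q = 1 - T y
    rw [map_sub, Matrix.mul_sub, Matrix.sub_mul, hQAQ]
  have hδ'le : fro (1 - T y) ≤ δ := by
    rw [← hTxpy, ← hloc]
    exact h1
  have hSlow : ∀ v : Fin L → ℝ, (1-δ) * (v ⬝ᵥ v) ≤ v ⬝ᵥ (T y *ᵥ v) := by
    intro v
    have hb1 : v ⬝ᵥ ((1 - T y) *ᵥ v) ≤ δ * (v ⬝ᵥ v) := by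
      calc v ⬝ᵥ ((1 - T y) *ᵥ v)
          ≤ Real.sqrt (v ⬝ᵥ v) * Real.sqrt (((1 - T y) *ᵥ v) ⬝ᵥ ((1 - T y) *ᵥ v)) :=
            dot_le_sqrt_mul_sqrt _ _
        _ ≤ Real.sqrt (v ⬝ᵥ v) * Real.sqrt (fro2 (1 - T y) * (v ⬝ᵥ v)) :=
            mul_le_mul_of_nonneg_left (Real.sqrt_le_sqrt (mulVec_dot_le _ _)) (Real.sqrt_nonneg _)
        _ = fro (1 - T y) * (Real.sqrt (v ⬝ᵥ v) * Real.sqrt (v ⬝ᵥ v)) := by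
            rw [Real.sqrt_mul (fro2_nonneg _)]
            rw [show Real.sqrt (fro2 (1 - T y)) = fro (1 - T y) from rfl]
            ring
        _ = fro (1 - T y) * (v ⬝ᵥ v) := by rw [Real.mul_self_sqrt (dot_self_nonneg v)]
        _ ≤ δ * (v ⬝ᵥ v) := mul_le_mul_of_nonneg_right hδ'le (dot_self_nonneg v)
    have hsplit : v ⬝ᵥ ((1 - T y) *ᵥ v) = v ⬝ᵥ v - v ⬝ᵥ (T y *ᵥ v) := by
      rw [Matrix.sub_mulVec, Matrix.one_mulVec, dotProduct_sub]
    linarith [hb1, hsplit.symm.le, hsplit.le]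
  have hSdet : IsUnit (T y).det := by
    show IsUnit (Q * Lam y * Q).det
    rw [Matrix.det_mul, Matrix.det_mul]
    exact (hQdet.mul hBdet).mul hQdet
  have hSinv := inv_quadratic_bound (T y) hSdet (1-δ) h1δ hSlow
  have hTyit : ((T y)⁻¹)ᵀ = (T y)⁻¹ := by rw [Matrix.transpose_nonsing_inv, hTt y]
  have hKt : (1 - (T y)⁻¹)ᵀ = 1 - (T y)⁻¹ := by
    rw [Matrix.transpose_sub, Matrix.transpose_one, hTyit]
  have hKdecomp : 1 - (T y)⁻¹ = (T y - 1) * (T y)⁻¹ := by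
    rw [Matrix.sub_mul, Matrix.one_mul, Matrix.mul_nonsing_inv _ hSdet]
  have hfroK : fro (1 - (T y)⁻¹) ≤ δ / (1 - δ) := by
    have hK2 : fro2 (1 - (T y)⁻¹) ≤ (1/(1-δ))^2 * fro2 (T y - 1) := by
      rw [hKdecomp]
      exact fro2_mul_right_le _ _ _ hTyit hSinv
    have hK3 : fro2 (T y - 1) ≤ δ^2 := by
      have hKfro : fro (T y - 1) ≤ δ := by
        rw [show T y - 1 = -(1 - T y) from (neg_sub _ _).symm, fro_neg]
        exact hδ'le
      calc fro2 (T y - 1) = fro (T y - 1) ^ 2 := (fro_sq _).symm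
        _ ≤ δ^2 := pow_le_pow_left₀ (fro_nonneg _) hKfro 2
    calc fro (1 - (T y)⁻¹) = Real.sqrt (fro2 (1 - (T y)⁻¹)) := rfl
      _ ≤ Real.sqrt ((δ/(1-δ))^2) := Real.sqrt_le_sqrt (by
          calc fro2 (1 - (T y)⁻¹) ≤ (1/(1-δ))^2 * fro2 (T y - 1) := hK2
            _ ≤ (1/(1-δ))^2 * δ^2 := mul_le_mul_of_nonneg_left hK3 (by positivity)
            _ = (δ/(1-δ))^2 := by field_simp)
      _ = δ/(1-δ) := Real.sqrt_sq (by positivity)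
  -- ## Step III : the gradient-difference term
  set u : Fin U → ℝ := grad Lam y - grad Lam xp with hudef
  have hu_i : ∀ i, u i = (((Lam xp)⁻¹ - (Lam y)⁻¹) * Lam (Pi.single i 1)).trace := by
    intro i
    show grad Lam y i - grad Lam xp i = _
    rw [Matrix.sub_mul, Matrix.trace_sub]
    show -((Lam y)⁻¹ * Lam (Pi.single i 1)).trace - -((Lam xp)⁻¹ * Lam (Pi.single i 1)).trace = _
    ring
  set s : Fin U → ℝ := (hess Lam xp)⁻¹ *ᵥ u with hsdef
  have hNsq : fro2 (T s) = u ⬝ᵥ s := by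
    have hq := hquadT s s
    rw [trace_mul_self_eq_fro2 _ (hTt s)] at hq
    have h5 : hess Lam xp *ᵥ s = u := hHHi u
    rw [← hq, h5, dotProduct_comm]
  have hus : u ⬝ᵥ s = (((Lam xp)⁻¹ - (Lam y)⁻¹) * Lam s).trace := by
    rw [show u ⬝ᵥ s = ∑ i, u i * s i from rfl, ← hdotlam]
    apply Finset.sum_congr rfl; intro i _
    rw [hu_i i]
  have hQinvrel : (Lam xp)⁻¹ - (Lam y)⁻¹ = Q * (1 - (T y)⁻¹) * Q := by
    have hTyi : (T y)⁻¹ = Q⁻¹ * (Lam y)⁻¹ * Q⁻¹ := by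
      show (Q * Lam y * Q)⁻¹ = _
      rw [Matrix.mul_inv_rev, Matrix.mul_inv_rev, ← Matrix.mul_assoc]
    rw [Matrix.mul_sub, Matrix.sub_mul, Matrix.mul_one, hQ2, hTyi]
    congr 1
    rw [show Q * (Q⁻¹ * (Lam y)⁻¹ * Q⁻¹) * Q = (Q * Q⁻¹) * (Lam y)⁻¹ * (Q⁻¹ * Q) from by
      simp only [Matrix.mul_assoc], hQQi, hQiQ, Matrix.one_mul, Matrix.mul_one]
  have hIII : fro (T s) ≤ δ / (1-δ) := by
    rcases eq_or_lt_of_le (fro_nonneg (T s)) with h0 | h0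
    · rw [← h0]; positivity
    · have key : fro (T s) ^ 2 ≤ fro (1 - (T y)⁻¹) * fro (T s) := by
        rw [fro_sq, hNsq, hus, hQinvrel]
        rw [show Q * (1 - (T y)⁻¹) * Q * Lam s = Q * ((1 - (T y)⁻¹) * Q * Lam s) from by
          simp only [Matrix.mul_assoc], Matrix.trace_mul_comm,
          show (1 - (T y)⁻¹) * Q * Lam s * Q = (1 - (T y)⁻¹) * (Q * Lam s * Q) from by
          simp only [Matrix.mul_assoc]]
        exact trace_mul_le_fro_mul_fro _ _ hKt
      have hmm : fro (T s) * fro (T s) ≤ fro (1 - (T y)⁻¹) * fro (T s) := by nlinarith [key]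
      calc fro (T s) ≤ fro (1 - (T y)⁻¹) := le_of_mul_le_mul_right hmm h0
        _ ≤ δ/(1-δ) := hfroK
  -- ## Step II : the triangle inequality at x₊
  set s2 : Fin U → ℝ := (hess Lam xp)⁻¹ *ᵥ e with hs2def
  have hHd : hess Lam xp *ᵥ (xp - (hess Lam xp)⁻¹ *ᵥ (t - cp • e)) = u + (cp - c) • e := by
    rw [Matrix.mulVec_sub, hgradx, hHHi]
    funext i
    have hgyi := congrFun hgy i
    show -grad Lam xp i - (t i - cp * e i) = (grad Lam y i - grad Lam xp i) + (cp - c) * e i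
    have : -grad Lam y i = t i - c * e i := hgyi
    linarith
  have hd_decomp : xp - (hess Lam xp)⁻¹ *ᵥ (t - cp • e) = s + (cp - c) • s2 := by
    have hcongr := congrArg (fun z => (hess Lam xp)⁻¹ *ᵥ z) hHd
    rw [hHiH] at hcongr
    rw [hcongr, Matrix.mulVec_add, Matrix.mulVec_smul]
  have hTd : T (xp - (hess Lam xp)⁻¹ *ᵥ (t - cp • e)) = T s + (cp - c) • T s2 := by
    rw [hd_decomp]
    show Q * Lam (s + (cp-c) • s2) * Q = _
    rw [map_add, _root_.map_smul, Matrix.mul_add, Matrix.add_mul, Matrix.mul_smul, Matrix.smul_mul]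
  set m : ℝ := fro (T s2) with hmdef
  have hII : r / (r+1) ≤ fro (T s) + (cp - c) * m := by
    have hh2 : fro (T (xp - (hess Lam xp)⁻¹ *ᵥ (t - cp • e))) = r/(r+1) := by
      rw [← hloc]; exact h2
    rw [hTd] at hh2
    calc r/(r+1) = fro (T s + (cp-c) • T s2) := hh2.symm
      _ ≤ fro (T s) + fro ((cp-c) • T s2) := fro_add_le _ _
      _ = fro (T s) + |cp - c| * m := by rw [fro_smul]
      _ = fro (T s) + (cp - c) * m := by rw [abs_of_pos (by linarith : (0:ℝ) < cp - c)]
  -- ## Step V : bounding m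
  have hm2 : m^2 = e ⬝ᵥ s2 := by
    have hq := hquadT s2 s2
    rw [trace_mul_self_eq_fro2 _ (hTt s2)] at hq
    have h5 : hess Lam xp *ᵥ s2 = e := hHHi e
    rw [hmdef, fro_sq, ← hq, h5, dotProduct_comm]
  have hxp0 : xp ≠ 0 := by
    intro h
    have hdet := hxp.det_pos
    rw [h, map_zero, Matrix.det_zero] at hdet
    exact lt_irrefl 0 hdet
  have hnxp : 0 < ‖xp‖ := norm_pos_iff.mpr hxp0
  set Θ : ℝ := k₃ * ‖xp‖ with hΘdef
  have hΘpos : 0 < Θ := mul_pos hk₃ hnxp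
  have hAray : ∀ v : Fin L → ℝ, v ⬝ᵥ (Lam xp *ᵥ v) ≤ Θ * (v ⬝ᵥ v) :=
    rayleigh_bound (Lam xp) hxp.isHermitian Θ (fun μ hμ => hc3 xp hxp.posSemidef μ hμ)
  have hQi_bound : ∀ v : Fin L → ℝ, (Q⁻¹ *ᵥ v) ⬝ᵥ (Q⁻¹ *ᵥ v) ≤ Θ * (v ⬝ᵥ v) := by
    intro v
    have h6 : v ⬝ᵥ (Q⁻¹ *ᵥ (Q⁻¹ *ᵥ v)) = (Q⁻¹ *ᵥ v) ⬝ᵥ (Q⁻¹ *ᵥ v) := dot_sym_mulVec _ hQit _ _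
    rw [← h6, Matrix.mulVec_mulVec, ← hAQi]
    exact hAray v
  have hfroLam : ∀ w : Fin U → ℝ, fro2 (Lam w) ≤ Θ * (Θ * fro2 (T w)) := by
    intro w
    have h7 : Lam w = Q⁻¹ * (T w * Q⁻¹) := by
      rw [← Matrix.mul_assoc]; exact (hTback w).symm
    rw [h7]
    calc fro2 (Q⁻¹ * (T w * Q⁻¹)) ≤ Θ * fro2 (T w * Q⁻¹) := fro2_mul_left_le _ _ _ hQi_bound
      _ ≤ Θ * (Θ * fro2 (T w)) :=
          mul_le_mul_of_nonneg_left (fro2_mul_right_le _ _ _ hQit hQi_bound) hΘpos.le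
  have hVm : k₂ * Real.sqrt (s2 ⬝ᵥ s2) ≤ Θ * m := by
    have h8 : k₂^2 * (s2 ⬝ᵥ s2) ≤ Θ^2 * m^2 := by
      have hcc2 := hc2 s2
      rw [trace_mul_self_eq_fro2 _ (hsym s2)] at hcc2
      calc k₂^2 * (s2 ⬝ᵥ s2) ≤ fro2 (Lam s2) := hcc2
        _ ≤ Θ * (Θ * fro2 (T s2)) := hfroLam s2
        _ = Θ^2 * m^2 := by rw [hmdef, fro_sq]; ring
    have h9 : Real.sqrt (k₂^2 * (s2 ⬝ᵥ s2)) ≤ Real.sqrt (Θ^2 * m^2) := Real.sqrt_le_sqrt h8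
    rw [Real.sqrt_mul (sq_nonneg k₂), Real.sqrt_mul (sq_nonneg Θ), Real.sqrt_sq hk₂.le,
      Real.sqrt_sq hΘpos.le, Real.sqrt_sq (fro_nonneg _)] at h9
    exact h9
  have hVfinal : m ≤ Θ * Real.sqrt (e ⬝ᵥ e) / k₂ := by
    rcases eq_or_lt_of_le (fro_nonneg (T s2)) with h0 | h0
    · rw [hmdef, ← h0]; positivity
    · have hmpos : (0:ℝ) < m := h0
      have h10 : m^2 ≤ (Θ * m / k₂) * Real.sqrt (e ⬝ᵥ e) := by
        rw [hm2]
        calc e ⬝ᵥ s2 ≤ Real.sqrt (e ⬝ᵥ e) * Real.sqrt (s2 ⬝ᵥ s2) := dot_le_sqrt_mul_sqrt _ _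
          _ ≤ Real.sqrt (e ⬝ᵥ e) * (Θ*m/k₂) := by
              apply mul_le_mul_of_nonneg_left _ (Real.sqrt_nonneg _)
              rw [le_div_iff₀ hk₂]
              linarith [hVm]
          _ = (Θ*m/k₂) * Real.sqrt (e ⬝ᵥ e) := by ring
      have h11 := mul_le_mul_of_nonneg_left h10 (inv_pos.mpr hmpos).le
      calc m = m⁻¹ * m^2 := by rw [sq]; field_simp
        _ ≤ m⁻¹ * ((Θ*m/k₂) * Real.sqrt (e ⬝ᵥ e)) := h11
        _ = Θ * Real.sqrt (e ⬝ᵥ e) / k₂ := by field_simp [hmpos.ne']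
  -- ## Step VII : e ⬝ᵥ y ≥ (1-δ) e ⬝ᵥ xp
  have hpsd7 : (Lam (y - (1-δ) • xp)).PosSemidef := by
    refine Matrix.PosSemidef.of_dotProduct_mulVec_nonneg ?_ ?_
    · rw [Matrix.IsHermitian, Matrix.conjTranspose_eq_transpose_of_trivial]; exact hsym _
    · intro v
      have hstar : star v = v := by simp
      rw [hstar]
      show 0 ≤ v ⬝ᵥ (Lam (y - (1-δ) • xp) *ᵥ v)
      rw [map_sub, _root_.map_smul, Matrix.sub_mulVec, Matrix.smul_mulVec,
        dotProduct_sub, dotProduct_smul]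
      have hvA : v ⬝ᵥ (Lam xp *ᵥ v) = (Q⁻¹ *ᵥ v) ⬝ᵥ (Q⁻¹ *ᵥ v) := by
        rw [hAQi, ← Matrix.mulVec_mulVec, dot_sym_mulVec _ hQit]
      have hvB : v ⬝ᵥ (Lam y *ᵥ v) = (Q⁻¹ *ᵥ v) ⬝ᵥ (T y *ᵥ (Q⁻¹ *ᵥ v)) := by
        have hBrel : Lam y = Q⁻¹ * (T y * Q⁻¹) := by
          rw [← Matrix.mul_assoc]; exact (hTback y).symm
        rw [hBrel, ← Matrix.mulVec_mulVec, dot_sym_mulVec _ hQit, ← Matrix.mulVec_mulVec]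
      have hlow := hSlow (Q⁻¹ *ᵥ v)
      rw [hvA, hvB, smul_eq_mul]
      linarith
  have hVII : (1-δ) * (e ⬝ᵥ xp) ≤ e ⬝ᵥ y := by
    have h11 := hc1 _ hpsd7
    have h12 : e ⬝ᵥ (y - (1-δ) • xp) = e ⬝ᵥ y - (1-δ) * (e ⬝ᵥ xp) := by
      rw [dotProduct_sub, dotProduct_smul, smul_eq_mul]
    nlinarith [norm_nonneg (y - (1-δ) • xp), hk₁.le, mul_nonneg hk₁.le (norm_nonneg (y - (1-δ) • xp))]
  -- ## positivity facts
  have hexp : 0 < e ⬝ᵥ xp := lt_of_lt_of_le (mul_pos hk₁ hnxp) (hc1 xp hxp.posSemidef)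
  have hy0 : y ≠ 0 := by
    intro h
    have hdet := hy.det_pos
    rw [h, map_zero, Matrix.det_zero] at hdet
    exact lt_irrefl 0 hdet
  have heyp : 0 < e ⬝ᵥ y :=
    lt_of_lt_of_le (mul_pos hk₁ (norm_pos_iff.mpr hy0)) (hc1 y hy.posSemidef)
  have hee : 0 < Real.sqrt (e ⬝ᵥ e) := by
    by_contra h
    push_neg at h
    have h0 : Real.sqrt (e ⬝ᵥ e) = 0 := le_antisymm h (Real.sqrt_nonneg _)
    have h13 := dot_le_sqrt_mul_sqrt e xp
    rw [h0, zero_mul] at h13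
    linarith
  -- ## final assembly
  have hαm : r/(r+1) - δ/(1-δ) ≤ (cp - c) * m := by linarith [hII, hIII]
  have hstep : r/(r+1) - δ/(1-δ) ≤ (cp - c) * (Θ * Real.sqrt (e ⬝ᵥ e) / k₂) :=
    le_trans hαm (mul_le_mul_of_nonneg_left hVfinal (by linarith))
  have hρeq : ρ = (r/(r+1) - δ/(1-δ)) * (1-δ) := by
    rw [hρ, hδdef]
    have hne1 : (1:ℝ) - 2*r ≠ 0 := ne_of_gt h2r
    have hne2 : r + 1 ≠ 0 := ne_of_gt (by linarith)
    have hne3 : 1 - r - 2*r^2 ≠ 0 := ne_of_gt (by nlinarith)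
    have hne4 : 1 - 2*r - r^2 ≠ 0 := ne_of_gt (by nlinarith)
    have hne5 : 1 - 2*r - r^2 = (1 - 2*r) * (1 - r^2/(1-2*r)) := by field_simp
    have h7 : 1 - r^2/(1-2*r) = (1-2*r-r^2)/(1-2*r) := by
      rw [eq_div_iff hne1, sub_mul, div_mul_cancel₀ _ hne1]; ring
    have e1 : r^2/(1-2*r) / ((1-2*r-r^2)/(1-2*r)) = r^2/(1-2*r-r^2) := by
      rw [div_div_div_cancel_right₀ hne1]
    rw [h7, e1, div_sub_div _ _ hne2 hne4, div_mul_div_comm,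
      div_eq_div_iff hne3 (mul_ne_zero (mul_ne_zero hne2 hne4) hne1)]
    ring
  have hΘk : Θ * ((1-δ) * k₁) ≤ k₃ * (e ⬝ᵥ y) := by
    have hΘk1 : Θ * k₁ ≤ k₃ * (e ⬝ᵥ xp) := by
      rw [hΘdef]
      calc k₃ * ‖xp‖ * k₁ = k₃ * (k₁ * ‖xp‖) := by ring
        _ ≤ k₃ * (e ⬝ᵥ xp) := mul_le_mul_of_nonneg_left (hc1 xp hxp.posSemidef) hk₃.le
    calc Θ * ((1-δ)*k₁) = (1-δ) * (Θ * k₁) := by ring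
      _ ≤ (1-δ) * (k₃ * (e ⬝ᵥ xp)) := mul_le_mul_of_nonneg_left hΘk1 h1δ.le
      _ = k₃ * ((1-δ) * (e ⬝ᵥ xp)) := by ring
      _ ≤ k₃ * (e ⬝ᵥ y) := mul_le_mul_of_nonneg_left hVII hk₃.le
  have hfinal1 : ρ * k₁ * k₂ ≤ (cp - c) * k₃ * (e ⬝ᵥ y) * Real.sqrt (e ⬝ᵥ e) := by
    have hmul := mul_le_mul_of_nonneg_right hstep
      (by positivity : (0:ℝ) ≤ (1-δ)*k₁*k₂)
    have hLh : (r/(r+1) - δ/(1-δ)) * ((1-δ)*k₁*k₂) = ρ * k₁ * k₂ := by rw [hρeq]; ring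
    have hRh : ((cp-c) * (Θ * Real.sqrt (e ⬝ᵥ e) / k₂)) * ((1-δ)*k₁*k₂)
        = ((cp-c) * Real.sqrt (e ⬝ᵥ e)) * (Θ * ((1-δ)*k₁)) := by
      field_simp
    rw [hLh, hRh] at hmul
    calc ρ * k₁ * k₂ ≤ ((cp-c) * Real.sqrt (e ⬝ᵥ e)) * (Θ * ((1-δ)*k₁)) := hmul
      _ ≤ ((cp-c) * Real.sqrt (e ⬝ᵥ e)) * (k₃ * (e ⬝ᵥ y)) := by
          apply mul_le_mul_of_nonneg_left hΘk
          have : (0:ℝ) ≤ cp - c := by linarith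
          positivity
      _ = (cp - c) * k₃ * (e ⬝ᵥ y) * Real.sqrt (e ⬝ᵥ e) := by ring
  have hcstarpos : (0:ℝ) < cstar - c := by linarith
  have hcpnn : (0:ℝ) ≤ cp - c := by linarith
  calc ρ * k₁ * k₂ * (cstar - c)
      ≤ ((cp-c) * k₃ * (e ⬝ᵥ y) * Real.sqrt (e ⬝ᵥ e)) * (cstar - c) :=
        mul_le_mul_of_nonneg_right hfinal1 hcstarpos.le
    _ = ((cp-c) * k₃ * Real.sqrt (e ⬝ᵥ e)) * ((cstar - c) * (e ⬝ᵥ y)) := by ring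
    _ ≤ ((cp-c) * k₃ * Real.sqrt (e ⬝ᵥ e)) * L := by
        apply mul_le_mul_of_nonneg_left hVIII
        positivity
    _ = (cp - c) * k₃ * L * Real.sqrt (e ⬝ᵥ e) := by ring
end

section
/- Suppose Λ(x) is positive definite, y ∈ ℝ^U, and 0 ≤ r₁ < r₂ with r₁ < 1/2 and ‖x − y‖_x ≤ r₁. Let N > 0 be a real number such that the operator 2-norm of H(x)^{1/2} (the positive-definite square root of H(x)) satisfies ‖H(x)^{1/2}‖ ≤ (2N/√U)·(r₂ − r₁)/(1 + r₂). Then every x_N ∈ ℝ^U with ‖x_N − x‖ ≤ √U/(2N) (e.g., the componentwise rounding of x to the nearest rational vector with denominator N) satisfies: Λ(x_N) is positive definite and ‖x_N − y‖_{x_N} ≤ r₂. -/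
open Matrix

section PosSemidefSqrtShim
open scoped MatrixOrder

noncomputable def Matrix.PosSemidef.sqrt {n : Type*} [Fintype n] [DecidableEq n]
    {A : Matrix n n ℝ} (_hA : A.PosSemidef) : Matrix n n ℝ := CFC.sqrt A

lemma Matrix.PosSemidef.posSemidef_sqrt {n : Type*} [Fintype n] [DecidableEq n]
    {A : Matrix n n ℝ} (hA : A.PosSemidef) : hA.sqrt.PosSemidef :=
  Matrix.nonneg_iff_posSemidef.mp (CFC.sqrt_nonneg A)

lemma Matrix.PosSemidef.sqrt_mul_self {n : Type*} [Fintype n] [DecidableEq n]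
    {A : Matrix n n ℝ} (hA : A.PosSemidef) : hA.sqrt * hA.sqrt = A :=
  CFC.sqrt_mul_sqrt_self A hA.nonneg

end PosSemidefSqrtShim

namespace Stmt17Aux

variable {k : ℕ}

lemma real_conjT {k k' : ℕ} (M : Matrix (Fin k) (Fin k') ℝ) : Mᴴ = Mᵀ := by
  simp [Matrix.conjTranspose, Matrix.map_id']; rfl

lemma herm_of_symm {M : Matrix (Fin k) (Fin k) ℝ} (h : M.IsSymm) : M.IsHermitian := by
  unfold Matrix.IsHermitian
  rw [real_conjT]; exact h

lemma transpose_of_herm {M : Matrix (Fin k) (Fin k) ℝ} (h : M.IsHermitian) : Mᵀ = M := by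
  rw [← real_conjT]; exact h.eq

lemma vecMul_eq (R : Matrix (Fin k) (Fin k) ℝ) (hR : Rᵀ = R) (u : Fin k → ℝ) :
    u ᵥ* R = R *ᵥ u := by
  nth_rewrite 1 [← hR]
  exact Matrix.vecMul_transpose R u

lemma dot_mul_self (R : Matrix (Fin k) (Fin k) ℝ) (hR : Rᵀ = R) (u v : Fin k → ℝ) :
    u ⬝ᵥ (R * R) *ᵥ v = (R *ᵥ u) ⬝ᵥ (R *ᵥ v) := by
  rw [← Matrix.mulVec_mulVec, Matrix.dotProduct_mulVec, vecMul_eq R hR]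

lemma dot_conj (C M : Matrix (Fin k) (Fin k) ℝ) (hC : Cᵀ = C) (u : Fin k → ℝ) :
    u ⬝ᵥ (C * M * C) *ᵥ u = (C *ᵥ u) ⬝ᵥ M *ᵥ (C *ᵥ u) := by
  rw [← Matrix.mulVec_mulVec, ← Matrix.mulVec_mulVec, Matrix.dotProduct_mulVec, vecMul_eq C hC]

/-- The Euclidean-style triangle inequality for `√(v ⬝ᵥ v)`. -/
lemma sqrt_dot_triangle (a b : Fin k → ℝ) :
    Real.sqrt ((a + b) ⬝ᵥ (a + b)) ≤ Real.sqrt (a ⬝ᵥ a) + Real.sqrt (b ⬝ᵥ b) := by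
  have key : ∀ v : Fin k → ℝ, Real.sqrt (v ⬝ᵥ v)
      = ‖(WithLp.equiv 2 (Fin k → ℝ)).symm v‖ := by
    intro v
    rw [EuclideanSpace.norm_eq]
    congr 1
    simp [dotProduct, Real.norm_eq_abs, sq_abs, pow_two]
  rw [key, key, key]
  exact norm_add_le _ _

lemma dot_self_nonneg (a : Fin k → ℝ) : 0 ≤ a ⬝ᵥ a :=
  Finset.sum_nonneg fun i _ => mul_self_nonneg _

/-- Scalar Cauchy–Schwarz for the dot product. -/
lemma dot_cs (a b : Fin k → ℝ) : (a ⬝ᵥ b) ^ 2 ≤ (a ⬝ᵥ a) * (b ⬝ᵥ b) := by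
  simpa [dotProduct, pow_two] using Finset.sum_mul_sq_le_sq_mul_sq Finset.univ a b

/-- Cauchy–Schwarz for a positive semidefinite quadratic form. -/
lemma psd_cs {Q : Matrix (Fin k) (Fin k) ℝ} (hQ : Q.PosSemidef) (u v : Fin k → ℝ) :
    (u ⬝ᵥ Q *ᵥ v) ^ 2 ≤ (u ⬝ᵥ Q *ᵥ u) * (v ⬝ᵥ Q *ᵥ v) := by
  have hR := hQ.posSemidef_sqrt
  have hRR : hQ.sqrt * hQ.sqrt = Q := hQ.sqrt_mul_self
  have hRT : hQ.sqrtᵀ = hQ.sqrt := transpose_of_herm hR.isHermitian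
  rw [← hRR, dot_mul_self _ hRT, dot_mul_self _ hRT, dot_mul_self _ hRT]
  exact dot_cs _ _

lemma psd_dot_nonneg {Q : Matrix (Fin k) (Fin k) ℝ} (hQ : Q.PosSemidef) (u : Fin k → ℝ) :
    0 ≤ u ⬝ᵥ Q *ᵥ u := by
  simpa using hQ.dotProduct_mulVec_nonneg u

lemma posdef_dot_pos {Q : Matrix (Fin k) (Fin k) ℝ} (hQ : Q.PosDef) {u : Fin k → ℝ}
    (hu : u ≠ 0) : 0 < u ⬝ᵥ Q *ᵥ u := by
  simpa using hQ.dotProduct_mulVec_pos hu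

lemma psd_trace_nonneg {M : Matrix (Fin k) (Fin k) ℝ} (h : M.PosSemidef) : 0 ≤ M.trace := by
  apply Finset.sum_nonneg
  intro i _
  have := h.dotProduct_mulVec_nonneg (Pi.single i 1)
  simpa [Matrix.mulVec, dotProduct, Pi.single_apply, Finset.sum_ite_eq,
    Finset.sum_ite_eq'] using this

lemma trace_mul_psd_nonneg {P Q : Matrix (Fin k) (Fin k) ℝ}
    (hP : P.PosSemidef) (hQ : Q.PosSemidef) : 0 ≤ (P * Q).trace := by
  have hRR : hP.sqrt * hP.sqrt = P := hP.sqrt_mul_self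
  have hRH : hP.sqrtᴴ = hP.sqrt := hP.posSemidef_sqrt.isHermitian.eq
  have h1 : (P * Q).trace = (hP.sqrt * (hP.sqrt * Q)).trace := by
    rw [← Matrix.mul_assoc, hRR]
  rw [h1, Matrix.trace_mul_comm]
  refine psd_trace_nonneg ?_
  have := hQ.conjTranspose_mul_mul_same hP.sqrt
  rwa [hRH] at this

/-- Monotonicity of `P ↦ tr(PSPS)` along the Loewner order. -/
lemma trace_sq_mono {P₁ P₂ S : Matrix (Fin k) (Fin k) ℝ}
    (h1 : P₁.PosSemidef) (h2 : P₂.PosSemidef) (hd : (P₂ - P₁).PosSemidef)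
    (hS : Sᴴ = S) :
    (P₁ * S * P₁ * S).trace ≤ (P₂ * S * P₂ * S).trace := by
  have e : P₂ * S * P₂ * S - P₁ * S * P₁ * S
      = P₂ * (S * (P₂ - P₁) * S) + (P₂ - P₁) * (S * P₁ * S) := by noncomm_ring
  have t1 : 0 ≤ (P₂ * (S * (P₂ - P₁) * S)).trace := by
    refine trace_mul_psd_nonneg h2 ?_
    have := hd.conjTranspose_mul_mul_same S
    rwa [hS] at this
  have t2 : 0 ≤ ((P₂ - P₁) * (S * P₁ * S)).trace := by
    refine trace_mul_psd_nonneg hd ?_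
    have := h1.conjTranspose_mul_mul_same S
    rwa [hS] at this
  have := add_nonneg t1 t2
  rw [← Matrix.trace_add, ← e, Matrix.trace_sub] at this
  linarith

/-- Anti-monotonicity of the inverse: if `P ⪰ s·A` then `P⁻¹ ⪯ s⁻¹·A⁻¹` (quadratic forms). -/
lemma inv_cmp {A P : Matrix (Fin k) (Fin k) ℝ} (hA : A.PosDef) (hP : P.PosDef)
    {s : ℝ} (hs : 0 < s) (hle : ∀ u, s * (u ⬝ᵥ A *ᵥ u) ≤ u ⬝ᵥ P *ᵥ u)
    (w : Fin k → ℝ) : w ⬝ᵥ P⁻¹ *ᵥ w ≤ s⁻¹ * (w ⬝ᵥ A⁻¹ *ᵥ w) := by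
  set u := P⁻¹ *ᵥ w with hu
  set z := A⁻¹ *ᵥ w with hz
  have hPu : P *ᵥ u = w := by
    rw [hu, Matrix.mulVec_mulVec, Matrix.mul_nonsing_inv _ hP.det_pos.ne'.isUnit, Matrix.one_mulVec]
  have hAz : A *ᵥ z = w := by
    rw [hz, Matrix.mulVec_mulVec, Matrix.mul_nonsing_inv _ hA.det_pos.ne'.isUnit, Matrix.one_mulVec]
  set a := w ⬝ᵥ P⁻¹ *ᵥ w with ha
  set b := w ⬝ᵥ A⁻¹ *ᵥ w with hb
  have hb0 : 0 ≤ b := psd_dot_nonneg hA.inv.posSemidef w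
  have hua : u ⬝ᵥ w = a := by rw [ha, hu]; exact dotProduct_comm _ _
  have hzb : z ⬝ᵥ w = b := by rw [hb, hz]; exact dotProduct_comm _ _
  have huPu : u ⬝ᵥ P *ᵥ u = a := by rw [hPu]; exact hua
  have huAz : u ⬝ᵥ A *ᵥ z = a := by rw [hAz]; exact hua
  have hzAz : z ⬝ᵥ A *ᵥ z = b := by rw [hAz]; exact hzb
  have cs : a ^ 2 ≤ (u ⬝ᵥ A *ᵥ u) * b := by
    have := psd_cs hA.posSemidef u z
    rwa [huAz, hzAz] at this
  have hAu : u ⬝ᵥ A *ᵥ u ≤ s⁻¹ * a := by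
    have := hle u
    rw [huPu] at this
    calc u ⬝ᵥ A *ᵥ u = s⁻¹ * (s * (u ⬝ᵥ A *ᵥ u)) := by field_simp
      _ ≤ s⁻¹ * a := by
          exact mul_le_mul_of_nonneg_left this (by positivity)
  rcases le_or_gt a 0 with h0 | h0
  · exact h0.trans (by positivity)
  · have key : a ^ 2 ≤ s⁻¹ * a * b :=
      cs.trans (mul_le_mul_of_nonneg_right hAu hb0)
    have : a ≤ s⁻¹ * b := by
      have h2 : a * a ≤ a * (s⁻¹ * b) := by
        calc a * a = a ^ 2 := by ring
          _ ≤ s⁻¹ * a * b := key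
          _ = a * (s⁻¹ * b) := by ring
      exact le_of_mul_le_mul_left h2 h0
    exact this

/-- A symmetric matrix's quadratic form is bounded by its Frobenius norm. -/
lemma quad_bound (S : Matrix (Fin k) (Fin k) ℝ) (hS : Sᵀ = S) (u : Fin k → ℝ) :
    |u ⬝ᵥ S *ᵥ u| ≤ Real.sqrt ((S * S).trace) * (u ⬝ᵥ u) := by
  have htr : (S * S).trace = ∑ p : Fin k × Fin k, (S p.1 p.2) ^ 2 := by
    rw [Fintype.sum_prod_type]
    simp only [Matrix.trace, Matrix.diag, Matrix.mul_apply]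
    refine Finset.sum_congr rfl fun i _ => Finset.sum_congr rfl fun j _ => ?_
    have h2 : S j i = S i j := by
      have := congrFun (congrFun hS i) j
      simpa [Matrix.transpose_apply] using this
    rw [h2]; ring
  have hquad : u ⬝ᵥ S *ᵥ u = ∑ p : Fin k × Fin k, S p.1 p.2 * (u p.1 * u p.2) := by
    rw [Fintype.sum_prod_type]
    simp only [dotProduct, Matrix.mulVec, dotProduct, Finset.mul_sum]
    refine Finset.sum_congr rfl fun i _ => Finset.sum_congr rfl fun j _ => by ring
  have huu : ∑ p : Fin k × Fin k, (u p.1 * u p.2) ^ 2 = (u ⬝ᵥ u) ^ 2 := by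
    rw [Fintype.sum_prod_type]
    simp only [dotProduct, pow_two, Finset.sum_mul_sum]
    exact Finset.sum_congr rfl fun i _ => Finset.sum_congr rfl fun j _ => by ring
  have cs := Finset.sum_mul_sq_le_sq_mul_sq Finset.univ
    (fun p : Fin k × Fin k => S p.1 p.2) (fun p : Fin k × Fin k => u p.1 * u p.2)
  have hsq : (u ⬝ᵥ S *ᵥ u) ^ 2 ≤ (S * S).trace * (u ⬝ᵥ u) ^ 2 := by
    rw [hquad, htr, ← huu]
    exact cs
  have htrnn : 0 ≤ (S * S).trace := by
    rw [htr]; positivity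
  rw [← Real.sqrt_sq_eq_abs]
  calc Real.sqrt ((u ⬝ᵥ S *ᵥ u) ^ 2) ≤ Real.sqrt ((S * S).trace * (u ⬝ᵥ u) ^ 2) :=
        Real.sqrt_le_sqrt hsq
    _ = Real.sqrt ((S * S).trace) * (u ⬝ᵥ u) := by
        rw [Real.sqrt_mul htrnn, Real.sqrt_sq (dot_self_nonneg u)]

lemma trace_conj_sq (B X Y : Matrix (Fin k) (Fin k) ℝ) :
    ((B * B) * X * (B * B) * Y).trace = ((B * X * B) * (B * Y * B)).trace := by
  rw [show (B * B) * X * (B * B) * Y = B * (B * X * (B * B) * Y) from by noncomm_ring,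
    Matrix.trace_mul_comm,
    show (B * X * (B * B) * Y) * B = (B * X * B) * (B * Y * B) from by noncomm_ring]

lemma lam_eq_sum {U L : ℕ} (Lam : (Fin U → ℝ) →ₗ[ℝ] Matrix (Fin L) (Fin L) ℝ)
    (u : Fin U → ℝ) : Lam u = ∑ i, u i • Lam (Pi.single i 1) := by
  have : u = ∑ i, u i • (Pi.single i 1 : Fin U → ℝ) := by
    funext j
    simp [Pi.single_apply, Finset.sum_ite_eq']
  conv_lhs => rw [this]
  simp [map_sum]

/-- The quadratic form of the Hessian as a trace. -/
lemma quadform {U L : ℕ} (Lam : (Fin U → ℝ) →ₗ[ℝ] Matrix (Fin L) (Fin L) ℝ)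
    (x v w : Fin U → ℝ) :
    v ⬝ᵥ (hess Lam x).mulVec w = ((Lam x)⁻¹ * Lam v * (Lam x)⁻¹ * Lam w).trace := by
  conv_rhs => rw [lam_eq_sum Lam v, lam_eq_sum Lam w]
  simp only [Matrix.mul_sum, Matrix.sum_mul, Matrix.mul_smul, Matrix.smul_mul,
    Matrix.trace_sum, Matrix.trace_smul, smul_eq_mul, smul_smul]
  simp only [dotProduct, Matrix.mulVec, hess, Matrix.of_apply, Finset.mul_sum]
  rw [Finset.sum_comm]
  apply Finset.sum_congr rfl; intro i _
  apply Finset.sum_congr rfl; intro j _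
  ring

lemma hess_herm {U L : ℕ} (Lam : (Fin U → ℝ) →ₗ[ℝ] Matrix (Fin L) (Fin L) ℝ)
    (x : Fin U → ℝ) : (hess Lam x).IsHermitian := by
  apply herm_of_symm
  unfold Matrix.IsSymm
  ext i j
  simp only [Matrix.transpose_apply, hess, Matrix.of_apply]
  rw [show (Lam x)⁻¹ * Lam (Pi.single j 1) * (Lam x)⁻¹ * Lam (Pi.single i 1)
      = ((Lam x)⁻¹ * Lam (Pi.single j 1)) * ((Lam x)⁻¹ * Lam (Pi.single i 1)) from by
    noncomm_ring]
  rw [Matrix.trace_mul_comm]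
  noncomm_ring

end Stmt17Aux

open Stmt17Aux in
/-- rounding certificates. The bound on the operator 2-norm of
`H(x)^{1/2}` is phrased for the (unique) positive semidefinite square root `R`
of `H(x)`; Euclidean norms on `Fin U → ℝ` are written `Real.sqrt (v ⬝ᵥ v)`. -/
theorem stmt17 {U L : ℕ} (hU : 0 < U) (hL : 0 < L)
    (Lam : (Fin U → ℝ) →ₗ[ℝ] Matrix (Fin L) (Fin L) ℝ)
    (hinj : Function.Injective Lam) (hsym : ∀ v, (Lam v).IsSymm)
    (x y : Fin U → ℝ) (hx : (Lam x).PosDef)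
    (r₁ r₂ : ℝ) (hr₁0 : 0 ≤ r₁) (hr₁₂ : r₁ < r₂) (hr₁ : r₁ < 1 / 2)
    (hxy : locNorm Lam x (x - y) ≤ r₁)
    (N : ℝ) (hN : 0 < N)
    (hsq : ∀ R : Matrix (Fin U) (Fin U) ℝ, R.PosSemidef → R * R = hess Lam x →
      ∀ v : Fin U → ℝ, Real.sqrt (R.mulVec v ⬝ᵥ R.mulVec v)
        ≤ (2 * N / Real.sqrt U) * ((r₂ - r₁) / (1 + r₂)) * Real.sqrt (v ⬝ᵥ v))
    (xN : Fin U → ℝ)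
    (hxN : Real.sqrt ((xN - x) ⬝ᵥ (xN - x)) ≤ Real.sqrt U / (2 * N)) :
    (Lam xN).PosDef ∧ locNorm Lam xN (xN - y) ≤ r₂ := by
  classical
  have hAinv : (Lam x)⁻¹.PosDef := hx.inv
  set Bm := hAinv.posSemidef.sqrt with hBdef
  have hBpsd : Bm.PosSemidef := hAinv.posSemidef.posSemidef_sqrt
  have hB2 : Bm * Bm = (Lam x)⁻¹ := hAinv.posSemidef.sqrt_mul_self
  have hBT : Bmᵀ = Bm := transpose_of_herm hBpsd.isHermitian
  have hdetB : IsUnit Bm.det := by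
    have h1 : Bm.det * Bm.det = (Lam x)⁻¹.det := by rw [← Matrix.det_mul, hB2]
    have hpos : 0 < (Lam x)⁻¹.det := hAinv.det_pos
    have h2 : Bm.det ≠ 0 := by
      intro h; rw [h, mul_zero] at h1; rw [← h1] at hpos; exact lt_irrefl _ hpos
    exact h2.isUnit
  set Cm := Bm⁻¹ with hCdef
  have hCB : Cm * Bm = 1 := Matrix.nonsing_inv_mul Bm hdetB
  have hBC : Bm * Cm = 1 := Matrix.mul_nonsing_inv Bm hdetB
  have hCT : Cmᵀ = Cm := by rw [hCdef, Matrix.transpose_nonsing_inv, hBT]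
  have hCC : Cm * Cm = Lam x := by
    rw [hCdef, ← Matrix.mul_inv_rev, hB2,
      Matrix.nonsing_inv_nonsing_inv _ hx.det_pos.ne'.isUnit]
  set d := xN - x with hddef
  set S := Bm * Lam d * Bm with hSdef
  have hST : Sᵀ = S := by
    rw [hSdef]
    simp [Matrix.transpose_mul, hBT, (hsym d).eq, Matrix.mul_assoc]
  -- the Hessian at x is positive semidefinite
  have hsymH : ∀ v : Fin U → ℝ, (Bm * Lam v * Bm)ᵀ = Bm * Lam v * Bm := by
    intro v
    simp [Matrix.transpose_mul, hBT, (hsym v).eq, Matrix.mul_assoc]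
  have hquadx : ∀ v : Fin U → ℝ,
      v ⬝ᵥ (hess Lam x).mulVec v = ((Bm * Lam v * Bm) * (Bm * Lam v * Bm)).trace := by
    intro v
    rw [quadform, ← hB2, trace_conj_sq]
  have hessPSD : (hess Lam x).PosSemidef := by
    refine Matrix.PosSemidef.of_dotProduct_mulVec_nonneg (hess_herm Lam x) fun v => ?_
    have hMH : (Bm * Lam v * Bm)ᴴ = Bm * Lam v * Bm := by
      rw [real_conjT]; exact hsymH v
    have hps : ((Bm * Lam v * Bm) * (Bm * Lam v * Bm)).PosSemidef := by
      have := Matrix.posSemidef_conjTranspose_mul_self (Bm * Lam v * Bm)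
      rwa [hMH] at this
    have := psd_trace_nonneg hps
    rw [← hquadx v] at this
    simpa using this
  set t := locNorm Lam x d with htdef
  have ht0 : 0 ≤ t := Real.sqrt_nonneg _
  have hr₂0 : (0:ℝ) < 1 + r₂ := by linarith
  have hc0 : 0 ≤ (r₂ - r₁) / (1 + r₂) := div_nonneg (by linarith) hr₂0.le
  have hc1 : (r₂ - r₁) / (1 + r₂) < 1 := by rw [div_lt_one hr₂0]; linarith
  have hUpos : (0:ℝ) < Real.sqrt U := Real.sqrt_pos.mpr (by exact_mod_cast hU)
  -- t ≤ c
  have htc : t ≤ (r₂ - r₁) / (1 + r₂) := by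
    have hRT : hessPSD.sqrtᵀ = hessPSD.sqrt :=
      transpose_of_herm hessPSD.posSemidef_sqrt.isHermitian
    have happ := hsq hessPSD.sqrt hessPSD.posSemidef_sqrt hessPSD.sqrt_mul_self d
    have hRd : hessPSD.sqrt.mulVec d ⬝ᵥ hessPSD.sqrt.mulVec d
        = d ⬝ᵥ (hess Lam x).mulVec d := by
      rw [← dot_mul_self _ hRT, hessPSD.sqrt_mul_self]
    rw [hRd] at happ
    have hκ : 0 ≤ 2 * N / Real.sqrt U * ((r₂ - r₁) / (1 + r₂)) := by positivity
    calc t = Real.sqrt (d ⬝ᵥ (hess Lam x).mulVec d) := by rw [htdef]; rfl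
      _ ≤ 2 * N / Real.sqrt U * ((r₂ - r₁) / (1 + r₂)) * Real.sqrt (d ⬝ᵥ d) := happ
      _ ≤ 2 * N / Real.sqrt U * ((r₂ - r₁) / (1 + r₂)) * (Real.sqrt U / (2 * N)) :=
          mul_le_mul_of_nonneg_left hxN hκ
      _ = (r₂ - r₁) / (1 + r₂) := by
          field_simp
  have ht1 : t < 1 := lt_of_le_of_lt htc hc1
  have hs : (0:ℝ) < 1 - t := by linarith
  -- decomposition of Λ(xN)
  have hLamxN : Lam xN = Lam x + Lam d := by
    rw [hddef, map_sub]; abel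
  have hΛd : Cm * S * Cm = Lam d := by
    rw [hSdef, show Cm * (Bm * Lam d * Bm) * Cm = (Cm * Bm) * Lam d * (Bm * Cm) from by
      noncomm_ring, hCB, hBC, Matrix.one_mul, Matrix.mul_one]
  have hSS : (S * S).trace = d ⬝ᵥ (hess Lam x).mulVec d := by
    rw [hquadx d, hSdef]
  have hts : Real.sqrt ((S * S).trace) = t := by rw [hSS, htdef]; rfl
  -- key quadratic bound
  have hkey : ∀ u : Fin L → ℝ, |u ⬝ᵥ (Lam d) *ᵥ u| ≤ t * (u ⬝ᵥ (Lam x) *ᵥ u) := by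
    intro u
    have h1 : u ⬝ᵥ (Lam d) *ᵥ u = (Cm *ᵥ u) ⬝ᵥ S *ᵥ (Cm *ᵥ u) := by
      rw [← hΛd, dot_conj Cm S hCT u]
    have h2 : (Cm *ᵥ u) ⬝ᵥ (Cm *ᵥ u) = u ⬝ᵥ (Lam x) *ᵥ u := by
      rw [← dot_mul_self Cm hCT u u, hCC]
    have h3 := quad_bound S hST (Cm *ᵥ u)
    rw [h2, hts] at h3
    rw [h1]
    exact h3
  -- positive definiteness of Λ(xN)
  have hPD : (Lam xN).PosDef := by
    refine Matrix.PosDef.of_dotProduct_mulVec_pos (herm_of_symm (hsym xN)) fun u hu => ?_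
    have hA_pos : 0 < u ⬝ᵥ (Lam x) *ᵥ u := posdef_dot_pos hx hu
    have hk := hkey u
    have habs := neg_abs_le (u ⬝ᵥ (Lam d) *ᵥ u)
    have hq : star u ⬝ᵥ (Lam xN) *ᵥ u = u ⬝ᵥ (Lam x) *ᵥ u + u ⬝ᵥ (Lam d) *ᵥ u := by
      rw [star_trivial, hLamxN, Matrix.add_mulVec, dotProduct_add]
    rw [hq]
    nlinarith
  refine ⟨hPD, ?_⟩
  -- lower bound Λ(xN) ⪰ (1-t)·Λ(x)
  have hlow : ∀ u, (1 - t) * (u ⬝ᵥ (Lam x) *ᵥ u) ≤ u ⬝ᵥ (Lam xN) *ᵥ u := by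
    intro u
    have hk := hkey u
    have habs := neg_abs_le (u ⬝ᵥ (Lam d) *ᵥ u)
    have hA_nonneg := psd_dot_nonneg hx.posSemidef u
    have hq : u ⬝ᵥ (Lam xN) *ᵥ u = u ⬝ᵥ (Lam x) *ᵥ u + u ⬝ᵥ (Lam d) *ᵥ u := by
      rw [hLamxN, Matrix.add_mulVec, dotProduct_add]
    rw [hq]
    nlinarith
  have hinvc := inv_cmp hx hPD hs hlow
  -- comparison of Hessian quadratic forms
  have hP2 : ((1 - t)⁻¹ • (Lam x)⁻¹).PosSemidef := by
    refine Matrix.PosSemidef.of_dotProduct_mulVec_nonneg ?_ fun u => ?_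
    · apply herm_of_symm
      unfold Matrix.IsSymm
      rw [Matrix.transpose_smul, transpose_of_herm hAinv.posSemidef.isHermitian]
    · have := psd_dot_nonneg hAinv.posSemidef u
      have hnn : (0:ℝ) ≤ (1 - t)⁻¹ := by positivity
      simp only [star_trivial, Matrix.smul_mulVec, dotProduct_smul, smul_eq_mul]
      positivity
  have hdiff : (((1 - t)⁻¹ • (Lam x)⁻¹) - (Lam xN)⁻¹).PosSemidef := by
    refine Matrix.PosSemidef.of_dotProduct_mulVec_nonneg (hP2.isHermitian.sub hPD.inv.posSemidef.isHermitian) fun u => ?_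
    have := hinvc u
    simp only [star_trivial, Matrix.sub_mulVec, dotProduct_sub,
      Matrix.smul_mulVec, dotProduct_smul, smul_eq_mul]
    linarith
  set v := xN - y with hvdef
  have hvH : (Lam v)ᴴ = Lam v := by rw [real_conjT]; exact hsym v
  have hmono := trace_sq_mono hPD.inv.posSemidef hP2 hdiff hvH
  have hquadN : v ⬝ᵥ (hess Lam xN).mulVec v
      ≤ (1 - t)⁻¹ * ((1 - t)⁻¹ * (v ⬝ᵥ (hess Lam x).mulVec v)) := by
    rw [quadform Lam xN v v, quadform Lam x v v]
    calc ((Lam xN)⁻¹ * Lam v * (Lam xN)⁻¹ * Lam v).trace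
        ≤ (((1 - t)⁻¹ • (Lam x)⁻¹) * Lam v * ((1 - t)⁻¹ • (Lam x)⁻¹) * Lam v).trace := hmono
      _ = (1 - t)⁻¹ * ((1 - t)⁻¹ * ((Lam x)⁻¹ * Lam v * (Lam x)⁻¹ * Lam v).trace) := by
          simp only [Matrix.smul_mul, Matrix.mul_smul, Matrix.trace_smul, smul_eq_mul]
  -- triangle inequality at x
  have hRT : hessPSD.sqrtᵀ = hessPSD.sqrt :=
    transpose_of_herm hessPSD.posSemidef_sqrt.isHermitian
  have hloc_eq : ∀ u : Fin U → ℝ, locNorm Lam x u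
      = Real.sqrt ((hessPSD.sqrt *ᵥ u) ⬝ᵥ (hessPSD.sqrt *ᵥ u)) := by
    intro u
    unfold locNorm
    congr 1
    conv_lhs => rw [← hessPSD.sqrt_mul_self]
    exact dot_mul_self _ hRT u u
  have htri : locNorm Lam x v ≤ t + r₁ := by
    have hsplit : v = d + (x - y) := by rw [hvdef, hddef]; abel
    rw [hsplit, hloc_eq, Matrix.mulVec_add]
    calc Real.sqrt ((hessPSD.sqrt *ᵥ d + hessPSD.sqrt *ᵥ (x - y)) ⬝ᵥ
            (hessPSD.sqrt *ᵥ d + hessPSD.sqrt *ᵥ (x - y)))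
        ≤ Real.sqrt ((hessPSD.sqrt *ᵥ d) ⬝ᵥ (hessPSD.sqrt *ᵥ d))
          + Real.sqrt ((hessPSD.sqrt *ᵥ (x - y)) ⬝ᵥ (hessPSD.sqrt *ᵥ (x - y))) :=
          sqrt_dot_triangle _ _
      _ = locNorm Lam x d + locNorm Lam x (x - y) := by rw [← hloc_eq, ← hloc_eq]
      _ ≤ t + r₁ := by
          rw [htdef]
          exact add_le_add le_rfl hxy
  -- local norm at xN
  have hlocN : locNorm Lam xN v ≤ (1 - t)⁻¹ * locNorm Lam x v := by
    unfold locNorm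
    calc Real.sqrt (v ⬝ᵥ (hess Lam xN).mulVec v)
        ≤ Real.sqrt ((1 - t)⁻¹ * ((1 - t)⁻¹ * (v ⬝ᵥ (hess Lam x).mulVec v))) :=
          Real.sqrt_le_sqrt hquadN
      _ = (1 - t)⁻¹ * Real.sqrt (v ⬝ᵥ (hess Lam x).mulVec v) := by
          rw [show (1 - t)⁻¹ * ((1 - t)⁻¹ * (v ⬝ᵥ (hess Lam x).mulVec v))
              = ((1 - t)⁻¹) ^ 2 * (v ⬝ᵥ (hess Lam x).mulVec v) from by ring,
            Real.sqrt_mul (sq_nonneg _), Real.sqrt_sq (by positivity)]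
  -- final arithmetic
  have hloc0 : 0 ≤ locNorm Lam x v := Real.sqrt_nonneg _
  have hfin : (1 - t)⁻¹ * locNorm Lam x v ≤ (1 - t)⁻¹ * (t + r₁) :=
    mul_le_mul_of_nonneg_left htri (by positivity)
  have harith : (1 - t)⁻¹ * (t + r₁) ≤ r₂ := by
    rw [inv_mul_le_iff₀ hs]
    have := (div_le_iff₀ hr₂0).mp (le_refl ((r₂ - r₁) / (1 + r₂)))
    have ht2 : t * (1 + r₂) ≤ r₂ - r₁ := by
      have := (le_div_iff₀ hr₂0).mp htc
      linarith
    nlinarith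
  calc locNorm Lam xN v ≤ (1 - t)⁻¹ * locNorm Lam x v := hlocN
    _ ≤ (1 - t)⁻¹ * (t + r₁) := hfin
    _ ≤ r₂ := harith
end

section
/- For every integer d ≥ 1 and every w ∈ ℝ^{2d+1}, one has tr(Λ₁(w)·Λ₁(w)) ≥ ((3 − √5)/4)·‖w‖², where ‖w‖ is the Euclidean norm. (This yields the lower bound k₂ ≥ (1/2)·√(3 − √5) for the smallest singular value of the Chebyshev-basis Hankel+Toeplitz operator.) -/
open Matrix

/-- The first block of the Chebyshev-basis operator `Λ` for nonnegative
polynomials of degree `2d` on `[−1,1]` with weights `(1, 1 − z²)`: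
`Λ₁(w)_{i,j} = (w_{i+j} + w_{|i−j|})/2`.  Here `i.1 - j.1 + (j.1 - i.1)`
(truncated subtraction) equals `|i − j|`. -/
noncomputable def lam1 (d : ℕ) (w : Fin (2 * d + 1) → ℝ) :
    Matrix (Fin (d + 1)) (Fin (d + 1)) ℝ :=
  Matrix.of fun i j =>
    (w ⟨i.1 + j.1, by have := i.isLt; have := j.isLt; omega⟩ +
      w ⟨i.1 - j.1 + (j.1 - i.1), by have := i.isLt; have := j.isLt; omega⟩) / 2

/-- Extension of `w` to all of `ℕ` by zero. -/
noncomputable def Wext (d : ℕ) (w : Fin (2 * d + 1) → ℝ) : ℕ → ℝ :=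
  fun k => if h : k < 2 * d + 1 then w ⟨k, h⟩ else 0

/-- The key 2×2 eigenvalue bound: the matrix `[[5/4,1/4],[1/4,1/4]]` has smallest
eigenvalue `(3 − √5)/4`. -/
lemma key2 (a b : ℝ) : (3 - Real.sqrt 5) / 4 * (a ^ 2 + b ^ 2) ≤ a ^ 2 + ((b + a) / 2) ^ 2 := by
  have hs : Real.sqrt 5 ^ 2 = 5 := Real.sq_sqrt (by norm_num)
  have hs0 : (0 : ℝ) ≤ Real.sqrt 5 := Real.sqrt_nonneg 5
  have hs2 : (2 : ℝ) ≤ Real.sqrt 5 := by nlinarith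
  set u := Real.sqrt (2 + Real.sqrt 5) with hu0
  set v := Real.sqrt (Real.sqrt 5 - 2) with hv0
  have hu : u ^ 2 = 2 + Real.sqrt 5 := Real.sq_sqrt (by linarith)
  have hv : v ^ 2 = Real.sqrt 5 - 2 := Real.sq_sqrt (by linarith)
  have huv : u * v = 1 := by
    rw [hu0, hv0, ← Real.sqrt_mul (by linarith),
      show (2 + Real.sqrt 5) * (Real.sqrt 5 - 2) = 1 by nlinarith]
    exact Real.sqrt_one
  nlinarith [sq_nonneg (u * a + v * b), sq_nonneg a, sq_nonneg b]

/-- `tr(Λ₁(w)²) ≥ ((3 − √5)/4)·‖w‖²` (Euclidean norm), giving the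
lower bound `k₂ ≥ (1/2)·√(3 − √5)` on the smallest singular value of `Λ₁`. -/
theorem stmt18 (d : ℕ) (hd : 1 ≤ d) (w : Fin (2 * d + 1) → ℝ) :
    ((3 - Real.sqrt 5) / 4) * (w ⬝ᵥ w) ≤ (lam1 d w * lam1 d w).trace := by
  set c := (3 - Real.sqrt 5) / 4 with hc
  set W := Wext d w with hWdef
  set f : ℕ → ℕ → ℝ := fun i j => ((W (i + j) + W (i - j + (j - i))) / 2) ^ 2 with hf
  have hWA : ∀ (k : ℕ) (h : k < 2 * d + 1), W k = w ⟨k, h⟩ := by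
    intro k h
    show (if h : k < 2 * d + 1 then w ⟨k, h⟩ else 0) = w ⟨k, h⟩
    exact dif_pos h
  -- matrix entries in terms of W
  have hA : ∀ i j : Fin (d + 1),
      lam1 d w i j = (W (i.1 + j.1) + W (i.1 - j.1 + (j.1 - i.1))) / 2 := by
    intro i j
    have hi := i.isLt
    have hj := j.isLt
    have h1 : i.1 + j.1 < 2 * d + 1 := by omega
    have h2 : i.1 - j.1 + (j.1 - i.1) < 2 * d + 1 := by omega
    rw [hWA _ h1, hWA _ h2]
    rfl
  -- trace as a double range sum
  have htr : (lam1 d w * lam1 d w).trace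
      = ∑ i ∈ Finset.range (d + 1), ∑ j ∈ Finset.range (d + 1), f i j := by
    have h1 : (lam1 d w * lam1 d w).trace
        = ∑ i : Fin (d + 1), ∑ j : Fin (d + 1), lam1 d w i j * lam1 d w j i := by
      simp [Matrix.trace, Matrix.mul_apply, Matrix.diag]
    rw [h1, ← Fin.sum_univ_eq_sum_range (fun i => ∑ j ∈ Finset.range (d + 1), f i j) (d + 1)]
    refine Finset.sum_congr rfl fun i _ => ?_
    rw [← Fin.sum_univ_eq_sum_range (fun j => f i.1 j) (d + 1)]
    refine Finset.sum_congr rfl fun j _ => ?_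
    rw [hA i j, hA j i, show j.1 + i.1 = i.1 + j.1 from Nat.add_comm _ _,
      show j.1 - i.1 + (i.1 - j.1) = i.1 - j.1 + (j.1 - i.1) from Nat.add_comm _ _]
    simp only [hf]
    ring
  -- dot product as a range sum
  have hdot : w ⬝ᵥ w = ∑ k ∈ Finset.range (2 * d + 1), (W k) ^ 2 := by
    rw [dotProduct, ← Fin.sum_univ_eq_sum_range (fun k => (W k) ^ 2) (2 * d + 1)]
    refine Finset.sum_congr rfl fun i _ => ?_
    rw [hWA i.1 i.isLt]
    show w i * w i = w i ^ 2
    ring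
  have hfnn : ∀ i j, 0 ≤ f i j := fun i j => sq_nonneg _
  have hrow : ∀ i, f i 0 ≤ ∑ j ∈ Finset.range (d + 1), f i j := fun i =>
    Finset.single_le_sum (fun j _ => hfnn i j) (Finset.mem_range.2 (by omega))
  have hS1 : ∑ i ∈ Finset.range (d + 1), ∑ j ∈ Finset.range (d + 1), f i j
      = (∑ i ∈ Finset.range d, ∑ j ∈ Finset.range (d + 1), f i j)
        + ∑ j ∈ Finset.range (d + 1), f d j :=
    Finset.sum_range_succ _ _
  have hS2 : ∑ j ∈ Finset.range (d + 1), f d j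
      = (∑ j ∈ Finset.range d, f d (j + 1)) + f d 0 :=
    Finset.sum_range_succ' _ _
  have hS3 : ∑ i ∈ Finset.range d, f i 0
      ≤ ∑ i ∈ Finset.range d, ∑ j ∈ Finset.range (d + 1), f i j :=
    Finset.sum_le_sum fun i _ => hrow i
  have hrefl : ∑ i ∈ Finset.range d, f i 0 = ∑ j ∈ Finset.range d, f (d - 1 - j) 0 :=
    (Finset.sum_range_reflect (fun i => f i 0) d).symm
  -- pointwise key bound
  have hkey : ∀ j ∈ Finset.range d,
      c * ((W (d - 1 - j)) ^ 2 + (W (d + 1 + j)) ^ 2) ≤ f (d - 1 - j) 0 + f d (j + 1) := by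
    intro j hj
    have hjd : j < d := Finset.mem_range.1 hj
    have e1 : f (d - 1 - j) 0 = (W (d - 1 - j)) ^ 2 := by
      simp only [hf]
      rw [show d - 1 - j + 0 = d - 1 - j by omega,
        show d - 1 - j - 0 + (0 - (d - 1 - j)) = d - 1 - j by omega]
      ring
    have e2 : f d (j + 1) = ((W (d + 1 + j) + W (d - 1 - j)) / 2) ^ 2 := by
      simp only [hf]
      rw [show d + (j + 1) = d + 1 + j by omega,
        show d - (j + 1) + (j + 1 - d) = d - 1 - j by omega]
    rw [e1, e2, hc]
    exact key2 _ _
  have hsumkey : ∑ j ∈ Finset.range d, c * ((W (d - 1 - j)) ^ 2 + (W (d + 1 + j)) ^ 2)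
      ≤ ∑ j ∈ Finset.range d, (f (d - 1 - j) 0 + f d (j + 1)) :=
    Finset.sum_le_sum hkey
  have hfd0 : c * (W d) ^ 2 ≤ f d 0 := by
    have e : f d 0 = (W d) ^ 2 := by
      simp only [hf]
      rw [show d + 0 = d by omega, show d - 0 + (0 - d) = d by omega]
      ring
    have hs0 : (0 : ℝ) ≤ Real.sqrt 5 := Real.sqrt_nonneg 5
    have hc1 : c ≤ 1 := by rw [hc]; linarith
    rw [e]
    nlinarith [sq_nonneg (W d)]
  -- decomposition of the norm
  have hdecomp : ∑ k ∈ Finset.range (2 * d + 1), (W k) ^ 2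
      = (∑ j ∈ Finset.range d, ((W (d - 1 - j)) ^ 2 + (W (d + 1 + j)) ^ 2)) + (W d) ^ 2 := by
    rw [show 2 * d + 1 = (d + 1) + d by omega, Finset.sum_range_add, Finset.sum_range_succ,
      ← Finset.sum_range_reflect (fun k => (W k) ^ 2) d, Finset.sum_add_distrib]
    ring
  have final : (∑ j ∈ Finset.range d, (f (d - 1 - j) 0 + f d (j + 1))) + f d 0
      ≤ ∑ i ∈ Finset.range (d + 1), ∑ j ∈ Finset.range (d + 1), f i j := by
    rw [Finset.sum_add_distrib, ← hrefl, hS1]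
    linarith [hS3, hS2.ge]
  calc c * (w ⬝ᵥ w)
      = (∑ j ∈ Finset.range d, c * ((W (d - 1 - j)) ^ 2 + (W (d + 1 + j)) ^ 2))
        + c * (W d) ^ 2 := by
        rw [hdot, hdecomp, mul_add, Finset.mul_sum]
    _ ≤ (∑ j ∈ Finset.range d, (f (d - 1 - j) 0 + f d (j + 1))) + f d 0 :=
        add_le_add hsumkey hfd0
    _ ≤ ∑ i ∈ Finset.range (d + 1), ∑ j ∈ Finset.range (d + 1), f i j := final
    _ = (lam1 d w * lam1 d w).trace := htr.symm
end
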